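/- arXiv:2312.05470 — 7 statements merged into one kernel-verified Lean document; each statement's English description precedes it below -/
import Mathlib

section
/- Let K be a rate constant matrix with stationary distribution π and S ⊆ [n] with K_{SS} nonsingular, T = [n]\S. Then the Schur complement D = K_{TT} − K_{TS}K_{SS}⁻¹K_{ST} is again a rate constant matrix with stationary distribution proportional to π_T: D has nonnegative off-diagonal entries, zero column sums (1_Tᵀ D = 0ᵀ), and satisfies D Π_T = Π_T Dᵀ where Π_T = diag(π_T). -/
open Matrix BigOperators


/-- Quadratic form of a symmetric "Laplacian" (zero row sums, nonpositive off-diagonal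
entries, with signs such that the form is PSD) is nonnegative. -/
lemma lap_psd {ι : Type*} [Fintype ι] (L : Matrix ι ι ℝ)
    (hsym : ∀ i j, L i j = L j i)
    (hrow : ∀ i, ∑ j, L i j = 0)
    (hoffd : ∀ i j, i ≠ j → L i j ≤ 0)
    (x : ι → ℝ) : 0 ≤ x ⬝ᵥ (L *ᵥ x) := by
  have hcolL : ∀ j, ∑ i, L i j = 0 := by
    intro j
    rw [show (∑ i, L i j) = ∑ i, L j i from Finset.sum_congr rfl fun i _ => hsym i j]
    exact hrow j
  have key : ∑ i, ∑ j, (-(L i j)) * (x i - x j) ^ 2 = 2 * (x ⬝ᵥ (L *ᵥ x)) := by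
    have expand : ∀ i j : ι, (-(L i j)) * (x i - x j) ^ 2
        = 2 * (x i * (L i j * x j)) - L i j * x i ^ 2 - L i j * x j ^ 2 := by
      intros; ring
    simp only [expand, Finset.sum_sub_distrib]
    have e1 : ∀ i : ι, ∑ j, L i j * x i ^ 2 = 0 := by
      intro i; rw [← Finset.sum_mul, hrow, zero_mul]
    have e2 : ∑ i : ι, ∑ j, L i j * x j ^ 2 = 0 := by
      rw [Finset.sum_comm]
      apply Finset.sum_eq_zero
      intro j _
      rw [← Finset.sum_mul, hcolL, zero_mul]
    rw [e2]
    simp only [e1, Finset.sum_const_zero, sub_zero]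
    simp only [dotProduct, Matrix.mulVec, Finset.mul_sum]
  have hterm : 0 ≤ ∑ i, ∑ j, (-(L i j)) * (x i - x j) ^ 2 := by
    apply Finset.sum_nonneg; intro i _
    apply Finset.sum_nonneg; intro j _
    by_cases h : i = j
    · subst h; simp
    · exact mul_nonneg (neg_nonneg.mpr (hoffd i j h)) (sq_nonneg _)
  linarith

/-- PSD + symmetric + invertible implies (strictly) PD. -/
lemma psd_pd {ι : Type*} [Fintype ι] [DecidableEq ι] (M : Matrix ι ι ℝ)
    (hpsd : ∀ x : ι → ℝ, 0 ≤ x ⬝ᵥ (M *ᵥ x)) (hsym : Mᵀ = M) (hdet : IsUnit M.det) :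
    ∀ x : ι → ℝ, x ≠ 0 → 0 < x ⬝ᵥ (M *ᵥ x) := by
  intro x hx
  rcases eq_or_lt_of_le (hpsd x) with h0 | h
  · exfalso
    have hcross : ∀ y : ι → ℝ, x ⬝ᵥ (M *ᵥ y) = y ⬝ᵥ (M *ᵥ x) := by
      intro y
      rw [Matrix.dotProduct_mulVec, ← Matrix.mulVec_transpose, hsym, dotProduct_comm]
    have key : ∀ y : ι → ℝ, y ⬝ᵥ (M *ᵥ x) = 0 := by
      intro y
      set c := y ⬝ᵥ (M *ᵥ x) with hc
      set d := y ⬝ᵥ (M *ᵥ y) with hd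
      have hdnn : 0 ≤ d := hpsd y
      have hq : ∀ t : ℝ, 0 ≤ 2 * t * c + t ^ 2 * d := by
        intro t
        have := hpsd (x + t • y)
        rw [Matrix.mulVec_add, Matrix.mulVec_smul] at this
        simp only [add_dotProduct, dotProduct_add, smul_dotProduct,
          dotProduct_smul, smul_eq_mul] at this
        rw [← h0, hcross y, ← hc, ← hd] at this
        linear_combination this
      have ht := hq (-c / (d + 1))
      have hd1 : (0:ℝ) < d + 1 := by linarith
      by_contra hcne
      have hc2 : 0 < c ^ 2 := by positivity
      have expand : 2 * (-c / (d + 1)) * c + (-c / (d + 1)) ^ 2 * d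
          = -(c ^ 2 * (d + 2)) / (d + 1) ^ 2 := by
        field_simp
        ring
      rw [expand] at ht
      have : -(c ^ 2 * (d + 2)) / (d + 1) ^ 2 < 0 := by
        apply div_neg_of_neg_of_pos
        · nlinarith
        · positivity
      linarith
    have hMx : M *ᵥ x = 0 := by
      have := key (M *ᵥ x)
      exact dotProduct_self_eq_zero.mp this
    apply hx
    have : M⁻¹ *ᵥ (M *ᵥ x) = x := by
      rw [Matrix.mulVec_mulVec, Matrix.nonsing_inv_mul M hdet, Matrix.one_mulVec]
    rw [hMx, Matrix.mulVec_zero] at this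
    exact this.symm
  · exact h

/-- Inverse positivity: if M is PD (as a bilinear form) with nonpositive off-diagonals,
then M *ᵥ x ≥ 0 entrywise implies x ≥ 0 entrywise. -/
lemma stieltjes_mono {ι : Type*} [Fintype ι] (M : Matrix ι ι ℝ)
    (hpd : ∀ x : ι → ℝ, x ≠ 0 → 0 < x ⬝ᵥ (M *ᵥ x))
    (hoffd : ∀ i j, i ≠ j → M i j ≤ 0)
    (x : ι → ℝ) (hb : ∀ i, 0 ≤ (M *ᵥ x) i) : ∀ i, 0 ≤ x i := by
  classical
  set xp : ι → ℝ := fun i => max (x i) 0 with hxp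
  set xm : ι → ℝ := fun i => max (-(x i)) 0 with hxm
  have hxpm : ∀ i, x i = xp i - xm i := by
    intro i; simp only [hxp, hxm]
    rcases le_total (x i) 0 with h | h
    · rw [max_eq_right h, max_eq_left (by linarith)]; ring
    · rw [max_eq_left h, max_eq_right (by linarith)]; ring
  have hxpnn : ∀ i, 0 ≤ xp i := fun i => le_max_right _ _
  have hxmnn : ∀ i, 0 ≤ xm i := fun i => le_max_right _ _
  have hprod : ∀ i, xm i * xp i = 0 := by
    intro i; simp only [hxp, hxm]
    rcases le_total (x i) 0 with h | h
    · rw [max_eq_right h, mul_zero]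
    · rw [max_eq_right (by linarith : -(x i) ≤ 0), zero_mul]
  have hxeq : x = xp - xm := by funext i; exact hxpm i
  -- xm ⬝ᵥ M xm ≤ 0
  have h1 : 0 ≤ xm ⬝ᵥ (M *ᵥ x) := by
    apply Finset.sum_nonneg; intro i _
    exact mul_nonneg (hxmnn i) (hb i)
  have h2 : xm ⬝ᵥ (M *ᵥ xp) ≤ 0 := by
    simp only [dotProduct, Matrix.mulVec]
    apply Finset.sum_nonpos; intro i _
    rw [Finset.mul_sum]
    apply Finset.sum_nonpos; intro j _
    by_cases h : i = j
    · subst h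
      rw [show xm i * (M i i * xp i) = M i i * (xm i * xp i) by ring, hprod, mul_zero]
    · have : M i j * xp j ≤ 0 := mul_nonpos_of_nonpos_of_nonneg (hoffd i j h) (hxpnn j)
      exact mul_nonpos_of_nonneg_of_nonpos (hxmnn i) this
  have h3 : xm ⬝ᵥ (M *ᵥ xm) ≤ 0 := by
    have : xm ⬝ᵥ (M *ᵥ x) = xm ⬝ᵥ (M *ᵥ xp) - xm ⬝ᵥ (M *ᵥ xm) := by
      rw [hxeq, Matrix.mulVec_sub, dotProduct_sub]
    linarith
  have hxm0 : xm = 0 := by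
    by_contra hne
    have := hpd xm hne
    linarith
  intro i
  have := congrFun hxm0 i
  simp only [hxm, Pi.zero_apply] at this
  have hle : -(x i) ≤ 0 := by
    by_contra hgt
    push_neg at hgt
    rw [max_eq_left (le_of_lt hgt)] at this
    linarith
  linarith

/-- The Schur complement `D = K_TT − K_TS K_SS⁻¹ K_ST` of a nonsingular
principal submatrix `K_SS` of a rate constant matrix `K` is again a rate constant matrix
with stationary distribution proportional to `π_T`: it has nonnegative off-diagonal
entries, zero column sums, and satisfies detailed balance `D Π_T = Π_T Dᵀ`. -/
theorem rcmc_stmt5 (n : ℕ) (K : Matrix (Fin n) (Fin n) ℝ) (π : Fin n → ℝ)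
    (hoff : ∀ i j, i ≠ j → 0 ≤ K i j)
    (hcol : ∀ j, ∑ i, K i j = 0)
    (hπpos : ∀ i, 0 < π i) (hπsum : ∑ i, π i = 1)
    (hdb : K * Matrix.diagonal π = Matrix.diagonal π * Kᵀ)
    (S : Finset (Fin n))
    (hinv : IsUnit (K.submatrix ((↑) : ↥S → Fin n) ((↑) : ↥S → Fin n)).det) :
    let KSS := K.submatrix ((↑) : ↥S → Fin n) ((↑) : ↥S → Fin n)
    let KST := K.submatrix ((↑) : ↥S → Fin n) ((↑) : ↥(Sᶜ) → Fin n)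
    let KTS := K.submatrix ((↑) : ↥(Sᶜ) → Fin n) ((↑) : ↥S → Fin n)
    let KTT := K.submatrix ((↑) : ↥(Sᶜ) → Fin n) ((↑) : ↥(Sᶜ) → Fin n)
    let D := KTT - KTS * KSS⁻¹ * KST
    (∀ i j : ↥(Sᶜ), i ≠ j → 0 ≤ D i j) ∧
    (∀ j : ↥(Sᶜ), ∑ i : ↥(Sᶜ), D i j = 0) ∧
    D * Matrix.diagonal (fun i : ↥(Sᶜ) => π ↑i)
      = Matrix.diagonal (fun i : ↥(Sᶜ) => π ↑i) * Dᵀ := by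
  classical
  intro KSS KST KTS KTT D
  have hDdef : D = KTT - KTS * KSS⁻¹ * KST := rfl
  have hinv' : IsUnit KSS.det := hinv
  have hKSS : ∀ i j : ↥S, KSS i j = K ↑i ↑j := fun _ _ => rfl
  have hKST : ∀ (i : ↥S) (j : ↥(Sᶜ)), KST i j = K ↑i ↑j := fun _ _ => rfl
  have hKTS : ∀ (i : ↥(Sᶜ)) (j : ↥S), KTS i j = K ↑i ↑j := fun _ _ => rfl
  have hKTT : ∀ i j : ↥(Sᶜ), KTT i j = K ↑i ↑j := fun _ _ => rfl
  -- entrywise detailed balance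
  have hdbe : ∀ i j, K i j * π j = π i * K j i := by
    intro i j
    have := congrFun (congrFun hdb i) j
    simpa [Matrix.mul_diagonal, Matrix.diagonal_mul] using this
  -- the symmetric Laplacian L i j = -(K i j * π j)
  set L : Matrix (Fin n) (Fin n) ℝ := fun i j => -(K i j * π j) with hL
  have hLapp : ∀ i j, L i j = -(K i j * π j) := fun _ _ => rfl
  have hsymL : ∀ i j, L i j = L j i := by
    intro i j
    rw [hLapp, hLapp, hdbe i j]
    ring
  have hcolL : ∀ j, ∑ i, L i j = 0 := by
    intro j
    have : ∑ i, L i j = -((∑ i, K i j) * π j) := by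
      rw [Finset.sum_mul, ← Finset.sum_neg_distrib]
    rw [this, hcol, zero_mul, neg_zero]
  have hrowL : ∀ i, ∑ j, L i j = 0 := by
    intro i
    rw [show (∑ j, L i j) = ∑ j, L j i from Finset.sum_congr rfl fun j _ => hsymL i j]
    exact hcolL i
  have hoffL : ∀ i j, i ≠ j → L i j ≤ 0 := by
    intro i j h
    rw [hLapp, neg_nonpos]
    exact mul_nonneg (hoff i j h) (le_of_lt (hπpos j))
  -- the submatrix M = L restricted to S
  set M : Matrix ↥S ↥S ℝ := L.submatrix ((↑) : ↥S → Fin n) ((↑) : ↥S → Fin n) with hM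
  have hMapp : ∀ i j : ↥S, M i j = L ↑i ↑j := fun _ _ => rfl
  have hMeq : M = (-KSS) * Matrix.diagonal (fun i : ↥S => π ↑i) := by
    ext i j
    rw [Matrix.mul_diagonal, hMapp, hLapp]
    simp [hKSS]
  have hdetM : IsUnit M.det := by
    rw [hMeq, Matrix.det_mul, Matrix.det_neg, Matrix.det_diagonal]
    refine IsUnit.mul (IsUnit.mul ?_ hinv) ?_
    · exact isUnit_iff_ne_zero.mpr (pow_ne_zero _ (by norm_num))
    · exact isUnit_iff_ne_zero.mpr (ne_of_gt (Finset.prod_pos fun i _ => hπpos ↑i))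
  have hsymM : Mᵀ = M := by
    ext i j
    rw [Matrix.transpose_apply, hMapp, hMapp]
    exact hsymL _ _
  have hoffM : ∀ i j : ↥S, i ≠ j → M i j ≤ 0 := by
    intro i j hij
    rw [hMapp]
    exact hoffL _ _ (fun hc => hij (Subtype.ext hc))
  -- M is PSD: extend vectors by zero and use lap_psd
  have hpsdM : ∀ x : ↥S → ℝ, 0 ≤ x ⬝ᵥ (M *ᵥ x) := by
    intro x
    set xb : Fin n → ℝ := fun i => if h : i ∈ S then x ⟨i, h⟩ else 0 with hxb
    have hext : ∀ g : Fin n → ℝ, ∑ i : ↥S, x i * g ↑i = ∑ i, xb i * g i :=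
      fun g =>
        calc ∑ i : ↥S, x i * g ↑i
            = ∑ i : ↥S, xb ↑i * g ↑i := by
              refine Finset.sum_congr rfl fun i _ => ?_
              simp [hxb]
          _ = ∑ i ∈ S, xb i * g i := Finset.sum_coe_sort S (fun i => xb i * g i)
          _ = ∑ i ∈ Finset.univ, xb i * g i := by
              refine Finset.sum_subset (Finset.subset_univ S) fun i _ hi => ?_
              simp [hxb, hi]
          _ = ∑ i, xb i * g i := rfl
    have hquad : x ⬝ᵥ (M *ᵥ x) = xb ⬝ᵥ (L *ᵥ xb) := by
      have e2 : ∀ i : ↥S, (L *ᵥ xb) ↑i = ∑ j : ↥S, x j * L ↑i ↑j := by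
        intro i
        have : (L *ᵥ xb) ↑i = ∑ j, xb j * L ↑i j := by
          simp [Matrix.mulVec, dotProduct, mul_comm]
        rw [this, ← hext (fun j => L ↑i j)]
      calc x ⬝ᵥ (M *ᵥ x) = ∑ i : ↥S, x i * (∑ j : ↥S, x j * L ↑i ↑j) := by
            simp only [dotProduct, Matrix.mulVec]
            refine Finset.sum_congr rfl fun i _ => ?_
            congr 1
            refine Finset.sum_congr rfl fun j _ => ?_
            rw [hMapp, mul_comm]
        _ = ∑ i : ↥S, x i * (L *ᵥ xb) ↑i := by
            refine Finset.sum_congr rfl fun i _ => ?_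
            rw [e2 i]
        _ = ∑ i, xb i * (L *ᵥ xb) i := hext _
        _ = xb ⬝ᵥ (L *ᵥ xb) := rfl
    rw [hquad]
    exact lap_psd L hsymL hrowL hoffL xb
  have hpdM : ∀ x : ↥S → ℝ, x ≠ 0 → 0 < x ⬝ᵥ (M *ᵥ x) := psd_pd M hpsdM hsymM hdetM
  -- inverse of KSS has nonpositive entries
  have hinvle : ∀ a b : ↥S, KSS⁻¹ a b ≤ 0 := by
    intro a b
    set xv : ↥S → ℝ := fun i => -(KSS⁻¹ i b) / π ↑i with hxv
    have hMx : ∀ i, (M *ᵥ xv) i = (1 : Matrix ↥S ↥S ℝ) i b := by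
      intro i
      have step : (M *ᵥ xv) i = ∑ j, KSS i j * KSS⁻¹ j b := by
        simp only [Matrix.mulVec, dotProduct]
        refine Finset.sum_congr rfl fun j _ => ?_
        rw [hMapp, hLapp, hxv]
        have hpj : π (↑j : Fin n) ≠ 0 := ne_of_gt (hπpos _)
        rw [hKSS]
        field_simp
      rw [step, ← Matrix.mul_apply, Matrix.mul_nonsing_inv KSS hinv']
    have hge : ∀ i, 0 ≤ (M *ᵥ xv) i := by
      intro i
      rw [hMx i, Matrix.one_apply]
      by_cases h : i = b <;> simp [h]
    have hx := stieltjes_mono M hpdM hoffM xv hge a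
    rw [hxv] at hx
    have hp := hπpos (↑a : Fin n)
    have h2 : 0 ≤ -(KSS⁻¹ a b) / π ↑a * π ↑a := mul_nonneg hx (le_of_lt hp)
    rw [div_mul_cancel₀ _ (ne_of_gt hp)] at h2
    linarith
  -- PART 1 : off-diagonal nonnegativity of D
  have part1 : ∀ i j : ↥(Sᶜ), i ≠ j → 0 ≤ D i j := by
    intro i j hij
    have hiT : (↑i : Fin n) ∉ S := Finset.mem_compl.mp i.2
    have hjT : (↑j : Fin n) ∉ S := Finset.mem_compl.mp j.2
    have hP : (KTS * KSS⁻¹ * KST) i j ≤ 0 := by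
      rw [Matrix.mul_apply]
      refine Finset.sum_nonpos fun b _ => ?_
      have h1 : (KTS * KSS⁻¹) i b ≤ 0 := by
        rw [Matrix.mul_apply]
        refine Finset.sum_nonpos fun a _ => ?_
        refine mul_nonpos_of_nonneg_of_nonpos ?_ (hinvle a b)
        rw [hKTS]
        exact hoff _ _ (fun hc => hiT (hc ▸ a.2))
      refine mul_nonpos_of_nonpos_of_nonneg h1 ?_
      rw [hKST]
      exact hoff _ _ (fun hc => hjT (hc ▸ b.2))
    have hKTTij : 0 ≤ KTT i j := by
      rw [hKTT]
      exact hoff _ _ (fun hc => hij (Subtype.ext hc))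
    rw [hDdef, Matrix.sub_apply]
    linarith
  -- PART 2 : zero column sums
  have hsplit : ∀ c, (∑ i : ↥S, K ↑i c) + (∑ i : ↥(Sᶜ), K ↑i c) = 0 := by
    intro c
    rw [Finset.sum_coe_sort S (fun i => K i c), Finset.sum_coe_sort Sᶜ (fun i => K i c),
      Finset.sum_add_sum_compl S (fun i => K i c)]
    exact hcol c
  set u : ↥(Sᶜ) → ℝ := fun _ => 1 with hu
  set v : ↥S → ℝ := fun _ => 1 with hv
  have h1 : v ᵥ* KSS + u ᵥ* KTS = 0 := by
    funext a
    simp only [Pi.add_apply, Pi.zero_apply, Matrix.vecMul, dotProduct, hu, hv, one_mul]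
    exact hsplit ↑a
  have h2 : v ᵥ* KST + u ᵥ* KTT = 0 := by
    funext a
    simp only [Pi.add_apply, Pi.zero_apply, Matrix.vecMul, dotProduct, hu, hv, one_mul]
    exact hsplit ↑a
  have part2 : ∀ j : ↥(Sᶜ), ∑ i : ↥(Sᶜ), D i j = 0 := by
    have huD : u ᵥ* D = 0 := by
      have e1 : u ᵥ* KTS = -(v ᵥ* KSS) := by
        rw [eq_neg_iff_add_eq_zero, add_comm]; exact h1
      have e2 : v ᵥ* KST = -(u ᵥ* KTT) := by
        rw [eq_neg_iff_add_eq_zero]; exact h2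
      have eP : u ᵥ* (KTS * KSS⁻¹ * KST) = u ᵥ* KTT := by
        have estep : u ᵥ* (KTS * KSS⁻¹ * KST) = ((u ᵥ* KTS) ᵥ* KSS⁻¹) ᵥ* KST := by
          simp only [Matrix.vecMul_vecMul]
        rw [estep, e1, Matrix.neg_vecMul, Matrix.vecMul_vecMul,
          Matrix.mul_nonsing_inv KSS hinv', Matrix.vecMul_one, Matrix.neg_vecMul, e2, neg_neg]
      rw [hDdef, Matrix.vecMul_sub, eP, sub_self]
    intro j
    have : (u ᵥ* D) j = ∑ i : ↥(Sᶜ), D i j := by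
      simp [Matrix.vecMul, dotProduct, hu]
    rw [← this, huD, Pi.zero_apply]
  -- PART 3 : detailed balance for D
  set PiS : Matrix ↥S ↥S ℝ := Matrix.diagonal (fun i : ↥S => π ↑i) with hPiS
  set PiT : Matrix ↥(Sᶜ) ↥(Sᶜ) ℝ := Matrix.diagonal (fun i : ↥(Sᶜ) => π ↑i) with hPiT
  have hA : KSS * PiS = PiS * KSSᵀ := by
    ext i j
    rw [hPiS, Matrix.mul_diagonal, Matrix.diagonal_mul, Matrix.transpose_apply, hKSS, hKSS]
    exact hdbe _ _
  have hB : KST * PiT = PiS * KTSᵀ := by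
    ext i j
    rw [hPiT, hPiS, Matrix.mul_diagonal, Matrix.diagonal_mul, Matrix.transpose_apply, hKST, hKTS]
    exact hdbe _ _
  have hC : KTS * PiS = PiT * KSTᵀ := by
    ext i j
    rw [hPiT, hPiS, Matrix.mul_diagonal, Matrix.diagonal_mul, Matrix.transpose_apply, hKTS, hKST]
    exact hdbe _ _
  have hD4 : KTT * PiT = PiT * KTTᵀ := by
    ext i j
    rw [hPiT, Matrix.mul_diagonal, Matrix.diagonal_mul, Matrix.transpose_apply, hKTT, hKTT]
    exact hdbe _ _
  have hdetT : IsUnit (KSSᵀ).det := by rw [Matrix.det_transpose]; exact hinv'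
  have hAinv : KSS⁻¹ * PiS = PiS * KSS⁻¹ᵀ := by
    calc KSS⁻¹ * PiS
        = KSS⁻¹ * (PiS * KSSᵀ) * (KSSᵀ)⁻¹ := by
          simp only [Matrix.mul_assoc]
          rw [Matrix.mul_nonsing_inv KSSᵀ hdetT, Matrix.mul_one]
      _ = KSS⁻¹ * (KSS * PiS) * (KSSᵀ)⁻¹ := by rw [hA]
      _ = PiS * (KSSᵀ)⁻¹ := by
          rw [← Matrix.mul_assoc, Matrix.nonsing_inv_mul KSS hinv', Matrix.one_mul]
      _ = PiS * KSS⁻¹ᵀ := by rw [Matrix.transpose_nonsing_inv]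
  have hP3 : (KTS * KSS⁻¹ * KST) * PiT = PiT * (KTS * KSS⁻¹ * KST)ᵀ := by
    calc KTS * KSS⁻¹ * KST * PiT
        = KTS * KSS⁻¹ * (PiS * KTSᵀ) := by rw [Matrix.mul_assoc (KTS * KSS⁻¹), hB]
      _ = KTS * (KSS⁻¹ * PiS) * KTSᵀ := by simp only [Matrix.mul_assoc]
      _ = KTS * (PiS * KSS⁻¹ᵀ) * KTSᵀ := by rw [hAinv]
      _ = (KTS * PiS) * (KSS⁻¹ᵀ * KTSᵀ) := by simp only [Matrix.mul_assoc]
      _ = (PiT * KSTᵀ) * (KSS⁻¹ᵀ * KTSᵀ) := by rw [hC]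
      _ = PiT * (KTS * KSS⁻¹ * KST)ᵀ := by
          simp only [Matrix.transpose_mul, Matrix.mul_assoc]
  have part3 : D * PiT = PiT * Dᵀ := by
    rw [hDdef, Matrix.sub_mul, hD4, hP3, ← Matrix.mul_sub, ← Matrix.transpose_sub]
  exact ⟨part1, part2, part3⟩
end

section
/- Let K be a rate constant matrix with detailed balance, {S,T} a bipartition of [n] with K_{SS} nonsingular. A matrix V ∈ ℝ^{n×n} is π-self-adjoint and has its image contained in the QSSA subspace W = {y : K_{SS}y_S + K_{ST}y_T = 0} if and only if V has block form V_{SS} = K_{SS}⁻¹K_{ST}V_{TT}K_{TS}K_{SS}⁻¹, V_{ST} = −K_{SS}⁻¹K_{ST}V_{TT}, V_{TS} = −V_{TT}K_{TS}K_{SS}⁻¹ for some π-self-adjoint block V_{TT} ∈ ℝ^{T×T}. -/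
open Matrix BigOperators


private lemma mul_submatrix_split {n : ℕ} (S : Finset (Fin n)) {ι κ : Type*}
    (A B : Matrix (Fin n) (Fin n) ℝ) (u : ι → Fin n) (v : κ → Fin n) :
    (A * B).submatrix u v
      = A.submatrix u ((↑) : ↥S → Fin n) * B.submatrix ((↑) : ↥S → Fin n) v
        + A.submatrix u ((↑) : ↥(Sᶜ) → Fin n) * B.submatrix ((↑) : ↥(Sᶜ) → Fin n) v := by
  ext i j
  simp only [Matrix.submatrix_apply, Matrix.mul_apply, Matrix.add_apply]
  rw [Finset.sum_coe_sort S (fun k => A (u i) k * B k (v j)), Finset.sum_coe_sort Sᶜ (fun k => A (u i) k * B k (v j)), Finset.sum_add_sum_compl]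

private lemma eq_iff_blocks {n : ℕ} (S : Finset (Fin n)) (M N : Matrix (Fin n) (Fin n) ℝ) :
    M = N ↔
      (M.submatrix ((↑) : ↥S → Fin n) ((↑) : ↥S → Fin n)
          = N.submatrix ((↑) : ↥S → Fin n) ((↑) : ↥S → Fin n)
        ∧ M.submatrix ((↑) : ↥S → Fin n) ((↑) : ↥(Sᶜ) → Fin n)
          = N.submatrix ((↑) : ↥S → Fin n) ((↑) : ↥(Sᶜ) → Fin n)
        ∧ M.submatrix ((↑) : ↥(Sᶜ) → Fin n) ((↑) : ↥S → Fin n)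
          = N.submatrix ((↑) : ↥(Sᶜ) → Fin n) ((↑) : ↥S → Fin n)
        ∧ M.submatrix ((↑) : ↥(Sᶜ) → Fin n) ((↑) : ↥(Sᶜ) → Fin n)
          = N.submatrix ((↑) : ↥(Sᶜ) → Fin n) ((↑) : ↥(Sᶜ) → Fin n)) := by
  constructor
  · rintro rfl; exact ⟨rfl, rfl, rfl, rfl⟩
  · rintro ⟨h1, h2, h3, h4⟩
    ext i j
    by_cases hi : i ∈ S <;> by_cases hj : j ∈ S
    · exact congrFun (congrFun h1 ⟨i, hi⟩) ⟨j, hj⟩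
    · exact congrFun (congrFun h2 ⟨i, hi⟩) ⟨j, Finset.mem_compl.mpr hj⟩
    · exact congrFun (congrFun h3 ⟨i, Finset.mem_compl.mpr hi⟩) ⟨j, hj⟩
    · exact congrFun (congrFun h4 ⟨i, Finset.mem_compl.mpr hi⟩) ⟨j, Finset.mem_compl.mpr hj⟩

private lemma diag_ST {n : ℕ} (S : Finset (Fin n)) (d : Fin n → ℝ) :
    (Matrix.diagonal d).submatrix ((↑) : ↥S → Fin n) ((↑) : ↥(Sᶜ) → Fin n) = 0 := by
  ext i j
  have : (i : Fin n) ≠ (j : Fin n) := by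
    intro h
    exact (Finset.mem_compl.mp j.2) (h ▸ i.2)
  simp [Matrix.diagonal_apply_ne _ this]

private lemma diag_TS {n : ℕ} (S : Finset (Fin n)) (d : Fin n → ℝ) :
    (Matrix.diagonal d).submatrix ((↑) : ↥(Sᶜ) → Fin n) ((↑) : ↥S → Fin n) = 0 := by
  ext i j
  have : (i : Fin n) ≠ (j : Fin n) := by
    intro h
    exact (Finset.mem_compl.mp i.2) (h ▸ j.2)
  simp [Matrix.diagonal_apply_ne _ this]

private lemma mulmul {a b b' c d : Type*} [Fintype b] [Fintype b'] [Fintype c]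
    {A : Matrix a b ℝ} {B : Matrix b c ℝ} {A' : Matrix a b' ℝ} {B' : Matrix b' c ℝ}
    (h : A * B = A' * B') (X : Matrix c d ℝ) :
    A * (B * X) = A' * (B' * X) := by
  rw [← Matrix.mul_assoc, h, Matrix.mul_assoc]

private lemma cancel_right {s t : Type*} [Fintype t] [DecidableEq t] {X Y : Matrix s t ℝ}
    (P : Matrix t t ℝ) (hP : IsUnit P.det) (h : X * P = Y * P) : X = Y := by
  calc X = X * P * P⁻¹ := by rw [Matrix.mul_assoc, Matrix.mul_nonsing_inv _ hP, Matrix.mul_one]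
    _ = Y * P * P⁻¹ := by rw [h]
    _ = Y := by rw [Matrix.mul_assoc, Matrix.mul_nonsing_inv _ hP, Matrix.mul_one]

private lemma core {s t : Type*} [Fintype s] [Fintype t] [DecidableEq s]
    (A : Matrix s s ℝ) (B : Matrix s t ℝ) (C : Matrix t s ℝ)
    (P : Matrix s s ℝ) (Q : Matrix t t ℝ)
    (hP : IsUnit P.det) (hA : IsUnit A.det)
    (dbSS : A * P = P * Aᵀ) (dbST : B * Q = P * Cᵀ) (dbTS : C * P = Q * Bᵀ)
    (W : Matrix s s ℝ) (X : Matrix s t ℝ) (Y : Matrix t s ℝ) (Z : Matrix t t ℝ) :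
    ((W * P = P * Wᵀ ∧ X * Q = P * Yᵀ ∧ Y * P = Q * Xᵀ ∧ Z * Q = Q * Zᵀ)
      ∧ (A * W + B * Y = 0 ∧ A * X + B * Z = 0))
    ↔ (Z * Q = Q * Zᵀ ∧ W = A⁻¹ * B * Z * C * A⁻¹ ∧ X = -(A⁻¹ * B * Z) ∧ Y = -(Z * C * A⁻¹)) := by
  have hAT : IsUnit Aᵀ.det := by rwa [Matrix.det_transpose]
  have kP : A⁻¹ * P = P * Aᵀ⁻¹ := by
    calc A⁻¹ * P = A⁻¹ * (P * (Aᵀ * Aᵀ⁻¹)) := by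
          rw [Matrix.mul_nonsing_inv _ hAT, Matrix.mul_one]
      _ = A⁻¹ * (A * (P * Aᵀ⁻¹)) := by
          rw [← Matrix.mul_assoc P, ← dbSS, Matrix.mul_assoc]
      _ = P * Aᵀ⁻¹ := by
          rw [← Matrix.mul_assoc, Matrix.nonsing_inv_mul _ hA, Matrix.one_mul]
  constructor
  · rintro ⟨⟨s1, s2, s3, s4⟩, q1, q2⟩
    have hX : X = -(A⁻¹ * B * Z) := by
      have h2 : A * X = -(B * Z) := eq_neg_of_add_eq_zero_left q2
      calc X = A⁻¹ * (A * X) := by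
            rw [← Matrix.mul_assoc, Matrix.nonsing_inv_mul _ hA, Matrix.one_mul]
        _ = -(A⁻¹ * B * Z) := by rw [h2, Matrix.mul_neg, ← Matrix.mul_assoc]
    have hY : Y = -(Z * C * A⁻¹) := by
      refine cancel_right P hP ?_
      have lhs : Y * P = -(Q * (Zᵀ * (Bᵀ * Aᵀ⁻¹))) := by
        rw [s3, hX]
        simp only [Matrix.transpose_neg, Matrix.transpose_mul, Matrix.transpose_nonsing_inv,
          Matrix.mul_neg, Matrix.mul_assoc]
      rw [lhs]
      simp only [Matrix.neg_mul, Matrix.mul_assoc]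
      rw [kP, mulmul dbTS, mulmul s4]
    have hW : W = A⁻¹ * B * Z * C * A⁻¹ := by
      have h1 : A * W = -(B * Y) := eq_neg_of_add_eq_zero_left q1
      calc W = A⁻¹ * (A * W) := by
            rw [← Matrix.mul_assoc, Matrix.nonsing_inv_mul _ hA, Matrix.one_mul]
        _ = A⁻¹ * B * Z * C * A⁻¹ := by
            rw [h1, hY]
            simp only [Matrix.mul_neg, neg_neg, Matrix.mul_assoc]
    exact ⟨s4, hW, hX, hY⟩
  · rintro ⟨s4, hW, hX, hY⟩
    subst hW hX hY
    refine ⟨⟨?_, ?_, ?_, s4⟩, ?_, ?_⟩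
    · simp only [Matrix.transpose_mul, Matrix.transpose_nonsing_inv, Matrix.mul_assoc]
      rw [kP, mulmul dbTS, mulmul s4, mulmul dbST, mulmul kP]
    · simp only [Matrix.transpose_neg, Matrix.transpose_mul, Matrix.transpose_nonsing_inv,
        Matrix.neg_mul, Matrix.mul_neg, Matrix.mul_assoc]
      rw [s4, mulmul dbST, mulmul kP]
    · simp only [Matrix.transpose_neg, Matrix.transpose_mul, Matrix.transpose_nonsing_inv,
        Matrix.neg_mul, Matrix.mul_neg, Matrix.mul_assoc]
      rw [kP, mulmul dbTS, mulmul s4]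
    · simp only [Matrix.mul_neg, Matrix.mul_assoc]
      rw [← Matrix.mul_assoc A A⁻¹, Matrix.mul_nonsing_inv _ hA, Matrix.one_mul]
      exact add_neg_cancel _
    · simp only [Matrix.mul_neg, Matrix.mul_assoc]
      rw [← Matrix.mul_assoc A A⁻¹, Matrix.mul_nonsing_inv _ hA, Matrix.one_mul]
      exact neg_add_cancel _

/-- `V` is `π`-self-adjoint and has image contained in the QSSA subspace
`W = {y : K_SS y_S + K_ST y_T = 0} = {y : (K y)_S = 0}` if and only if `V` has the block
form `V_SS = K_SS⁻¹ K_ST V_TT K_TS K_SS⁻¹`, `V_ST = −K_SS⁻¹ K_ST V_TT`,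
`V_TS = −V_TT K_TS K_SS⁻¹` with a `π_T`-self-adjoint block `V_TT`. -/
theorem rcmc_stmt7 (n : ℕ) (K : Matrix (Fin n) (Fin n) ℝ) (π : Fin n → ℝ)
    (hoff : ∀ i j, i ≠ j → 0 ≤ K i j)
    (hcol : ∀ j, ∑ i, K i j = 0)
    (hπpos : ∀ i, 0 < π i) (hπsum : ∑ i, π i = 1)
    (hdb : K * Matrix.diagonal π = Matrix.diagonal π * Kᵀ)
    (S : Finset (Fin n))
    (hinv : IsUnit (K.submatrix ((↑) : ↥S → Fin n) ((↑) : ↥S → Fin n)).det)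
    (V : Matrix (Fin n) (Fin n) ℝ) :
    let KSS := K.submatrix ((↑) : ↥S → Fin n) ((↑) : ↥S → Fin n)
    let KST := K.submatrix ((↑) : ↥S → Fin n) ((↑) : ↥(Sᶜ) → Fin n)
    let KTS := K.submatrix ((↑) : ↥(Sᶜ) → Fin n) ((↑) : ↥S → Fin n)
    let VTT := V.submatrix ((↑) : ↥(Sᶜ) → Fin n) ((↑) : ↥(Sᶜ) → Fin n)
    ((V * Matrix.diagonal π = Matrix.diagonal π * Vᵀ) ∧
      (∀ p : Fin n → ℝ, ∀ i : ↥S, (K.mulVec (V.mulVec p)) ↑i = 0))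
    ↔
    ((VTT * Matrix.diagonal (fun i : ↥(Sᶜ) => π ↑i)
        = Matrix.diagonal (fun i : ↥(Sᶜ) => π ↑i) * VTTᵀ) ∧
      V.submatrix ((↑) : ↥S → Fin n) ((↑) : ↥S → Fin n)
        = KSS⁻¹ * KST * VTT * KTS * KSS⁻¹ ∧
      V.submatrix ((↑) : ↥S → Fin n) ((↑) : ↥(Sᶜ) → Fin n)
        = -(KSS⁻¹ * KST * VTT) ∧
      V.submatrix ((↑) : ↥(Sᶜ) → Fin n) ((↑) : ↥S → Fin n)
        = -(VTT * KTS * KSS⁻¹)) := by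
  intro KSS KST KTS VTT
  have hdSS : (Matrix.diagonal π).submatrix ((↑) : ↥S → Fin n) ((↑) : ↥S → Fin n)
      = Matrix.diagonal (fun i : ↥S => π ↑i) :=
    Matrix.submatrix_diagonal π _ Subtype.coe_injective
  have hdTT : (Matrix.diagonal π).submatrix ((↑) : ↥(Sᶜ) → Fin n) ((↑) : ↥(Sᶜ) → Fin n)
      = Matrix.diagonal (fun i : ↥(Sᶜ) => π ↑i) :=
    Matrix.submatrix_diagonal π _ Subtype.coe_injective
  have hPdet : IsUnit (Matrix.diagonal (fun i : ↥S => π ↑i)).det := by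
    rw [Matrix.det_diagonal]
    exact isUnit_iff_ne_zero.mpr (ne_of_gt (Finset.prod_pos (fun i _ => hπpos i)))
  -- detailed balance in block form
  have hdb' := hdb
  rw [eq_iff_blocks S] at hdb'
  simp only [mul_submatrix_split S, hdSS, hdTT, diag_ST S π, diag_TS S π,
    Matrix.mul_zero, Matrix.zero_mul, add_zero, zero_add,
    ← Matrix.transpose_submatrix] at hdb'
  obtain ⟨dbSS, dbST, dbTS, -⟩ := hdb'
  -- self-adjointness in block form
  have hsa_iff : (V * Matrix.diagonal π = Matrix.diagonal π * Vᵀ) ↔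
      ((V.submatrix ((↑) : ↥S → Fin n) ((↑) : ↥S → Fin n)) * Matrix.diagonal (fun i : ↥S => π ↑i)
          = Matrix.diagonal (fun i : ↥S => π ↑i) * (V.submatrix ((↑) : ↥S → Fin n) ((↑) : ↥S → Fin n))ᵀ
        ∧ (V.submatrix ((↑) : ↥S → Fin n) ((↑) : ↥(Sᶜ) → Fin n)) * Matrix.diagonal (fun i : ↥(Sᶜ) => π ↑i)
          = Matrix.diagonal (fun i : ↥S => π ↑i) * (V.submatrix ((↑) : ↥(Sᶜ) → Fin n) ((↑) : ↥S → Fin n))ᵀ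
        ∧ (V.submatrix ((↑) : ↥(Sᶜ) → Fin n) ((↑) : ↥S → Fin n)) * Matrix.diagonal (fun i : ↥S => π ↑i)
          = Matrix.diagonal (fun i : ↥(Sᶜ) => π ↑i) * (V.submatrix ((↑) : ↥S → Fin n) ((↑) : ↥(Sᶜ) → Fin n))ᵀ
        ∧ (V.submatrix ((↑) : ↥(Sᶜ) → Fin n) ((↑) : ↥(Sᶜ) → Fin n)) * Matrix.diagonal (fun i : ↥(Sᶜ) => π ↑i)
          = Matrix.diagonal (fun i : ↥(Sᶜ) => π ↑i) * (V.submatrix ((↑) : ↥(Sᶜ) → Fin n) ((↑) : ↥(Sᶜ) → Fin n))ᵀ) := by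
    rw [eq_iff_blocks S]
    simp only [mul_submatrix_split S, hdSS, hdTT, diag_ST S π, diag_TS S π,
      Matrix.mul_zero, Matrix.zero_mul, add_zero, zero_add,
      ← Matrix.transpose_submatrix]
  -- QSSA condition in block form
  have hq_iff : (∀ p : Fin n → ℝ, ∀ i : ↥S, (K.mulVec (V.mulVec p)) ↑i = 0) ↔
      ((K.submatrix ((↑) : ↥S → Fin n) ((↑) : ↥S → Fin n))
          * (V.submatrix ((↑) : ↥S → Fin n) ((↑) : ↥S → Fin n))
        + (K.submatrix ((↑) : ↥S → Fin n) ((↑) : ↥(Sᶜ) → Fin n))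
          * (V.submatrix ((↑) : ↥(Sᶜ) → Fin n) ((↑) : ↥S → Fin n)) = 0
      ∧ (K.submatrix ((↑) : ↥S → Fin n) ((↑) : ↥S → Fin n))
          * (V.submatrix ((↑) : ↥S → Fin n) ((↑) : ↥(Sᶜ) → Fin n))
        + (K.submatrix ((↑) : ↥S → Fin n) ((↑) : ↥(Sᶜ) → Fin n))
          * (V.submatrix ((↑) : ↥(Sᶜ) → Fin n) ((↑) : ↥(Sᶜ) → Fin n)) = 0) := by
    constructor
    · intro h
      have hz : ∀ (i : ↥S) (j : Fin n), (K * V) ↑i j = 0 := by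
        intro i j
        have h' := h (Pi.single j 1) i
        rw [Matrix.mulVec_mulVec, Matrix.mulVec_single] at h'
        simpa using h'
      constructor
      · have hb : (K * V).submatrix ((↑) : ↥S → Fin n) ((↑) : ↥S → Fin n) = 0 := by
          ext i j; exact hz i _
        rw [mul_submatrix_split S] at hb
        exact hb
      · have hb : (K * V).submatrix ((↑) : ↥S → Fin n) ((↑) : ↥(Sᶜ) → Fin n) = 0 := by
          ext i j; exact hz i _
        rw [mul_submatrix_split S] at hb
        exact hb
    · rintro ⟨h1, h2⟩ p i
      rw [Matrix.mulVec_mulVec]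
      have hb1 : (K * V).submatrix ((↑) : ↥S → Fin n) ((↑) : ↥S → Fin n) = 0 := by
        rw [mul_submatrix_split S]; exact h1
      have hb2 : (K * V).submatrix ((↑) : ↥S → Fin n) ((↑) : ↥(Sᶜ) → Fin n) = 0 := by
        rw [mul_submatrix_split S]; exact h2
      have hrow : ∀ j, (K * V) ↑i j = 0 := by
        intro j
        by_cases hj : j ∈ S
        · have := congrFun (congrFun hb1 i) ⟨j, hj⟩
          simpa using this
        · have := congrFun (congrFun hb2 i) ⟨j, Finset.mem_compl.mpr hj⟩
          simpa using this
      simp [Matrix.mulVec, dotProduct, hrow]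
  rw [hsa_iff, hq_iff]
  exact core _ _ _ _ _ hPdet hinv dbSS dbST dbTS _ _ _ _
end

section
/- Let V be in the block form determined by V_{TT} (Proposition-form from QSSA, V = Ω* V_{TT} Ω with Ω = (−K_{TS}K_{SS}⁻¹, I_T)). Then V satisfies 1ᵀV = 1ᵀ if and only if 1_Tᵀ M V_{TT} = 1_Tᵀ, where M = I_T + K_{TS}K_{SS}⁻²K_{ST}. Moreover V ≥ 0 entrywise if and only if V_{TT} ≥ 0 entrywise. -/
open Matrix BigOperators

section rcmcAux

variable {m : Type*} [Fintype m] [DecidableEq m]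

lemma rcmc_maxPrin (A : Matrix m m ℝ) (hoff : ∀ i j, i ≠ j → 0 ≤ A i j)
    (hrow : ∀ i, ∑ j, A i j < 0) (y : m → ℝ) (hy : ∀ i, 0 ≤ (A *ᵥ y) i) :
    ∀ i, y i ≤ 0 := by
  by_contra h
  push_neg at h
  obtain ⟨i0, hi0⟩ := h
  obtain ⟨k, -, hk⟩ := Finset.exists_max_image Finset.univ y ⟨i0, Finset.mem_univ i0⟩
  have hyk : 0 < y k := lt_of_lt_of_le hi0 (hk i0 (Finset.mem_univ i0))
  have h1 : (A *ᵥ y) k ≤ (∑ j, A k j) * y k := by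
    rw [Finset.sum_mul]
    simp only [Matrix.mulVec, dotProduct]
    apply Finset.sum_le_sum
    intro j _
    by_cases hjk : j = k
    · subst hjk; exact le_rfl
    · exact mul_le_mul_of_nonneg_left (hk j (Finset.mem_univ j))
        (hoff k j (fun h => hjk h.symm))
  have h2 : (∑ j, A k j) * y k < 0 := mul_neg_of_neg_of_pos (hrow k) hyk
  exact absurd (hy k) (not_le.mpr (lt_of_le_of_lt h1 h2))

lemma rcmc_strictDet (A : Matrix m m ℝ) (hoff : ∀ i j, i ≠ j → 0 ≤ A i j)
    (hrow : ∀ i, ∑ j, A i j < 0) : IsUnit A.det := by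
  rw [isUnit_iff_ne_zero]
  intro hdet
  obtain ⟨v, hv0, hv⟩ := Matrix.exists_mulVec_eq_zero_iff.mpr hdet
  have h1 : ∀ i, v i ≤ 0 := rcmc_maxPrin A hoff hrow v (fun i => by rw [hv]; exact le_refl 0)
  have h2 : ∀ i, (-v) i ≤ 0 := rcmc_maxPrin A hoff hrow (-v)
    (fun i => by rw [Matrix.mulVec_neg, hv]; simp)
  apply hv0
  funext i
  exact le_antisymm (h1 i) (by simpa using h2 i)

lemma rcmc_strictInv (A : Matrix m m ℝ) (hoff : ∀ i j, i ≠ j → 0 ≤ A i j)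
    (hrow : ∀ i, ∑ j, A i j < 0) : ∀ i j, A⁻¹ i j ≤ 0 := by
  intro i j
  have hy : ∀ i, 0 ≤ (A *ᵥ fun k => A⁻¹ k j) i := by
    intro i
    have : (A *ᵥ fun k => A⁻¹ k j) i = (A * A⁻¹) i j := by
      simp [Matrix.mulVec, dotProduct, Matrix.mul_apply]
    rw [this, Matrix.mul_nonsing_inv A (rcmc_strictDet A hoff hrow), Matrix.one_apply]
    split <;> norm_num
  exact rcmc_maxPrin A hoff hrow _ hy i

lemma rcmc_metzlerInv (A : Matrix m m ℝ) (hoff : ∀ i j, i ≠ j → 0 ≤ A i j)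
    (hrow : ∀ i, ∑ j, A i j ≤ 0) (hA : IsUnit A.det) : ∀ i j, A⁻¹ i j ≤ 0 := by
  intro i j
  set g : ℝ → ℝ := fun ε => (Matrix.det (A - ε • 1))⁻¹ * (Matrix.adjugate (A - ε • 1)) i j
    with hg
  have hginv : ∀ ε : ℝ, g ε = (A - ε • (1 : Matrix m m ℝ))⁻¹ i j := by
    intro ε
    rw [hg]
    simp [Matrix.inv_def, Matrix.smul_apply, Ring.inverse_eq_inv']
  have hM : Continuous fun ε : ℝ => A - ε • (1 : Matrix m m ℝ) :=
    continuous_const.sub (continuous_id.smul continuous_const)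
  have hd : Continuous fun ε : ℝ => (A - ε • (1 : Matrix m m ℝ)).det := hM.matrix_det
  have ha : Continuous fun ε : ℝ => (A - ε • (1 : Matrix m m ℝ)).adjugate i j :=
    (continuous_apply j).comp ((continuous_apply i).comp hM.matrix_adjugate)
  have hne : (A - (0:ℝ) • (1 : Matrix m m ℝ)).det ≠ 0 := by
    simpa using hA.ne_zero
  have hcont : ContinuousAt g 0 := (hd.continuousAt.inv₀ hne).mul ha.continuousAt
  have hev : ∀ ε ∈ Set.Ioi (0:ℝ), g ε ≤ 0 := by
    intro ε hε
    have hεpos : 0 < ε := hε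
    have hoff' : ∀ i' j', i' ≠ j' → 0 ≤ (A - ε • (1 : Matrix m m ℝ)) i' j' := by
      intro i' j' hij
      simp [Matrix.sub_apply, Matrix.smul_apply, Matrix.one_apply_ne hij]
      exact hoff i' j' hij
    have hrow' : ∀ i', ∑ j', (A - ε • (1 : Matrix m m ℝ)) i' j' < 0 := by
      intro i'
      have heq : ∑ j', (A - ε • (1 : Matrix m m ℝ)) i' j' = (∑ j', A i' j') - ε := by
        simp [Matrix.sub_apply, Matrix.smul_apply, Finset.sum_sub_distrib, Matrix.one_apply]
      rw [heq]
      have := hrow i'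
      linarith
    rw [hginv ε]
    exact rcmc_strictInv _ hoff' hrow' i j
  have htd : Filter.Tendsto g (nhdsWithin 0 (Set.Ioi 0)) (nhds (g 0)) :=
    hcont.continuousWithinAt.tendsto
  have hfin : g 0 ≤ 0 := le_of_tendsto htd (by
    filter_upwards [self_mem_nhdsWithin] using hev)
  rw [hginv 0] at hfin
  simpa using hfin

end rcmcAux

section rcmcAux2
variable {l m p : Type*} [Fintype m]

lemma rcmc_mulNN (X : Matrix l m ℝ) (Y : Matrix m p ℝ) (hX : ∀ i j, 0 ≤ X i j)
    (hY : ∀ i j, 0 ≤ Y i j) : ∀ i j, 0 ≤ (X * Y) i j := fun i j => by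
  rw [Matrix.mul_apply]
  exact Finset.sum_nonneg fun k _ => mul_nonneg (hX i k) (hY k j)

lemma rcmc_mulPN (X : Matrix l m ℝ) (Y : Matrix m p ℝ) (hX : ∀ i j, X i j ≤ 0)
    (hY : ∀ i j, 0 ≤ Y i j) : ∀ i j, (X * Y) i j ≤ 0 := fun i j => by
  rw [Matrix.mul_apply]
  exact Finset.sum_nonpos fun k _ => mul_nonpos_of_nonpos_of_nonneg (hX i k) (hY k j)

lemma rcmc_mulNP (X : Matrix l m ℝ) (Y : Matrix m p ℝ) (hX : ∀ i j, 0 ≤ X i j)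
    (hY : ∀ i j, Y i j ≤ 0) : ∀ i j, (X * Y) i j ≤ 0 := fun i j => by
  rw [Matrix.mul_apply]
  exact Finset.sum_nonpos fun k _ => mul_nonpos_of_nonneg_of_nonpos (hX i k) (hY k j)

lemma rcmc_mulPP (X : Matrix l m ℝ) (Y : Matrix m p ℝ) (hX : ∀ i j, X i j ≤ 0)
    (hY : ∀ i j, Y i j ≤ 0) : ∀ i j, 0 ≤ (X * Y) i j := fun i j => by
  rw [Matrix.mul_apply]
  exact Finset.sum_nonneg fun k _ => by nlinarith [hX i k, hY k j]

end rcmcAux2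

lemma rcmc_sumSplit {n : ℕ} (S : Finset (Fin n)) (f : Fin n → ℝ) :
    ∑ i, f i = (∑ i : ↥S, f ↑i) + ∑ i : ↥(Sᶜ), f ↑i := by
  rw [Finset.sum_coe_sort, Finset.sum_coe_sort, Finset.sum_add_sum_compl]

lemma rcmc_oneVecMul {σ τ : Type*} [Fintype σ] (X : Matrix σ τ ℝ) (j : τ) :
    ((fun _ => (1:ℝ)) ᵥ* X) j = ∑ i, X i j := by
  simp [Matrix.vecMul, dotProduct]

lemma rcmc_part1 {σ τ : Type*} [Fintype σ] [Fintype τ] [DecidableEq σ] [DecidableEq τ]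
    (A : Matrix σ σ ℝ) (B : Matrix σ τ ℝ) (C : Matrix τ σ ℝ)
    (VSS : Matrix σ σ ℝ) (VST : Matrix σ τ ℝ) (VTS : Matrix τ σ ℝ) (VTT : Matrix τ τ ℝ)
    (hinv : IsUnit A.det)
    (hkey : ((fun _ => (1:ℝ)) ᵥ* A) = -((fun _ => (1:ℝ)) ᵥ* C))
    (hSS : VSS = A⁻¹ * B * VTT * C * A⁻¹)
    (hST : VST = -(A⁻¹ * B * VTT))
    (hTS : VTS = -(VTT * C * A⁻¹)) :
    ((∀ j : σ, (∑ i, VSS i j) + (∑ i, VTS i j) = 1) ∧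
      (∀ j : τ, (∑ i, VST i j) + (∑ i, VTT i j) = 1))
    ↔ (∀ j : τ, ∑ i, (((1 + C * A⁻¹ * A⁻¹ * B) * VTT : Matrix τ τ ℝ)) i j = 1) := by
  have key2 : (fun _ : σ => (1:ℝ)) = -((fun _ : τ => (1:ℝ)) ᵥ* (C * A⁻¹)) := by
    have h1 : (fun _ : σ => (1:ℝ)) = ((fun _ : σ => (1:ℝ)) ᵥ* A) ᵥ* A⁻¹ := by
      rw [Matrix.vecMul_vecMul, Matrix.mul_nonsing_inv A hinv, Matrix.vecMul_one]
    rw [h1, hkey, Matrix.neg_vecMul, Matrix.vecMul_vecMul]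
  have e1 : (fun _ : σ => (1:ℝ)) ᵥ* VST
      = (fun _ : τ => (1:ℝ)) ᵥ* (C * A⁻¹ * (A⁻¹ * B * VTT)) := by
    rw [hST, key2, Matrix.neg_vecMul, Matrix.vecMul_neg, neg_neg, Matrix.vecMul_vecMul]
  have hWsplit : ((1 + C * A⁻¹ * A⁻¹ * B) * VTT : Matrix τ τ ℝ)
      = VTT + C * A⁻¹ * (A⁻¹ * B * VTT) := by
    simp only [Matrix.add_mul, Matrix.one_mul, Matrix.mul_assoc]
  have hTcol : ∀ j : τ, (∑ i, VST i j) + (∑ i, VTT i j)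
      = ∑ i, (((1 + C * A⁻¹ * A⁻¹ * B) * VTT : Matrix τ τ ℝ)) i j := by
    intro j
    rw [← rcmc_oneVecMul VST j, ← rcmc_oneVecMul VTT j, ← rcmc_oneVecMul _ j, e1, hWsplit,
      Matrix.vecMul_add]
    simp [add_comm]
  have e3 : (fun _ : σ => (1:ℝ)) ᵥ* VSS
      = -((fun _ : τ => (1:ℝ)) ᵥ* (C * A⁻¹ * (A⁻¹ * B * VTT * C * A⁻¹))) := by
    rw [hSS, key2, Matrix.neg_vecMul, Matrix.vecMul_vecMul]
  have e4 : (fun _ : τ => (1:ℝ)) ᵥ* VTS = -((fun _ : τ => (1:ℝ)) ᵥ* (VTT * C * A⁻¹)) := by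
    rw [hTS, Matrix.vecMul_neg]
  have hW2 : ((1 + C * A⁻¹ * A⁻¹ * B) * VTT : Matrix τ τ ℝ) * (C * A⁻¹)
      = C * A⁻¹ * (A⁻¹ * B * VTT * C * A⁻¹) + VTT * C * A⁻¹ := by
    simp only [Matrix.add_mul, Matrix.one_mul, Matrix.mul_assoc]
    try abel
  have hScol : (fun _ : σ => (1:ℝ)) ᵥ* VSS + (fun _ : τ => (1:ℝ)) ᵥ* VTS
      = -((fun _ : τ => (1:ℝ)) ᵥ* (((1 + C * A⁻¹ * A⁻¹ * B) * VTT) * (C * A⁻¹))) := by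
    rw [e3, e4, hW2, Matrix.vecMul_add, neg_add]
  constructor
  · rintro ⟨-, hT⟩ j
    exact (hTcol j).symm.trans (hT j)
  · intro h
    have huW : (fun _ : τ => (1:ℝ)) ᵥ* ((1 + C * A⁻¹ * A⁻¹ * B) * VTT)
        = (fun _ : τ => (1:ℝ)) := funext fun j => by rw [rcmc_oneVecMul]; exact h j
    refine ⟨fun j => ?_, fun j => (hTcol j).trans (h j)⟩
    have h5 : (∑ i, VSS i j) + (∑ i, VTS i j)
        = ((fun _ : σ => (1:ℝ)) ᵥ* VSS + (fun _ : τ => (1:ℝ)) ᵥ* VTS) j := by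
      simp [rcmc_oneVecMul]
    rw [h5, hScol, ← Matrix.vecMul_vecMul, huW, ← key2]

/-- For `V` in the block form determined by `V_TT`, `1ᵀ V = 1ᵀ` holds iff
`1_Tᵀ M V_TT = 1_Tᵀ` where `M = I_T + K_TS K_SS⁻² K_ST`; moreover `V ≥ 0` entrywise iff
`V_TT ≥ 0` entrywise. -/
theorem rcmc_stmt8 (n : ℕ) (K : Matrix (Fin n) (Fin n) ℝ) (π : Fin n → ℝ)
    (hoff : ∀ i j, i ≠ j → 0 ≤ K i j)
    (hcol : ∀ j, ∑ i, K i j = 0)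
    (hπpos : ∀ i, 0 < π i) (hπsum : ∑ i, π i = 1)
    (hdb : K * Matrix.diagonal π = Matrix.diagonal π * Kᵀ)
    (S : Finset (Fin n))
    (hinv : IsUnit (K.submatrix ((↑) : ↥S → Fin n) ((↑) : ↥S → Fin n)).det)
    (V : Matrix (Fin n) (Fin n) ℝ)
    (VTT : Matrix ↥(Sᶜ) ↥(Sᶜ) ℝ)
    (hTT : V.submatrix ((↑) : ↥(Sᶜ) → Fin n) ((↑) : ↥(Sᶜ) → Fin n) = VTT)
    (hSS : V.submatrix ((↑) : ↥S → Fin n) ((↑) : ↥S → Fin n)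
      = (K.submatrix ((↑) : ↥S → Fin n) ((↑) : ↥S → Fin n))⁻¹
        * K.submatrix ((↑) : ↥S → Fin n) ((↑) : ↥(Sᶜ) → Fin n) * VTT
        * K.submatrix ((↑) : ↥(Sᶜ) → Fin n) ((↑) : ↥S → Fin n)
        * (K.submatrix ((↑) : ↥S → Fin n) ((↑) : ↥S → Fin n))⁻¹)
    (hST : V.submatrix ((↑) : ↥S → Fin n) ((↑) : ↥(Sᶜ) → Fin n)
      = -((K.submatrix ((↑) : ↥S → Fin n) ((↑) : ↥S → Fin n))⁻¹
          * K.submatrix ((↑) : ↥S → Fin n) ((↑) : ↥(Sᶜ) → Fin n) * VTT))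
    (hTS : V.submatrix ((↑) : ↥(Sᶜ) → Fin n) ((↑) : ↥S → Fin n)
      = -(VTT * K.submatrix ((↑) : ↥(Sᶜ) → Fin n) ((↑) : ↥S → Fin n)
          * (K.submatrix ((↑) : ↥S → Fin n) ((↑) : ↥S → Fin n))⁻¹)) :
    let M : Matrix ↥(Sᶜ) ↥(Sᶜ) ℝ :=
      1 + K.submatrix ((↑) : ↥(Sᶜ) → Fin n) ((↑) : ↥S → Fin n)
        * (K.submatrix ((↑) : ↥S → Fin n) ((↑) : ↥S → Fin n))⁻¹
        * (K.submatrix ((↑) : ↥S → Fin n) ((↑) : ↥S → Fin n))⁻¹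
        * K.submatrix ((↑) : ↥S → Fin n) ((↑) : ↥(Sᶜ) → Fin n)
    ((∀ j : Fin n, ∑ i, V i j = 1) ↔ (∀ j : ↥(Sᶜ), ∑ i : ↥(Sᶜ), (M * VTT) i j = 1)) ∧
    ((∀ i j : Fin n, 0 ≤ V i j) ↔ (∀ i j : ↥(Sᶜ), 0 ≤ VTT i j)) := by
  intro M
  set A := K.submatrix ((↑) : ↥S → Fin n) ((↑) : ↥S → Fin n) with hA
  set B := K.submatrix ((↑) : ↥S → Fin n) ((↑) : ↥(Sᶜ) → Fin n) with hB
  set C := K.submatrix ((↑) : ↥(Sᶜ) → Fin n) ((↑) : ↥S → Fin n) with hC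
  have hBpos : ∀ (i : ↥S) (j : ↥(Sᶜ)), 0 ≤ B i j := by
    intro i j
    have hne : (i : Fin n) ≠ (j : Fin n) := fun h => Finset.mem_compl.mp j.2 (h ▸ i.2)
    rw [hB]
    exact hoff _ _ hne
  have hCpos : ∀ (i : ↥(Sᶜ)) (j : ↥S), 0 ≤ C i j := by
    intro i j
    have hne : (i : Fin n) ≠ (j : Fin n) := fun h =>
      Finset.mem_compl.mp i.2 (by rw [h]; exact j.2)
    rw [hC]
    exact hoff _ _ hne
  have hAcol : ∀ j : ↥S, ∑ i : ↥S, A i j ≤ 0 := by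
    intro j
    have h0 := hcol (j : Fin n)
    rw [rcmc_sumSplit S (fun i => K i (j : Fin n))] at h0
    have h1 : 0 ≤ ∑ i : ↥(Sᶜ), K (i : Fin n) (j : Fin n) :=
      Finset.sum_nonneg fun i _ => hoff _ _ (fun h =>
        Finset.mem_compl.mp i.2 (by rw [h]; exact j.2))
    have h2 : (∑ i : ↥S, A i j) = ∑ i : ↥S, K (i : Fin n) (j : Fin n) := by
      simp [hA]
    linarith
  have hAt : ∀ i j, (Aᵀ)⁻¹ i j ≤ 0 := by
    apply rcmc_metzlerInv
    · intro i j hij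
      rw [Matrix.transpose_apply, hA]
      exact hoff _ _ (fun h => hij (Subtype.ext h.symm))
    · intro i
      simpa [Matrix.transpose_apply] using hAcol i
    · rw [Matrix.det_transpose]; exact hinv
  have hAinvLe : ∀ i j, A⁻¹ i j ≤ 0 := fun i j => by
    have := hAt j i
    rwa [← Matrix.transpose_nonsing_inv, Matrix.transpose_apply] at this
  have hkeyv : ((fun _ : ↥S => (1:ℝ)) ᵥ* A) = -((fun _ : ↥(Sᶜ) => (1:ℝ)) ᵥ* C) := by
    funext j
    rw [Pi.neg_apply, rcmc_oneVecMul, rcmc_oneVecMul]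
    have h0 := hcol (j : Fin n)
    rw [rcmc_sumSplit S (fun i => K i (j : Fin n))] at h0
    have h2 : (∑ i : ↥S, A i j) = ∑ i : ↥S, K (i : Fin n) (j : Fin n) := by simp [hA]
    have h3 : (∑ i : ↥(Sᶜ), C i j) = ∑ i : ↥(Sᶜ), K (i : Fin n) (j : Fin n) := by simp [hC]
    rw [h2, h3]
    linarith
  have hp := rcmc_part1 A B C
      (V.submatrix ((↑) : ↥S → Fin n) ((↑) : ↥S → Fin n))
      (V.submatrix ((↑) : ↥S → Fin n) ((↑) : ↥(Sᶜ) → Fin n))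
      (V.submatrix ((↑) : ↥(Sᶜ) → Fin n) ((↑) : ↥S → Fin n))
      VTT hinv hkeyv hSS hST hTS
  constructor
  · have hsplit : (∀ j : Fin n, ∑ i, V i j = 1) ↔
        ((∀ j : ↥S, (∑ i : ↥S, V.submatrix ((↑) : ↥S → Fin n) ((↑) : ↥S → Fin n) i j)
            + (∑ i : ↥(Sᶜ), V.submatrix ((↑) : ↥(Sᶜ) → Fin n) ((↑) : ↥S → Fin n) i j) = 1) ∧
          (∀ j : ↥(Sᶜ), (∑ i : ↥S, V.submatrix ((↑) : ↥S → Fin n) ((↑) : ↥(Sᶜ) → Fin n) i j)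
            + (∑ i : ↥(Sᶜ), VTT i j) = 1)) := by
      constructor
      · intro h
        constructor
        · intro j
          have hh := h (j : Fin n)
          rw [rcmc_sumSplit S (fun i => V i (j : Fin n))] at hh
          exact hh
        · intro j
          have hh := h (j : Fin n)
          rw [rcmc_sumSplit S (fun i => V i (j : Fin n))] at hh
          rw [← hTT]
          exact hh
      · rintro ⟨h1, h2⟩ j
        rw [rcmc_sumSplit S (fun i => V i j)]
        by_cases hj : j ∈ S
        · exact h1 ⟨j, hj⟩
        · have hh := h2 ⟨j, Finset.mem_compl.mpr hj⟩
          rw [← hTT] at hh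
          exact hh
    exact hsplit.trans hp
  · constructor
    · intro h i j
      have hh := congrFun (congrFun hTT i) j
      rw [← hh]
      exact h _ _
    · intro h i j
      have hVSS : ∀ (i j : ↥S), V ↑i ↑j = (A⁻¹ * B * VTT * C * A⁻¹) i j := fun i j => by
        rw [← hSS]; rfl
      have hVST : ∀ (i : ↥S) (j : ↥(Sᶜ)), V ↑i ↑j = (-(A⁻¹ * B * VTT)) i j := fun i j => by
        rw [← hST]; rfl
      have hVTS : ∀ (i : ↥(Sᶜ)) (j : ↥S), V ↑i ↑j = (-(VTT * C * A⁻¹)) i j := fun i j => by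
        rw [← hTS]; rfl
      have hVTT : ∀ (i j : ↥(Sᶜ)), V ↑i ↑j = VTT i j := fun i j => by
        rw [← hTT]; rfl
      have hP : ∀ (i : ↥S) (j : ↥(Sᶜ)), (A⁻¹ * B) i j ≤ 0 := rcmc_mulPN _ _ hAinvLe hBpos
      have hPV : ∀ (i : ↥S) (j : ↥(Sᶜ)), (A⁻¹ * B * VTT) i j ≤ 0 := rcmc_mulPN _ _ hP h
      by_cases hi : i ∈ S <;> by_cases hj : j ∈ S
      · rw [show V i j = V ((⟨i, hi⟩ : ↥S) : Fin n) ((⟨j, hj⟩ : ↥S) : Fin n) from rfl,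
          hVSS ⟨i, hi⟩ ⟨j, hj⟩]
        exact rcmc_mulPP _ _ (rcmc_mulPN _ _ hPV hCpos) hAinvLe _ _
      · rw [show V i j = V ((⟨i, hi⟩ : ↥S) : Fin n)
            ((⟨j, Finset.mem_compl.mpr hj⟩ : ↥(Sᶜ)) : Fin n) from rfl,
          hVST ⟨i, hi⟩ ⟨j, Finset.mem_compl.mpr hj⟩]
        rw [Matrix.neg_apply, neg_nonneg]
        exact hPV _ _
      · rw [show V i j = V ((⟨i, Finset.mem_compl.mpr hi⟩ : ↥(Sᶜ)) : Fin n)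
            ((⟨j, hj⟩ : ↥S) : Fin n) from rfl,
          hVTS ⟨i, Finset.mem_compl.mpr hi⟩ ⟨j, hj⟩]
        rw [Matrix.neg_apply, neg_nonneg]
        exact rcmc_mulNP _ _ (rcmc_mulNN VTT C h hCpos) hAinvLe _ _
      · rw [show V i j = V ((⟨i, Finset.mem_compl.mpr hi⟩ : ↥(Sᶜ)) : Fin n)
            ((⟨j, Finset.mem_compl.mpr hj⟩ : ↥(Sᶜ)) : Fin n) from rfl,
          hVTT ⟨i, Finset.mem_compl.mpr hi⟩ ⟨j, Finset.mem_compl.mpr hj⟩]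
        exact h _ _
end

section
/- With V_{TT} = diag(1_TᵀM)⁻¹ where M = I_T + K_{TS}K_{SS}⁻²K_{ST} (Type A), the resulting matrix V maps the probability simplex into itself: Vp ∈ Δ_n for every p ∈ Δ_n. -/
open Matrix BigOperators


lemma rcmc_mul_nonneg {l m o : Type*} [Fintype m] (A : Matrix l m ℝ) (B : Matrix m o ℝ)
    (hA : ∀ i j, 0 ≤ A i j) (hB : ∀ i j, 0 ≤ B i j) : ∀ i j, 0 ≤ (A * B) i j := by
  intro i j
  rw [Matrix.mul_apply]
  exact Finset.sum_nonneg fun l _ => mul_nonneg (hA i l) (hB l j)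

lemma rcmc_neumann {m : Type*} [Fintype m] [DecidableEq m] (B : Matrix m m ℝ)
    (hB : ∀ i j, 0 ≤ B i j) (hcs : ∀ j, ∑ i, B i j ≤ 1)
    (hu : IsUnit (1 - B).det) : ∀ i j, 0 ≤ (1 - B)⁻¹ i j := by
  set C := (1 - B)⁻¹ with hC
  have hpow : ∀ (k : ℕ) (i j : m), 0 ≤ (B ^ k) i j := by
    intro k
    induction k with
    | zero => intro i j; rw [pow_zero, Matrix.one_apply]; split <;> norm_num
    | succ k ih => intro i j; rw [pow_succ']; exact rcmc_mul_nonneg _ _ hB ih i j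
  have hpcs : ∀ (k : ℕ) (j : m), ∑ i, (B ^ k) i j ≤ 1 := by
    intro k
    induction k with
    | zero =>
      intro j
      simp [Matrix.one_apply, Finset.sum_ite_eq]
    | succ k ih =>
      intro j
      rw [pow_succ']
      calc ∑ i, (B * B ^ k) i j = ∑ l, (∑ i, B i l) * (B ^ k) l j := by
            simp_rw [Matrix.mul_apply]
            rw [Finset.sum_comm]
            simp_rw [← Finset.sum_mul]
        _ ≤ ∑ l, 1 * (B ^ k) l j :=
            Finset.sum_le_sum fun l _ => mul_le_mul_of_nonneg_right (hcs l) (hpow k l j)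
        _ = ∑ l, (B ^ k) l j := by simp
        _ ≤ 1 := ih j
  have hent : ∀ (k : ℕ) (i j : m), (B ^ k) i j ≤ 1 := fun k i j =>
    le_trans (Finset.single_le_sum (fun l _ => hpow k l j) (Finset.mem_univ i)) (hpcs k j)
  have hCr : (1 - B) * C = 1 := Matrix.mul_nonsing_inv _ hu
  have hgeom : ∀ N : ℕ, (∑ k ∈ Finset.range N, B ^ k) = C - B ^ N * C := by
    intro N
    have h1 : (∑ k ∈ Finset.range N, B ^ k) * (B - 1) = B ^ N - 1 := geom_sum_mul B N
    have h2 : (∑ k ∈ Finset.range N, B ^ k) * (1 - B) = 1 - B ^ N := by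
      have h := congrArg Neg.neg h1
      rw [← mul_neg, neg_sub, neg_sub] at h
      exact h
    calc (∑ k ∈ Finset.range N, B ^ k)
        = (∑ k ∈ Finset.range N, B ^ k) * ((1 - B) * C) := by rw [hCr, mul_one]
      _ = ((∑ k ∈ Finset.range N, B ^ k) * (1 - B)) * C := by rw [mul_assoc]
      _ = (1 - B ^ N) * C := by rw [h2]
      _ = C - B ^ N * C := by rw [sub_mul, one_mul]
  have hentry : ∀ (N : ℕ) (a b : m),
      ∑ k ∈ Finset.range N, (B ^ k) a b = C a b - ∑ l, (B ^ N) a l * C l b := by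
    intro N a b
    have h2 : (∑ k ∈ Finset.range N, B ^ k) a b = (C - B ^ N * C) a b := by rw [hgeom N]
    simpa [Matrix.sum_apply, Matrix.sub_apply, Matrix.mul_apply] using h2
  have htailbd : ∀ (N : ℕ) (a b : m), -(∑ l, |C l b|) ≤ ∑ l, (B ^ N) a l * C l b := by
    intro N a b
    rw [← Finset.sum_neg_distrib]
    apply Finset.sum_le_sum
    intro l _
    have h1 : |(B ^ N) a l * C l b| ≤ |C l b| := by
      rw [abs_mul, abs_of_nonneg (hpow N a l)]
      exact mul_le_of_le_one_left (abs_nonneg _) (hent N a l)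
    linarith [neg_abs_le ((B ^ N) a l * C l b)]
  have hsummable : ∀ a b : m, Summable (fun k => (B ^ k) a b) := by
    intro a b
    apply summable_of_sum_range_le (c := C a b + ∑ l, |C l b|) (fun k => hpow k a b)
    intro N
    rw [hentry N a b]
    linarith [htailbd N a b]
  intro i j
  have hto0 : ∀ a b : m, Filter.Tendsto (fun N => (B ^ N) a b) Filter.atTop (nhds 0) :=
    fun a b => (hsummable a b).tendsto_atTop_zero
  have htail : Filter.Tendsto (fun N => ∑ l, (B ^ N) i l * C l j) Filter.atTop (nhds 0) := by
    have h := tendsto_finset_sum (Finset.univ : Finset m)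
      (fun l _ => (hto0 i l).mul_const (C l j))
    simpa using h
  have hmain : Filter.Tendsto (fun N => ∑ k ∈ Finset.range N, (B ^ k) i j)
      Filter.atTop (nhds (C i j)) := by
    simp_rw [hentry]
    simpa using tendsto_const_nhds.sub htail
  exact ge_of_tendsto' hmain fun N => Finset.sum_nonneg fun k _ => hpow k i j

lemma rcmc_Zinv {m : Type*} [Fintype m] [DecidableEq m] (A : Matrix m m ℝ)
    (hoffd : ∀ i j, i ≠ j → A i j ≤ 0) (hcs : ∀ j, 0 ≤ ∑ i, A i j)
    (hu : IsUnit A.det) : ∀ i j, 0 ≤ A⁻¹ i j := by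
  classical
  set d : m → ℝ := fun j => A j j with hd
  have hsplit : ∀ j, ∑ i, A i j = d j + ∑ i ∈ Finset.univ.erase j, A i j := by
    intro j
    rw [← Finset.add_sum_erase _ _ (Finset.mem_univ j)]
  have herase_np : ∀ j, ∑ i ∈ Finset.univ.erase j, A i j ≤ 0 := fun j =>
    Finset.sum_nonpos fun i hi => hoffd i j (Finset.ne_of_mem_erase hi)
  have hdpos : ∀ j, 0 < d j := by
    intro j
    have h0 := hcs j
    rw [hsplit j] at h0
    have hdnn : 0 ≤ d j := by linarith [herase_np j]
    rcases hdnn.lt_or_eq with h | h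
    · exact h
    · exfalso
      have hsum0 : ∑ i ∈ Finset.univ.erase j, A i j = 0 := by linarith [herase_np j]
      have hzero : ∀ i, A i j = 0 := by
        intro i
        by_cases hij : i = j
        · rw [hij]; exact h.symm
        · exact (Finset.sum_eq_zero_iff_of_nonpos
            (fun i hi => hoffd i j (Finset.ne_of_mem_erase hi))).mp hsum0 i
            (Finset.mem_erase.mpr ⟨hij, Finset.mem_univ i⟩)
      exact hu.ne_zero (Matrix.det_eq_zero_of_column_eq_zero j hzero)
  set N : Matrix m m ℝ := fun i j => if i = j then 0 else -A i j with hN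
  have hNnn : ∀ i j, 0 ≤ N i j := by
    intro i j
    simp only [hN]
    split
    · exact le_refl 0
    · next h => linarith [hoffd i j h]
  set B : Matrix m m ℝ := N * Matrix.diagonal fun j => (d j)⁻¹ with hB
  have hBnn : ∀ i j, 0 ≤ B i j := by
    intro i j
    rw [hB, Matrix.mul_diagonal]
    exact mul_nonneg (hNnn i j) (inv_nonneg.mpr (hdpos j).le)
  have hNsum : ∀ j, ∑ i, N i j ≤ d j := by
    intro j
    have h1 : ∑ i, N i j = -(∑ i ∈ Finset.univ.erase j, A i j) := by
      rw [← Finset.sum_neg_distrib]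
      rw [← Finset.add_sum_erase _ (fun i => N i j) (Finset.mem_univ j)]
      have hNjj : N j j = 0 := by simp [hN]
      rw [hNjj, zero_add]
      apply Finset.sum_congr rfl
      intro i hi
      simp [hN, Finset.ne_of_mem_erase hi]
    have h0 := hcs j
    rw [hsplit j] at h0
    linarith
  have hBcs : ∀ j, ∑ i, B i j ≤ 1 := by
    intro j
    have h1 : ∑ i, B i j = (∑ i, N i j) * (d j)⁻¹ := by
      simp_rw [hB, Matrix.mul_diagonal]
      rw [Finset.sum_mul]
    rw [h1]
    have h2 := mul_le_mul_of_nonneg_right (hNsum j) (inv_nonneg.mpr (hdpos j).le)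
    rwa [mul_inv_cancel₀ (hdpos j).ne'] at h2
  have hAfact : A = (1 - B) * Matrix.diagonal d := by
    have h1 : (1 - B) * Matrix.diagonal d
        = Matrix.diagonal d - N * (Matrix.diagonal (fun j => (d j)⁻¹) * Matrix.diagonal d) := by
      rw [Matrix.sub_mul, Matrix.one_mul, hB, Matrix.mul_assoc]
    rw [h1, Matrix.diagonal_mul_diagonal]
    have h2 : (fun j => (d j)⁻¹ * d j) = fun _ => (1 : ℝ) :=
      funext fun j => inv_mul_cancel₀ (hdpos j).ne'
    rw [h2, Matrix.diagonal_one, Matrix.mul_one]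
    ext i j
    by_cases hij : i = j
    · subst hij
      change A i i = Matrix.diagonal d i i - N i i
      simp [Matrix.diagonal_apply_eq, hN, hd]
    · change A i j = Matrix.diagonal d i j - N i j
      simp [Matrix.diagonal_apply_ne _ hij, hN, hij]
  have hdetB : IsUnit (1 - B).det := by
    have h1 : A.det = (1 - B).det * (Matrix.diagonal d).det := by
      rw [hAfact, Matrix.det_mul]
    rw [h1] at hu
    exact isUnit_of_mul_isUnit_left hu
  have hDinv : (Matrix.diagonal d)⁻¹ = Matrix.diagonal fun j => (d j)⁻¹ := by
    apply Matrix.inv_eq_right_inv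
    rw [Matrix.diagonal_mul_diagonal]
    have h2 : (fun j => d j * (d j)⁻¹) = fun _ => (1 : ℝ) :=
      funext fun j => mul_inv_cancel₀ (hdpos j).ne'
    rw [h2, Matrix.diagonal_one]
  have hAinv : A⁻¹ = Matrix.diagonal (fun j => (d j)⁻¹) * (1 - B)⁻¹ := by
    rw [hAfact, Matrix.mul_inv_rev, hDinv]
  intro i j
  rw [hAinv, Matrix.diagonal_mul]
  exact mul_nonneg (inv_nonneg.mpr (hdpos i).le) (rcmc_neumann B hBnn hBcs hdetB i j)

lemma rcmc_ones_vecMul {m o : Type*} [Fintype m] (A : Matrix m o ℝ) (j : o) :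
    ((fun _ => (1 : ℝ)) ᵥ* A) j = ∑ i, A i j := by
  simp [Matrix.vecMul, dotProduct]


/-- Assemble an `n × n` matrix from four blocks indexed by a set `S` and its complement. -/
def rcmcAssemble {n : ℕ} (S : Finset (Fin n))
    (ASS : Matrix ↥S ↥S ℝ) (AST : Matrix ↥S ↥(Sᶜ) ℝ)
    (ATS : Matrix ↥(Sᶜ) ↥S ℝ) (ATT : Matrix ↥(Sᶜ) ↥(Sᶜ) ℝ) :
    Matrix (Fin n) (Fin n) ℝ := fun i j =>
  if hi : i ∈ S then
    if hj : j ∈ S then ASS ⟨i, hi⟩ ⟨j, hj⟩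
    else AST ⟨i, hi⟩ ⟨j, Finset.mem_compl.mpr hj⟩
  else
    if hj : j ∈ S then ATS ⟨i, Finset.mem_compl.mpr hi⟩ ⟨j, hj⟩
    else ATT ⟨i, Finset.mem_compl.mpr hi⟩ ⟨j, Finset.mem_compl.mpr hj⟩

/-- The Type-A matrix `V` (with `V_TT = diag(1_Tᵀ M)⁻¹`,
`M = I_T + K_TS K_SS⁻² K_ST`) maps the probability simplex into itself. -/
theorem rcmc_stmt9 (n : ℕ) (K : Matrix (Fin n) (Fin n) ℝ) (π : Fin n → ℝ)
    (hoff : ∀ i j, i ≠ j → 0 ≤ K i j)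
    (hcol : ∀ j, ∑ i, K i j = 0)
    (hπpos : ∀ i, 0 < π i) (hπsum : ∑ i, π i = 1)
    (hdb : K * Matrix.diagonal π = Matrix.diagonal π * Kᵀ)
    (S : Finset (Fin n))
    (hinv : IsUnit (K.submatrix ((↑) : ↥S → Fin n) ((↑) : ↥S → Fin n)).det) :
    let KSS := K.submatrix ((↑) : ↥S → Fin n) ((↑) : ↥S → Fin n)
    let KST := K.submatrix ((↑) : ↥S → Fin n) ((↑) : ↥(Sᶜ) → Fin n)
    let KTS := K.submatrix ((↑) : ↥(Sᶜ) → Fin n) ((↑) : ↥S → Fin n)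
    let M := 1 + KTS * KSS⁻¹ * KSS⁻¹ * KST
    let VTT := (Matrix.diagonal (fun j : ↥(Sᶜ) => ∑ i : ↥(Sᶜ), M i j))⁻¹
    let V := rcmcAssemble S (KSS⁻¹ * KST * VTT * KTS * KSS⁻¹)
      (-(KSS⁻¹ * KST * VTT)) (-(VTT * KTS * KSS⁻¹)) VTT
    ∀ p : Fin n → ℝ, (∀ i, 0 ≤ p i) → ∑ i, p i = 1 →
      (∀ i, 0 ≤ V.mulVec p i) ∧ ∑ i, V.mulVec p i = 1 := by
  intro KSS KST KTS M VTT V p hp hps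
  classical
  have hMdef : M = 1 + KTS * KSS⁻¹ * KSS⁻¹ * KST := rfl
  have hVTTdef : VTT = (Matrix.diagonal (fun j : ↥(Sᶜ) => ∑ i : ↥(Sᶜ), M i j))⁻¹ := rfl
  have hVdef : V = rcmcAssemble S (KSS⁻¹ * KST * VTT * KTS * KSS⁻¹)
      (-(KSS⁻¹ * KST * VTT)) (-(VTT * KTS * KSS⁻¹)) VTT := rfl
  -- sign facts on blocks of K
  have hKSTnn : ∀ (i : ↥S) (j : ↥(Sᶜ)), 0 ≤ KST i j := by
    intro i j
    refine hoff _ _ (fun h => ?_)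
    exact absurd (h ▸ i.2) (Finset.mem_compl.mp j.2)
  have hKTSnn : ∀ (i : ↥(Sᶜ)) (j : ↥S), 0 ≤ KTS i j := by
    intro i j
    refine hoff _ _ (fun h => ?_)
    exact absurd (h.symm ▸ j.2) (Finset.mem_compl.mp i.2)
  have hcolS : ∀ j : ↥S, ∑ i : ↥S, KSS i j ≤ 0 := by
    intro j
    have h0 := hcol (j : Fin n)
    rw [← Finset.sum_add_sum_compl S (fun i => K i (j : Fin n))] at h0
    have h1 : (0:ℝ) ≤ ∑ i ∈ Sᶜ, K i (j : Fin n) := by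
      apply Finset.sum_nonneg
      intro i hi
      refine hoff _ _ (fun h => ?_)
      exact absurd (h.symm ▸ j.2) (Finset.mem_compl.mp hi)
    have h2 : ∑ i : ↥S, KSS i j = ∑ i ∈ S, K i (j : Fin n) :=
      Finset.sum_coe_sort S (fun i => K i (j : Fin n))
    linarith
  -- K_SS⁻¹ is entrywise nonpositive
  have hnegdet : IsUnit (-KSS).det := by
    rw [Matrix.det_neg]
    exact (isUnit_one.neg.pow _).mul hinv
  have hKSSinv : KSS * KSS⁻¹ = 1 := Matrix.mul_nonsing_inv _ hinv
  have hneginv : (-KSS)⁻¹ = -(KSS⁻¹) := by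
    apply Matrix.inv_eq_right_inv
    rw [Matrix.neg_mul, Matrix.mul_neg, neg_neg, hKSSinv]
  have hKinv_np : ∀ i j, KSS⁻¹ i j ≤ 0 := by
    intro i j
    have h := rcmc_Zinv (-KSS)
      (fun i j hij => by
        simp only [Matrix.neg_apply, neg_nonpos]
        exact hoff _ _ (fun h => hij (Subtype.ext h)))
      (fun j => by
        have := hcolS j
        simp only [Matrix.neg_apply, Finset.sum_neg_distrib]
        linarith)
      hnegdet i j
    rw [hneginv] at h
    simpa using h
  have hPnn : ∀ i j, 0 ≤ (-(KSS⁻¹ * KST)) i j := by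
    have h : -(KSS⁻¹ * KST) = (-(KSS⁻¹)) * KST := by rw [Matrix.neg_mul]
    rw [h]
    exact rcmc_mul_nonneg _ _ (fun i j => by simpa using hKinv_np i j) hKSTnn
  have hQnn : ∀ i j, 0 ≤ (-(KTS * KSS⁻¹)) i j := by
    have h : -(KTS * KSS⁻¹) = KTS * (-(KSS⁻¹)) := by rw [Matrix.mul_neg]
    rw [h]
    exact rcmc_mul_nonneg _ _ hKTSnn (fun i j => by simpa using hKinv_np i j)
  have hGnn : ∀ i j, 0 ≤ (KTS * KSS⁻¹ * KSS⁻¹ * KST) i j := by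
    have h : KTS * KSS⁻¹ * KSS⁻¹ * KST = (-(KTS * KSS⁻¹)) * (-(KSS⁻¹ * KST)) := by
      simp only [Matrix.neg_mul, Matrix.mul_neg, neg_neg, Matrix.mul_assoc]
    rw [h]
    exact rcmc_mul_nonneg _ _ hQnn hPnn
  -- column sums of M are positive
  have hd'pos : ∀ j : ↥(Sᶜ), 0 < ∑ i, M i j := by
    intro j
    have h1 : ∑ i, M i j = 1 + ∑ i, (KTS * KSS⁻¹ * KSS⁻¹ * KST) i j := by
      rw [hMdef]
      simp [Matrix.add_apply, Finset.sum_add_distrib, Matrix.one_apply, Finset.sum_ite_eq]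
    rw [h1]
    have h2 : (0:ℝ) ≤ ∑ i, (KTS * KSS⁻¹ * KSS⁻¹ * KST) i j :=
      Finset.sum_nonneg fun i _ => hGnn i j
    linarith
  have hVTT : VTT = Matrix.diagonal (fun j : ↥(Sᶜ) => (∑ i, M i j)⁻¹) := by
    rw [hVTTdef]
    apply Matrix.inv_eq_right_inv
    rw [Matrix.diagonal_mul_diagonal]
    have h2 : (fun j : ↥(Sᶜ) => (∑ i, M i j) * (∑ i, M i j)⁻¹) = fun _ => (1:ℝ) :=
      funext fun j => mul_inv_cancel₀ (hd'pos j).ne'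
    rw [h2, Matrix.diagonal_one]
  have hVTTnn : ∀ i j, 0 ≤ VTT i j := by
    intro i j
    rw [hVTT, Matrix.diagonal_apply]
    split
    · exact inv_nonneg.mpr (hd'pos i).le
    · exact le_refl 0
  -- nonnegativity of the blocks of V
  have hVSSnn : ∀ i j, 0 ≤ (KSS⁻¹ * KST * VTT * KTS * KSS⁻¹) i j := by
    have h : KSS⁻¹ * KST * VTT * KTS * KSS⁻¹
        = ((-(KSS⁻¹ * KST)) * VTT) * (-(KTS * KSS⁻¹)) := by
      simp only [Matrix.neg_mul, Matrix.mul_neg, neg_neg, Matrix.mul_assoc]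
    rw [h]
    exact rcmc_mul_nonneg _ _ (rcmc_mul_nonneg _ _ hPnn hVTTnn) hQnn
  have hVSTnn : ∀ i j, 0 ≤ (-(KSS⁻¹ * KST * VTT)) i j := by
    have h : -(KSS⁻¹ * KST * VTT) = (-(KSS⁻¹ * KST)) * VTT := by
      simp only [Matrix.neg_mul]
    rw [h]
    exact rcmc_mul_nonneg _ _ hPnn hVTTnn
  have hVTSnn : ∀ i j, 0 ≤ (-(VTT * KTS * KSS⁻¹)) i j := by
    have h : -(VTT * KTS * KSS⁻¹) = VTT * (-(KTS * KSS⁻¹)) := by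
      simp only [Matrix.mul_neg, Matrix.mul_assoc]
    rw [h]
    exact rcmc_mul_nonneg _ _ hVTTnn hQnn
  have hVnn : ∀ i j, 0 ≤ V i j := by
    intro i j
    rw [hVdef]
    unfold rcmcAssemble
    by_cases hi : i ∈ S <;> by_cases hj : j ∈ S
    · rw [dif_pos hi, dif_pos hj]; exact hVSSnn _ _
    · rw [dif_pos hi, dif_neg hj]; exact hVSTnn _ _
    · rw [dif_neg hi, dif_pos hj]; exact hVTSnn _ _
    · rw [dif_neg hi, dif_neg hj]; exact hVTTnn _ _
  -- vector identities for column sums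
  have hw : ((fun _ => (1:ℝ)) ᵥ* KTS) = -((fun _ => (1:ℝ)) ᵥ* KSS) := by
    funext j
    have h0 := hcol (j : Fin n)
    rw [← Finset.sum_add_sum_compl S (fun i => K i (j : Fin n))] at h0
    rw [rcmc_ones_vecMul, Pi.neg_apply, rcmc_ones_vecMul]
    have h1 : ∑ i : ↥(Sᶜ), KTS i j = ∑ i ∈ Sᶜ, K i (j : Fin n) :=
      Finset.sum_coe_sort Sᶜ (fun i => K i (j : Fin n))
    have h2 : ∑ i : ↥S, KSS i j = ∑ i ∈ S, K i (j : Fin n) :=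
      Finset.sum_coe_sort S (fun i => K i (j : Fin n))
    rw [h1, h2]
    linarith
  have hwinv : (((fun _ => (1:ℝ)) ᵥ* KTS) ᵥ* KSS⁻¹) = -(fun _ => (1:ℝ)) := by
    rw [hw, Matrix.neg_vecMul, Matrix.vecMul_vecMul, hKSSinv, Matrix.vecMul_one]
  have hkey : ((fun _ => (1:ℝ)) ᵥ* (KTS * KSS⁻¹ * KSS⁻¹ * KST))
      = -((fun _ => (1:ℝ)) ᵥ* (KSS⁻¹ * KST)) := by
    calc ((fun _ => (1:ℝ)) ᵥ* (KTS * KSS⁻¹ * KSS⁻¹ * KST))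
        = ((((fun _ => (1:ℝ)) ᵥ* KTS) ᵥ* KSS⁻¹) ᵥ* KSS⁻¹) ᵥ* KST := by
          rw [Matrix.vecMul_vecMul, Matrix.vecMul_vecMul, Matrix.vecMul_vecMul]
          simp only [Matrix.mul_assoc]
      _ = ((-(fun _ => (1:ℝ))) ᵥ* KSS⁻¹) ᵥ* KST := by rw [hwinv]
      _ = -((fun _ => (1:ℝ)) ᵥ* (KSS⁻¹ * KST)) := by
          rw [Matrix.neg_vecMul, Matrix.neg_vecMul, Matrix.vecMul_vecMul]
  have hdT : ((fun _ => (1:ℝ)) ᵥ* M)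
      = (fun _ => (1:ℝ)) - (fun _ => (1:ℝ)) ᵥ* (KSS⁻¹ * KST) := by
    rw [hMdef, Matrix.vecMul_add, Matrix.vecMul_one, hkey, sub_eq_add_neg]
  have hdvec : ((fun _ => (1:ℝ)) ᵥ* M) = fun j => ∑ i, M i j :=
    funext fun j => rcmc_ones_vecMul M j
  have hdVTT : (((fun _ => (1:ℝ)) ᵥ* M) ᵥ* VTT) = fun _ => (1:ℝ) := by
    funext j
    rw [hVTT, Matrix.vecMul_diagonal]
    rw [hdvec]
    exact mul_inv_cancel₀ (hd'pos j).ne'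
  have hu_eq : ((fun _ => (1:ℝ)) ᵥ* (KSS⁻¹ * KST))
      = (fun _ => (1:ℝ)) - ((fun _ => (1:ℝ)) ᵥ* M) := by
    rw [hdT]; abel
  -- column sums of V are 1
  have hcolV : ∀ j, ∑ i, V i j = 1 := by
    intro j
    rw [← Finset.sum_add_sum_compl S (fun i => V i j)]
    by_cases hj : j ∈ S
    · have hVS : ∀ i : ↥S, V (i : Fin n) j
          = (KSS⁻¹ * KST * VTT * KTS * KSS⁻¹) i ⟨j, hj⟩ := by
        intro i
        rw [hVdef]
        unfold rcmcAssemble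
        rw [dif_pos i.2, dif_pos hj]
      have hVT : ∀ i : ↥(Sᶜ), V (i : Fin n) j
          = (-(VTT * KTS * KSS⁻¹)) i ⟨j, hj⟩ := by
        intro i
        rw [hVdef]
        unfold rcmcAssemble
        rw [dif_neg (Finset.mem_compl.mp i.2), dif_pos hj]
      have h1 : ∑ i ∈ S, V i j
          = ((fun _ => (1:ℝ)) ᵥ* (KSS⁻¹ * KST * VTT * KTS * KSS⁻¹)) ⟨j, hj⟩ := by
        rw [rcmc_ones_vecMul, ← Finset.sum_coe_sort S (fun i => V i j)]
        exact Finset.sum_congr rfl fun i _ => hVS i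
      have h2 : ∑ i ∈ Sᶜ, V i j
          = ((fun _ => (1:ℝ)) ᵥ* (-(VTT * KTS * KSS⁻¹))) ⟨j, hj⟩ := by
        rw [rcmc_ones_vecMul, ← Finset.sum_coe_sort Sᶜ (fun i => V i j)]
        exact Finset.sum_congr rfl fun i _ => hVT i
      have hvec : ((fun _ => (1:ℝ)) ᵥ* (KSS⁻¹ * KST * VTT * KTS * KSS⁻¹))
          + ((fun _ => (1:ℝ)) ᵥ* (-(VTT * KTS * KSS⁻¹))) = fun _ => (1:ℝ) := by
        have e1 : ((fun _ => (1:ℝ)) ᵥ* (KSS⁻¹ * KST * VTT * KTS * KSS⁻¹))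
            = (((((fun _ => (1:ℝ)) ᵥ* (KSS⁻¹ * KST)) ᵥ* VTT) ᵥ* KTS) ᵥ* KSS⁻¹) := by
          rw [Matrix.vecMul_vecMul, Matrix.vecMul_vecMul, Matrix.vecMul_vecMul]
          simp only [Matrix.mul_assoc]
        have e2 : ((fun _ => (1:ℝ)) ᵥ* (-(VTT * KTS * KSS⁻¹)))
            = -(((((fun _ => (1:ℝ)) ᵥ* VTT) ᵥ* KTS) ᵥ* KSS⁻¹)) := by
          rw [Matrix.vecMul_neg, Matrix.vecMul_vecMul, Matrix.vecMul_vecMul]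
          simp only [Matrix.mul_assoc]
        rw [e1, e2, hu_eq]
        rw [Matrix.sub_vecMul, Matrix.sub_vecMul, Matrix.sub_vecMul]
        have e3 : ((((fun _ => (1:ℝ)) ᵥ* M) ᵥ* VTT) ᵥ* KTS) ᵥ* KSS⁻¹
            = -(fun _ => (1:ℝ)) := by
          rw [hdVTT]
          exact hwinv
        rw [e3]
        abel
      rw [h1, h2, ← Pi.add_apply, hvec]
    · have hj' : j ∈ Sᶜ := Finset.mem_compl.mpr hj
      have hVS : ∀ i : ↥S, V (i : Fin n) j
          = (-(KSS⁻¹ * KST * VTT)) i ⟨j, hj'⟩ := by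
        intro i
        rw [hVdef]
        unfold rcmcAssemble
        rw [dif_pos i.2, dif_neg hj]
      have hVT : ∀ i : ↥(Sᶜ), V (i : Fin n) j = VTT i ⟨j, hj'⟩ := by
        intro i
        rw [hVdef]
        unfold rcmcAssemble
        rw [dif_neg (Finset.mem_compl.mp i.2), dif_neg hj]
      have h1 : ∑ i ∈ S, V i j
          = ((fun _ => (1:ℝ)) ᵥ* (-(KSS⁻¹ * KST * VTT))) ⟨j, hj'⟩ := by
        rw [rcmc_ones_vecMul, ← Finset.sum_coe_sort S (fun i => V i j)]
        exact Finset.sum_congr rfl fun i _ => hVS i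
      have h2 : ∑ i ∈ Sᶜ, V i j = ((fun _ => (1:ℝ)) ᵥ* VTT) ⟨j, hj'⟩ := by
        rw [rcmc_ones_vecMul, ← Finset.sum_coe_sort Sᶜ (fun i => V i j)]
        exact Finset.sum_congr rfl fun i _ => hVT i
      have hvec : ((fun _ => (1:ℝ)) ᵥ* (-(KSS⁻¹ * KST * VTT)))
          + ((fun _ => (1:ℝ)) ᵥ* VTT) = fun _ => (1:ℝ) := by
        have e1 : ((fun _ => (1:ℝ)) ᵥ* (-(KSS⁻¹ * KST * VTT)))
            = -(((fun _ => (1:ℝ)) ᵥ* (KSS⁻¹ * KST)) ᵥ* VTT) := by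
          rw [Matrix.vecMul_neg, Matrix.vecMul_vecMul]
        rw [e1, hu_eq, Matrix.sub_vecMul]
        rw [hdVTT]
        abel
      rw [h1, h2, ← Pi.add_apply, hvec]
  refine ⟨fun i => ?_, ?_⟩
  · have h : (V *ᵥ p) i = ∑ j, V i j * p j := by
      simp [Matrix.mulVec, dotProduct]
    rw [h]
    exact Finset.sum_nonneg fun j _ => mul_nonneg (hVnn i j) (hp j)
  · calc ∑ i, V.mulVec p i = ∑ i, ∑ j, V i j * p j := by
          simp [Matrix.mulVec, dotProduct]
      _ = ∑ j, (∑ i, V i j) * p j := by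
          rw [Finset.sum_comm]
          simp_rw [Finset.sum_mul]
      _ = ∑ j, p j := by simp_rw [hcolV]; simp
      _ = 1 := hps
end

section
/- Let M = I_T + K_{TS}K_{SS}⁻²K_{ST}. Then I_T ⪯ M in the π-Löwner order, and for both choices V_{TT} = diag(1_TᵀM)⁻¹ (Type A) and V_{TT} = M⁻¹ (Type B), M ⪯ V_{TT}⁻¹ holds, i.e., V_{TT}⁻¹ − M is positive semi-definite with respect to the π_T-inner product. -/
open Matrix BigOperators

lemma quad_swap {m : Type*} [Fintype m] (W : Matrix m m ℝ)
    (hsym : ∀ i j, W i j = W j i) (x : m → ℝ) :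
    ∑ i, ∑ j, W i j * x i ^ 2 = ∑ i, ∑ j, W i j * x j ^ 2 := by
  rw [Finset.sum_comm]
  exact Finset.sum_congr rfl fun i _ => Finset.sum_congr rfl fun j _ => by rw [hsym]

lemma quad_ineq {m : Type*} [Fintype m] (W : Matrix m m ℝ)
    (hsym : ∀ i j, W i j = W j i) (hnn : ∀ i j, 0 ≤ W i j) (x : m → ℝ) :
    ∑ i, ∑ j, x i * W i j * x j ≤ ∑ i, ∑ j, W i j * x j ^ 2 := by
  have key : ∑ i, ∑ j, W i j * (x i - x j) ^ 2
      = ∑ i, ∑ j, (W i j * x i ^ 2 + W i j * x j ^ 2 - 2 * (x i * W i j * x j)) :=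
    Finset.sum_congr rfl fun i _ => Finset.sum_congr rfl fun j _ => by ring
  simp only [Finset.sum_add_distrib, Finset.sum_sub_distrib, ← Finset.mul_sum] at key
  have hnneg : 0 ≤ ∑ i, ∑ j, W i j * (x i - x j) ^ 2 :=
    Finset.sum_nonneg fun i _ => Finset.sum_nonneg fun j _ =>
      mul_nonneg (hnn i j) (sq_nonneg _)
  have hs := quad_swap W hsym x
  linarith

lemma quad_nonpos {m : Type*} [Fintype m] [DecidableEq m] (W : Matrix m m ℝ)
    (hsym : ∀ i j, W i j = W j i) (hoffnn : ∀ i j, i ≠ j → 0 ≤ W i j)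
    (hcol : ∀ j, ∑ i, W i j ≤ 0) (x : m → ℝ) :
    ∑ i, ∑ j, x i * W i j * x j ≤ 0 := by
  classical
  let W0 : Matrix m m ℝ := fun i j => if i = j then 0 else W i j
  have hW0sym : ∀ i j, W0 i j = W0 j i := by
    intro i j
    by_cases h : i = j
    · subst h; rfl
    · show (if i = j then _ else _) = (if j = i then _ else _)
      rw [if_neg h, if_neg (Ne.symm h), hsym]
  have hW0nn : ∀ i j, 0 ≤ W0 i j := by
    intro i j
    by_cases h : i = j
    · show (0:ℝ) ≤ if i = j then 0 else W i j
      rw [if_pos h]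
    · show (0:ℝ) ≤ if i = j then 0 else W i j
      rw [if_neg h]; exact hoffnn i j h
  have hsplit : ∀ i, ∑ j, x i * W i j * x j
      = (∑ j, x i * W0 i j * x j) + x i * W i i * x i := by
    intro i
    rw [Finset.sum_eq_sum_sdiff_singleton_add (Finset.mem_univ i)
      (fun j => x i * W i j * x j)]
    rw [Finset.sum_eq_sum_sdiff_singleton_add (Finset.mem_univ i)
      (fun j => x i * W0 i j * x j)]
    have h0 : W0 i i = 0 := if_pos rfl
    rw [h0]
    have : ∀ j ∈ Finset.univ \ {i}, x i * W0 i j * x j = x i * W i j * x j := by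
      intro j hj
      rw [Finset.mem_sdiff, Finset.mem_singleton] at hj
      have hne : i ≠ j := fun h => hj.2 h.symm
      show x i * (if i = j then 0 else W i j) * x j = _
      rw [if_neg hne]
    rw [Finset.sum_congr rfl this]
    ring
  have hW0col : ∀ j, ∑ i, W0 i j = (∑ i, W i j) - W j j := by
    intro j
    rw [Finset.sum_eq_sum_sdiff_singleton_add (Finset.mem_univ j) (fun i => W0 i j)]
    rw [Finset.sum_eq_sum_sdiff_singleton_add (Finset.mem_univ j) (fun i => W i j)]
    have h0 : W0 j j = 0 := if_pos rfl
    rw [h0]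
    have : ∀ i ∈ Finset.univ \ {j}, W0 i j = W i j := by
      intro i hi
      rw [Finset.mem_sdiff, Finset.mem_singleton] at hi
      show (if i = j then 0 else W i j) = W i j
      rw [if_neg hi.2]
    rw [Finset.sum_congr rfl this]
    ring
  have h1 : ∑ i, ∑ j, x i * W0 i j * x j ≤ ∑ i, ∑ j, W0 i j * x j ^ 2 :=
    quad_ineq W0 hW0sym hW0nn x
  have h2 : ∑ i, ∑ j, W0 i j * x j ^ 2 = ∑ j, ((∑ i, W i j) - W j j) * x j ^ 2 := by
    rw [Finset.sum_comm]
    exact Finset.sum_congr rfl fun j _ => by rw [← Finset.sum_mul, hW0col]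
  have h3 : ∑ i, ∑ j, x i * W i j * x j
      = (∑ i, ∑ j, x i * W0 i j * x j) + ∑ i, x i * W i i * x i := by
    rw [← Finset.sum_add_distrib]
    exact Finset.sum_congr rfl fun i _ => hsplit i
  have h4 : ∑ j, ((∑ i, W i j) - W j j) * x j ^ 2 + ∑ j, x j * W j j * x j
      = ∑ j, (∑ i, W i j) * x j ^ 2 := by
    rw [← Finset.sum_add_distrib]
    exact Finset.sum_congr rfl fun j _ => by ring
  have h5 : ∑ j, (∑ i, W i j) * x j ^ 2 ≤ 0 :=
    Finset.sum_nonpos fun j _ => mul_nonpos_of_nonpos_of_nonneg (hcol j) (sq_nonneg _)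
  linarith

lemma scalar_aux (a b : ℝ) (h : ∀ t : ℝ, 2 * (a * t) + b * t ^ 2 ≤ 0) : a = 0 := by
  have hD : (0:ℝ) < b ^ 2 + 1 := by positivity
  have h1 := h (a / (b ^ 2 + 1))
  have h2 : 2 * (a * (a / (b ^ 2 + 1))) + b * (a / (b ^ 2 + 1)) ^ 2
      = a ^ 2 * (2 * (b^2+1) + b) / (b^2+1)^2 := by field_simp
  rw [h2] at h1
  rw [div_nonpos_iff] at h1
  have hden : (0:ℝ) < (b^2+1)^2 := by positivity
  have hnum : a ^ 2 * (2 * (b^2+1) + b) ≤ 0 := by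
    rcases h1 with ⟨ha, hb⟩ | ⟨ha, hb⟩
    · linarith
    · exact ha
  nlinarith [sq_nonneg a, sq_nonneg (b+1), sq_nonneg b]

lemma mulVec_zero_of_quad_zero {m : Type*} [Fintype m] [DecidableEq m] (W : Matrix m m ℝ)
    (hsym : ∀ i j, W i j = W j i)
    (hq : ∀ x : m → ℝ, ∑ i, ∑ j, x i * W i j * x j ≤ 0)
    (z : m → ℝ) (hz : ∑ i, ∑ j, z i * W i j * z j = 0) :
    W.mulVec z = 0 := by
  classical
  funext k
  have hrow : ∑ j, W k j * z j = W.mulVec z k := by simp [mulVec, dotProduct]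
  have key : ∀ t : ℝ, 2 * ((W.mulVec z k) * t) + W k k * t ^ 2 ≤ 0 := by
    intro t
    set v : m → ℝ := fun i => z i + (if i = k then t else 0) with hv
    have hterm : ∀ i j, v i * W i j * v j
        = z i * W i j * z j + (if i = k then t * (W k j * z j) else 0)
          + (if j = k then t * (z i * W i k) else 0)
          + (if i = k then (if j = k then t ^ 2 * W k k else 0) else 0) := by
      intro i j
      by_cases hi : i = k <;> by_cases hj : j = k
      · subst hi; subst hj; simp only [hv, if_pos rfl]; simp; ring
      · subst hi; simp [hv, hj]; ring
      · subst hj; simp [hv, hi]; ring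
      · simp [hv, hi, hj]
    have hsum : ∑ i, ∑ j, v i * W i j * v j
        = (∑ i, ∑ j, z i * W i j * z j)
          + t * (∑ j, W k j * z j) + t * (∑ i, z i * W i k) + t ^ 2 * W k k := by
      have inner : ∀ i, ∑ j, v i * W i j * v j
          = (∑ j, z i * W i j * z j)
            + (if i = k then t * ∑ j, W k j * z j else 0)
            + t * (z i * W i k)
            + (if i = k then t ^ 2 * W k k else 0) := by
        intro i
        rw [Finset.sum_congr rfl fun j _ => hterm i j]
        rw [Finset.sum_add_distrib, Finset.sum_add_distrib, Finset.sum_add_distrib]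
        congr 1
        · congr 1
          · congr 1
            by_cases hi : i = k
            · simp only [if_pos hi, ← Finset.mul_sum]
            · simp only [if_neg hi, Finset.sum_const_zero]
          · rw [Finset.sum_ite_eq' Finset.univ k (fun j => t * (z i * W i k))]
            simp
        · by_cases hi : i = k
          · simp only [if_pos hi]
            rw [Finset.sum_ite_eq' Finset.univ k (fun j => t ^ 2 * W k k)]
            simp
          · simp only [if_neg hi, Finset.sum_const_zero]
      rw [Finset.sum_congr rfl fun i _ => inner i]
      rw [Finset.sum_add_distrib, Finset.sum_add_distrib, Finset.sum_add_distrib]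
      rw [Finset.sum_ite_eq' Finset.univ k (fun i => t * ∑ j, W k j * z j)]
      rw [Finset.sum_ite_eq' Finset.univ k (fun i => t ^ 2 * W k k)]
      simp only [Finset.mem_univ, if_pos, ← Finset.mul_sum]
      try ring
    have hq' := hq v
    rw [hsum, hz] at hq'
    have hcolv : ∑ i, z i * W i k = ∑ j, W k j * z j :=
      Finset.sum_congr rfl fun i _ => by rw [hsym]; ring
    rw [hcolv, hrow] at hq'
    linarith
  have := scalar_aux (W.mulVec z k) (W k k) key
  simpa using this


lemma kssinv_nonpos (n : ℕ) (K : Matrix (Fin n) (Fin n) ℝ) (π : Fin n → ℝ)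
    (hoff : ∀ i j, i ≠ j → 0 ≤ K i j)
    (hcol : ∀ j, ∑ i, K i j = 0)
    (hπpos : ∀ i, 0 < π i)
    (hdb : ∀ i j, K i j * π j = π i * K j i)
    (S : Finset (Fin n))
    (hinv : IsUnit (K.submatrix ((↑) : ↥S → Fin n) ((↑) : ↥S → Fin n)).det) :
    ∀ i j, (K.submatrix ((↑) : ↥S → Fin n) ((↑) : ↥S → Fin n))⁻¹ i j ≤ 0 := by
  classical
  set KSS := K.submatrix ((↑) : ↥S → Fin n) ((↑) : ↥S → Fin n) with hKSS
  set W : Matrix ↥S ↥S ℝ := fun i j => K i j * π j with hW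
  have hWsym : ∀ i j : ↥S, W i j = W j i := by
    intro i j
    show K (i:Fin n) j * π j = K (j:Fin n) i * π i
    rw [hdb]; ring
  have hWoff : ∀ i j : ↥S, i ≠ j → 0 ≤ W i j := by
    intro i j hij
    have : (i : Fin n) ≠ (j : Fin n) := fun h => hij (Subtype.coe_injective h)
    exact mul_nonneg (hoff _ _ this) (hπpos _).le
  have hWcol : ∀ j : ↥S, ∑ i : ↥S, W i j ≤ 0 := by
    intro j
    have hsplit : ∑ i ∈ S, K i (j:Fin n) + ∑ i ∈ Sᶜ, K i (j:Fin n) = 0 := by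
      rw [Finset.sum_add_sum_compl]; exact hcol _
    have hcompl : 0 ≤ ∑ i ∈ Sᶜ, K i (j:Fin n) := by
      refine Finset.sum_nonneg fun i hi => ?_
      refine hoff _ _ fun h => ?_
      rw [Finset.mem_compl] at hi
      exact hi (h ▸ j.2)
    have hS : ∑ i ∈ S, K i (j:Fin n) ≤ 0 := by linarith
    have : ∑ i : ↥S, W i j = (∑ i ∈ S, K i (j:Fin n)) * π j := by
      rw [Finset.sum_mul, ← Finset.sum_coe_sort S (fun i => K i (j:Fin n) * π (j:Fin n))]
    rw [this]
    exact mul_nonpos_of_nonpos_of_nonneg hS (hπpos _).le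
  have hWdet : W.det ≠ 0 := by
    have hWeq : W = KSS * Matrix.diagonal (fun i : ↥S => π i) := by
      ext i j
      rw [Matrix.mul_diagonal]
      rfl
    rw [hWeq, Matrix.det_mul, Matrix.det_diagonal]
    refine mul_ne_zero (hinv.ne_zero) (Finset.prod_ne_zero_iff.mpr fun i _ => (hπpos _).ne')
  have hq := quad_nonpos W hWsym hWoff hWcol
  intro i0 j
  -- column of the inverse
  set c : ↥S → ℝ := fun i => KSS⁻¹ i j with hc
  have hKc : KSS.mulVec c = Pi.single j 1 := by
    have : c = KSS⁻¹.mulVec (Pi.single j 1) := by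
      funext i; rw [Matrix.mulVec_single]; simp [hc]
    rw [this, Matrix.mulVec_mulVec, Matrix.mul_nonsing_inv _ hinv, Matrix.one_mulVec]
  set u : ↥S → ℝ := fun i => c i / π i with hu
  have hWu : W.mulVec u = Pi.single j 1 := by
    rw [← hKc]
    funext i
    show ∑ k, W i k * u k = ∑ k, KSS i k * c k
    refine Finset.sum_congr rfl fun k _ => ?_
    show K (i:Fin n) k * π k * (c k / π k) = K (i:Fin n) k * c k
    field_simp [(hπpos (k:Fin n)).ne']
  set z : ↥S → ℝ := fun i => max (u i) 0 with hz
  set y : ↥S → ℝ := fun i => z i - u i with hy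
  have hznn : ∀ i, 0 ≤ z i := fun i => le_max_right _ _
  have hynn : ∀ i, 0 ≤ y i := fun i => by simp [hy, hz]
  have hzy : ∀ i, z i * y i = 0 := by
    intro i
    rcases le_or_gt 0 (u i) with h | h
    · have : y i = 0 := by simp [hy, hz, max_eq_left h]
      rw [this, mul_zero]
    · have : z i = 0 := by simp [hz, max_eq_right h.le]
      rw [this, zero_mul]
  have hzWu : ∑ i, ∑ k, z i * W i k * u k = z j := by
    have : ∀ i, ∑ k, z i * W i k * u k = z i * (W.mulVec u) i := by
      intro i; rw [mulVec, dotProduct, Finset.mul_sum]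
      exact Finset.sum_congr rfl fun k _ => by ring
    rw [Finset.sum_congr rfl fun i _ => this i, hWu]
    simp [Pi.single_apply]
  have hzWy : 0 ≤ ∑ i, ∑ k, z i * W i k * y k := by
    refine Finset.sum_nonneg fun i _ => Finset.sum_nonneg fun k _ => ?_
    by_cases h : i = k
    · subst h
      have : z i * W i i * y i = W i i * (z i * y i) := by ring
      rw [this, hzy, mul_zero]
    · exact mul_nonneg (mul_nonneg (hznn i) (hWoff i k h)) (hynn k)
  have hqz_eq : ∑ i, ∑ k, z i * W i k * z k
      = (∑ i, ∑ k, z i * W i k * u k) + ∑ i, ∑ k, z i * W i k * y k := by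
    rw [← Finset.sum_add_distrib]
    refine Finset.sum_congr rfl fun i _ => ?_
    rw [← Finset.sum_add_distrib]
    refine Finset.sum_congr rfl fun k _ => ?_
    have : z k = u k + y k := by simp [hy]
    rw [this]; ring
  have hqz_zero : ∑ i, ∑ k, z i * W i k * z k = 0 := by
    have h1 := hq z
    have h2 : 0 ≤ ∑ i, ∑ k, z i * W i k * z k := by
      rw [hqz_eq, hzWu]
      have := hznn j
      linarith
    linarith
  have hWz : W.mulVec z = 0 := mulVec_zero_of_quad_zero W hWsym hq z hqz_zero
  have hz0 : z = 0 := by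
    by_contra hne
    exact hWdet ((Matrix.exists_mulVec_eq_zero_iff).mp ⟨z, hne, hWz⟩)
  have hu0 : ∀ i, u i ≤ 0 := by
    intro i
    have : max (u i) 0 = 0 := congr_fun hz0 i
    rcases le_or_gt (u i) 0 with h | h
    · exact h
    · rw [max_eq_left h.le] at this; linarith
  have hci : c i0 ≤ 0 := by
    have h : c i0 / π (i0 : Fin n) ≤ 0 := hu0 i0
    have hπ := hπpos (i0 : Fin n)
    rcases div_nonpos_iff.mp h with ⟨h1, h2⟩ | ⟨h1, h2⟩
    · linarith
    · exact h1
  exact hci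

/-- With `M = I_T + K_TS K_SS⁻² K_ST`, we have `I_T ⪯ M` in the `π_T`-Löwner
order, and for both `V_TT = diag(1_Tᵀ M)⁻¹` (Type A) and `V_TT = M⁻¹` (Type B),
`M ⪯ V_TT⁻¹`, i.e. `V_TT⁻¹ − M` is positive semi-definite w.r.t. the `π_T`-inner product. -/
theorem rcmc_stmt10 (n : ℕ) (K : Matrix (Fin n) (Fin n) ℝ) (π : Fin n → ℝ)
    (hoff : ∀ i j, i ≠ j → 0 ≤ K i j)
    (hcol : ∀ j, ∑ i, K i j = 0)
    (hπpos : ∀ i, 0 < π i) (hπsum : ∑ i, π i = 1)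
    (hdb : K * Matrix.diagonal π = Matrix.diagonal π * Kᵀ)
    (S : Finset (Fin n))
    (hinv : IsUnit (K.submatrix ((↑) : ↥S → Fin n) ((↑) : ↥S → Fin n)).det) :
    let KSS := K.submatrix ((↑) : ↥S → Fin n) ((↑) : ↥S → Fin n)
    let KST := K.submatrix ((↑) : ↥S → Fin n) ((↑) : ↥(Sᶜ) → Fin n)
    let KTS := K.submatrix ((↑) : ↥(Sᶜ) → Fin n) ((↑) : ↥S → Fin n)
    let M := 1 + KTS * KSS⁻¹ * KSS⁻¹ * KST
    let VTTA := (Matrix.diagonal (fun j : ↥(Sᶜ) => ∑ i : ↥(Sᶜ), M i j))⁻¹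
    let VTTB := M⁻¹
    let psd : Matrix ↥(Sᶜ) ↥(Sᶜ) ℝ → Prop :=
      fun A => ∀ a : ↥(Sᶜ) → ℝ, 0 ≤ ∑ i, a i * A.mulVec a i / π ↑i
    psd (M - 1) ∧ psd (VTTA⁻¹ - M) ∧ psd (VTTB⁻¹ - M) := by
  classical
  intro KSS KST KTS M VTTA VTTB psd
  -- entrywise detailed balance
  have hdbe : ∀ i j, K i j * π j = π i * K j i := by
    intro i j
    have := congr_fun (congr_fun hdb i) j
    simpa [Matrix.mul_diagonal, Matrix.diagonal_mul] using this
  have hπne : ∀ i, π i ≠ 0 := fun i => (hπpos i).ne'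
  -- KSS⁻¹ has nonpositive entries
  have hKinv := kssinv_nonpos n K π hoff hcol hπpos hdbe S hinv
  -- detailed balance for KSS⁻¹ (entrywise)
  have hssinv : ∀ k l : ↥S, KSS⁻¹ k l * π ↑l = π ↑k * KSS⁻¹ l k := by
    have hdetT : IsUnit (KSSᵀ).det := by rwa [Matrix.det_transpose]
    have hDB_SS : KSS * Matrix.diagonal (fun i : ↥S => π ↑i)
        = Matrix.diagonal (fun i : ↥S => π ↑i) * KSSᵀ := by
      ext k l
      simp only [Matrix.mul_diagonal, Matrix.diagonal_mul, Matrix.transpose_apply]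
      exact hdbe _ _
    have hDB_inv : KSS⁻¹ * Matrix.diagonal (fun i : ↥S => π ↑i)
        = Matrix.diagonal (fun i : ↥S => π ↑i) * (KSS⁻¹)ᵀ := by
      have h1 : KSS⁻¹ * (Matrix.diagonal (fun i : ↥S => π ↑i) * KSSᵀ) * (KSSᵀ)⁻¹
          = KSS⁻¹ * Matrix.diagonal (fun i : ↥S => π ↑i) := by
        rw [← Matrix.mul_assoc, Matrix.mul_assoc (KSS⁻¹ * _), Matrix.mul_nonsing_inv _ hdetT,
          Matrix.mul_one]
      rw [← h1, ← hDB_SS, ← Matrix.mul_assoc, Matrix.nonsing_inv_mul _ hinv, Matrix.one_mul,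
        Matrix.transpose_nonsing_inv]
    intro k l
    have := congr_fun (congr_fun hDB_inv k) l
    simpa [Matrix.mul_diagonal, Matrix.diagonal_mul, Matrix.transpose_apply] using this
  set B : Matrix ↥S ↥(Sᶜ) ℝ := KSS⁻¹ * KST with hB
  have hBnp : ∀ (k : ↥S) (i : ↥(Sᶜ)), B k i ≤ 0 := by
    intro k i
    show ∑ l, KSS⁻¹ k l * KST l i ≤ 0
    refine Finset.sum_nonpos fun l _ => mul_nonpos_of_nonpos_of_nonneg (hKinv k l) ?_
    refine hoff _ _ fun h => ?_
    have := i.2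
    rw [Finset.mem_compl] at this
    exact this (h ▸ l.2)
  -- key identity: entries of KTS KSS⁻¹ KSS⁻¹ KST
  set C : Matrix ↥(Sᶜ) ↥(Sᶜ) ℝ := KTS * KSS⁻¹ * KSS⁻¹ * KST with hC
  have hTSinv : ∀ (i : ↥(Sᶜ)) (k : ↥S), (KTS * KSS⁻¹) i k = π ↑i * B k i / π ↑k := by
    intro i k
    show ∑ l, KTS i l * KSS⁻¹ l k = π ↑i * (∑ l, KSS⁻¹ k l * KST l i) / π ↑k
    rw [Finset.mul_sum, Finset.sum_div]
    refine Finset.sum_congr rfl fun l _ => ?_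
    have e1 := hdbe ↑i ↑l
    have e2 := hssinv l k
    show K ↑i ↑l * KSS⁻¹ l k = π ↑i * (KSS⁻¹ k l * K ↑l ↑i) / π ↑k
    rw [eq_div_iff (hπne ↑k)]
    linear_combination K ↑i ↑l * e2 + KSS⁻¹ k l * e1
  have hCB : ∀ i j : ↥(Sᶜ), C i j = π ↑i * ∑ k : ↥S, B k i * B k j / π ↑k := by
    intro i j
    have hCassoc : C = (KTS * KSS⁻¹) * B := by
      rw [hB, hC, Matrix.mul_assoc]
    have : C i j = ∑ k, (KTS * KSS⁻¹) i k * B k j := by rw [hCassoc]; rfl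
    rw [this, Finset.mul_sum]
    refine Finset.sum_congr rfl fun k _ => ?_
    rw [hTSinv i k]
    field_simp
  have hM1 : M - 1 = C := add_sub_cancel_left 1 C
  -- entrywise nonnegativity facts
  have hCnn : ∀ i j : ↥(Sᶜ), 0 ≤ C i j := by
    intro i j
    rw [hCB]
    refine mul_nonneg (hπpos _).le (Finset.sum_nonneg fun k _ => ?_)
    have : 0 ≤ B k i * B k j := by nlinarith [hBnp k i, hBnp k j]
    exact div_nonneg this (hπpos _).le
  have hMnn : ∀ i j : ↥(Sᶜ), 0 ≤ M i j := by
    intro i j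
    show 0 ≤ (1 : Matrix ↥(Sᶜ) ↥(Sᶜ) ℝ) i j + C i j
    have : (0:ℝ) ≤ (1 : Matrix ↥(Sᶜ) ↥(Sᶜ) ℝ) i j := by
      by_cases h : i = j
      · subst h; simp [Matrix.one_apply]
      · simp [Matrix.one_apply_ne h]
    linarith [hCnn i j]
  have hMsym : ∀ i j : ↥(Sᶜ), π ↑j * M i j = π ↑i * M j i := by
    intro i j
    show π ↑j * ((1 : Matrix ↥(Sᶜ) ↥(Sᶜ) ℝ) i j + C i j)
        = π ↑i * ((1 : Matrix ↥(Sᶜ) ↥(Sᶜ) ℝ) j i + C j i)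
    have h1 : π ↑j * (1 : Matrix ↥(Sᶜ) ↥(Sᶜ) ℝ) i j = π ↑i * (1 : Matrix ↥(Sᶜ) ↥(Sᶜ) ℝ) j i := by
      by_cases h : i = j
      · subst h; rfl
      · rw [Matrix.one_apply_ne h, Matrix.one_apply_ne (Ne.symm h)]; ring
    have h2 : π ↑j * C i j = π ↑i * C j i := by
      rw [hCB, hCB]
      have : ∑ k : ↥S, B k i * B k j / π ↑k = ∑ k : ↥S, B k j * B k i / π ↑k :=
        Finset.sum_congr rfl fun k _ => by ring
      rw [this]; ring
    calc π ↑j * ((1 : Matrix ↥(Sᶜ) ↥(Sᶜ) ℝ) i j + C i j)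
        = π ↑j * (1 : Matrix ↥(Sᶜ) ↥(Sᶜ) ℝ) i j + π ↑j * C i j := by ring
      _ = π ↑i * (1 : Matrix ↥(Sᶜ) ↥(Sᶜ) ℝ) j i + π ↑i * C j i := by rw [h1, h2]
      _ = π ↑i * ((1 : Matrix ↥(Sᶜ) ↥(Sᶜ) ℝ) j i + C j i) := by ring
  -- quadratic form of C is a sum of squares
  have hQC : ∀ a : ↥(Sᶜ) → ℝ,
      ∑ i, a i * C.mulVec a i / π ↑i = ∑ k : ↥S, (∑ i, B k i * a i)^2 / π ↑k := by
    intro a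
    have step1 : ∀ i : ↥(Sᶜ), a i * C.mulVec a i / π ↑i
        = ∑ k : ↥S, ∑ j, (B k i * a i) * (B k j * a j) / π ↑k := by
      intro i
      rw [Matrix.mulVec, dotProduct]
      rw [Finset.mul_sum, Finset.sum_div]
      rw [Finset.sum_comm]
      refine Finset.sum_congr rfl fun j _ => ?_
      rw [hCB i j, Finset.mul_sum, Finset.sum_mul, Finset.mul_sum, Finset.sum_div]
      refine Finset.sum_congr rfl fun k _ => ?_
      field_simp [hπne (↑i : Fin n), hπne (↑k : Fin n)]
    rw [Finset.sum_congr rfl fun i _ => step1 i, Finset.sum_comm]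
    refine Finset.sum_congr rfl fun k _ => ?_
    rw [sq, Finset.sum_mul, Finset.sum_div]
    refine Finset.sum_congr rfl fun i _ => ?_
    rw [Finset.mul_sum, Finset.sum_div]
  have hpsdC : ∀ a : ↥(Sᶜ) → ℝ, 0 ≤ ∑ i, a i * C.mulVec a i / π ↑i := by
    intro a
    rw [hQC a]
    exact Finset.sum_nonneg fun k _ => div_nonneg (sq_nonneg _) (hπpos _).le
  refine ⟨by rw [hM1]; exact hpsdC, ?_, ?_⟩
  · -- Type A
    set d : ↥(Sᶜ) → ℝ := fun j => ∑ i : ↥(Sᶜ), M i j with hd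
    have hdpos : ∀ j, 0 < d j := by
      intro j
      have h1 : ∑ i : ↥(Sᶜ), (1 : Matrix ↥(Sᶜ) ↥(Sᶜ) ℝ) i j = 1 := by
        simp [Matrix.one_apply, Finset.sum_ite_eq']
      have h2 : 0 ≤ ∑ i : ↥(Sᶜ), C i j := Finset.sum_nonneg fun i _ => hCnn i j
      have : d j = ∑ i : ↥(Sᶜ), ((1 : Matrix ↥(Sᶜ) ↥(Sᶜ) ℝ) i j + C i j) := rfl
      rw [this, Finset.sum_add_distrib, h1]
      linarith
    have hddet : IsUnit (Matrix.diagonal d).det := by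
      rw [Matrix.det_diagonal]
      exact isUnit_iff_ne_zero.mpr (Finset.prod_ne_zero_iff.mpr fun j _ => (hdpos j).ne')
    have hVA : VTTA⁻¹ = Matrix.diagonal d := Matrix.nonsing_inv_nonsing_inv _ hddet
    intro a
    rw [hVA]
    set x : ↥(Sᶜ) → ℝ := fun i => a i / π ↑i with hx
    set W' : Matrix ↥(Sᶜ) ↥(Sᶜ) ℝ := fun i j => π ↑j * M i j with hW'
    have hW'sym : ∀ i j, W' i j = W' j i := fun i j => hMsym i j
    have hW'nn : ∀ i j, 0 ≤ W' i j := fun i j => mul_nonneg (hπpos _).le (hMnn i j)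
    have hqi := quad_ineq W' hW'sym hW'nn x
    have idA : ∑ i, a i * M.mulVec a i / π ↑i = ∑ i, ∑ j, x i * W' i j * x j := by
      refine Finset.sum_congr rfl fun i _ => ?_
      rw [Matrix.mulVec, dotProduct, Finset.mul_sum, Finset.sum_div]
      refine Finset.sum_congr rfl fun j _ => ?_
      show a i * (M i j * a j) / π ↑i = a i / π ↑i * (π ↑j * M i j) * (a j / π ↑j)
      field_simp [hπne (↑i : Fin n), hπne (↑j : Fin n)]
    have idB : ∑ i, a i * (Matrix.diagonal d).mulVec a i / π ↑i
        = ∑ i, ∑ j, W' i j * x j ^ 2 := by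
      rw [Finset.sum_comm]
      refine Finset.sum_congr rfl fun i _ => ?_
      have hmv : (Matrix.diagonal d).mulVec a i = d i * a i := Matrix.mulVec_diagonal d a i
      rw [hmv]
      have : ∑ j : ↥(Sᶜ), W' j i * x i ^ 2 = (∑ j : ↥(Sᶜ), M j i) * (π ↑i * x i ^ 2) := by
        rw [Finset.sum_mul]
        exact Finset.sum_congr rfl fun j _ => by show π ↑i * M j i * x i ^ 2 = _; ring
      rw [this]
      show a i * (d i * a i) / π ↑i = d i * (π ↑i * x i ^ 2)
      rw [hx]
      field_simp [hπne (↑i : Fin n)]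
    have hsub : ∑ i, a i * (Matrix.diagonal d - M).mulVec a i / π ↑i
        = (∑ i, a i * (Matrix.diagonal d).mulVec a i / π ↑i)
          - ∑ i, a i * M.mulVec a i / π ↑i := by
      rw [← Finset.sum_sub_distrib]
      refine Finset.sum_congr rfl fun i _ => ?_
      rw [Matrix.sub_mulVec]
      show a i * ((Matrix.diagonal d).mulVec a i - M.mulVec a i) / π ↑i = _
      ring
    rw [hsub, idA, idB]
    linarith
  · -- Type B
    have hMdet : M.det ≠ 0 := by
      intro hdet
      obtain ⟨v, hv0, hv⟩ := (Matrix.exists_mulVec_eq_zero_iff).mpr hdet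
      have hsum : ∑ i, v i * M.mulVec v i / π ↑i = 0 := by
        rw [hv]; simp
      have hexp : ∑ i, v i * M.mulVec v i / π ↑i
          = (∑ i, v i * v i / π ↑i) + ∑ i, v i * C.mulVec v i / π ↑i := by
        rw [← Finset.sum_add_distrib]
        refine Finset.sum_congr rfl fun i _ => ?_
        have : M.mulVec v i = v i + C.mulVec v i := by
          show ((1 + C).mulVec v) i = _
          rw [Matrix.add_mulVec, Matrix.one_mulVec]
          rfl
        rw [this]; ring
      have hpos : 0 < ∑ i, v i * v i / π ↑i := by
        obtain ⟨i0, hi0⟩ := Function.ne_iff.mp hv0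
        refine Finset.sum_pos' (fun i _ => div_nonneg (mul_self_nonneg _) (hπpos _).le) ⟨i0, Finset.mem_univ i0, ?_⟩
        exact div_pos (mul_self_pos.mpr hi0) (hπpos _)
      rw [hexp] at hsum
      have := hpsdC v
      linarith
    have hVB : VTTB⁻¹ = M :=
      Matrix.nonsing_inv_nonsing_inv _ (isUnit_iff_ne_zero.mpr hMdet)
    intro a
    rw [hVB, sub_self]
    simp
end

section
/- The matrix V = Ω* V_{TT} Ω (of either Type A or B) satisfies O ⪯ V ⪯ I_n with respect to the π-inner product; i.e., all eigenvalues of V lie in [0,1]. -/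
open Matrix BigOperators

/-- If `B` is a Z-matrix with strictly positive row sums, then `B *ᵥ x ≥ 0` implies `x ≥ 0`. -/
lemma rcmc_zmat_mono {ι : Type*} [Fintype ι] [DecidableEq ι] (B : Matrix ι ι ℝ)
    (hZ : ∀ i j, i ≠ j → B i j ≤ 0) (hrow : ∀ i, 0 < ∑ j, B i j)
    (x : ι → ℝ) (hx : ∀ i, 0 ≤ B.mulVec x i) : ∀ i, 0 ≤ x i := by
  by_contra h
  push_neg at h
  obtain ⟨i₀, hi₀⟩ := h
  obtain ⟨m, -, hm⟩ := Finset.exists_min_image Finset.univ x ⟨i₀, Finset.mem_univ i₀⟩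
  have hmneg : x m < 0 := lt_of_le_of_lt (hm i₀ (Finset.mem_univ i₀)) hi₀
  have h1 : B.mulVec x m ≤ (∑ j, B m j) * x m := by
    rw [Finset.sum_mul]
    have hmv : B.mulVec x m = ∑ j, B m j * x j := by
      simp [Matrix.mulVec, dotProduct]
    rw [hmv]
    apply Finset.sum_le_sum
    intro j _
    rcases eq_or_ne m j with rfl | hne
    · exact le_refl _
    · exact mul_le_mul_of_nonpos_left (hm j (Finset.mem_univ j)) (hZ m j hne)
  have h2 : (∑ j, B m j) * x m < 0 := mul_neg_of_pos_of_neg (hrow m) hmneg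
  exact absurd (le_trans (hx m) h1) (not_le.mpr h2)

/-- A Z-matrix with strictly positive row sums has nonnegative inverse. -/
lemma rcmc_zmat_inv_nonneg {ι : Type*} [Fintype ι] [DecidableEq ι] (B : Matrix ι ι ℝ)
    (hZ : ∀ i j, i ≠ j → B i j ≤ 0) (hrow : ∀ i, 0 < ∑ j, B i j) :
    ∀ i j, 0 ≤ B⁻¹ i j := by
  have hdet : B.det ≠ 0 := by
    intro h
    obtain ⟨v, hv, hBv⟩ := Matrix.exists_mulVec_eq_zero_iff.mpr h
    have h1 := rcmc_zmat_mono B hZ hrow v (by simp [hBv])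
    have h2 := rcmc_zmat_mono B hZ hrow (-v) (by simp [Matrix.mulVec_neg, hBv])
    refine hv (funext fun i => le_antisymm ?_ (h1 i))
    have := h2 i
    simpa using this
  intro i j
  have hBB : B * B⁻¹ = 1 := Matrix.mul_nonsing_inv B (Ne.isUnit hdet)
  have key := rcmc_zmat_mono B hZ hrow (B⁻¹.mulVec (Pi.single j 1)) ?_ i
  · rw [Matrix.mulVec_single] at key
    simpa using key
  · intro k
    rw [Matrix.mulVec_mulVec, hBB, Matrix.one_mulVec]
    by_cases hkj : k = j <;> simp [Pi.single_apply, hkj]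

/-- A Z-matrix with nonnegative row sums and nonzero determinant has nonnegative inverse. -/
lemma rcmc_zmat_inv_nonneg_weak {ι : Type*} [Fintype ι] [DecidableEq ι] (B : Matrix ι ι ℝ)
    (hZ : ∀ i j, i ≠ j → B i j ≤ 0) (hrow : ∀ i, 0 ≤ ∑ j, B i j)
    (hdet : B.det ≠ 0) : ∀ i j, 0 ≤ B⁻¹ i j := by
  intro i j
  have key : ∀ ε : ℝ, 0 < ε → 0 ≤ (B + ε • 1)⁻¹ i j := by
    intro ε hε
    apply rcmc_zmat_inv_nonneg
    · intro a b hab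
      simpa [Matrix.add_apply, Matrix.smul_apply, Matrix.one_apply_ne hab] using hZ a b hab
    · intro a
      have hsplit : ∑ b, (B + ε • (1 : Matrix ι ι ℝ)) a b
          = ∑ b, B a b + ∑ b, (ε • (1 : Matrix ι ι ℝ)) a b := by
        rw [← Finset.sum_add_distrib]
        simp [Matrix.add_apply]
      rw [hsplit]
      have h1 : ∑ b, (ε • (1 : Matrix ι ι ℝ)) a b = ε := by
        simp [Matrix.smul_apply, Matrix.one_apply]
      rw [h1]
      exact lt_of_lt_of_le hε (by linarith [hrow a])
  have hF : Continuous fun ε : ℝ => B + ε • (1 : Matrix ι ι ℝ) :=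
    continuous_const.add (continuous_id.smul continuous_const)
  have hF0 : B + (0:ℝ) • (1 : Matrix ι ι ℝ) = B := by simp
  have hdc : Filter.Tendsto (fun ε : ℝ => (B + ε • 1 : Matrix ι ι ℝ).det)
      (nhds 0) (nhds B.det) := by
    have := (hF.matrix_det).tendsto (0:ℝ)
    rwa [hF0] at this
  have hac : Filter.Tendsto (fun ε : ℝ => (B + ε • 1 : Matrix ι ι ℝ).adjugate i j)
      (nhds 0) (nhds (B.adjugate i j)) := by
    have h2 := ((continuous_apply j).comp ((continuous_apply i).comp hF.matrix_adjugate)).tendsto (0:ℝ)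
    have h3 : Filter.Tendsto (fun ε : ℝ => (B + ε • 1 : Matrix ι ι ℝ).adjugate i j) (nhds 0)
        (nhds ((B + (0:ℝ) • (1 : Matrix ι ι ℝ)).adjugate i j)) := h2
    rwa [hF0] at h3
  have hinvc : Filter.Tendsto (fun ε : ℝ => (B + ε • 1 : Matrix ι ι ℝ)⁻¹ i j)
      (nhds 0) (nhds (B⁻¹ i j)) := by
    have heq : ∀ C : Matrix ι ι ℝ, C⁻¹ i j = (C.det)⁻¹ * C.adjugate i j := by
      intro C
      rw [Matrix.inv_def, Ring.inverse_eq_inv']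
      simp [Matrix.smul_apply]
    simp only [heq]
    exact (hdc.inv₀ hdet).mul hac
  have hinvc' := hinvc.mono_left (nhdsWithin_le_nhds (s := Set.Ioi (0:ℝ)))
  exact ge_of_tendsto hinvc' (Filter.eventually_of_mem self_mem_nhdsWithin fun ε hε => key ε hε)

/-- For a rate matrix `K` (nonneg off-diagonal, zero column sums) and invertible principal
block `KSS`, the inverse `KSS⁻¹` is entrywise nonpositive. -/
lemma rcmc_inv_nonpos (n : ℕ) (K : Matrix (Fin n) (Fin n) ℝ)
    (hoff : ∀ i j, i ≠ j → 0 ≤ K i j) (hcol : ∀ j, ∑ i, K i j = 0)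
    (S : Finset (Fin n))
    (hinv : IsUnit (K.submatrix ((↑) : ↥S → Fin n) ((↑) : ↥S → Fin n)).det) :
    ∀ s s', (K.submatrix ((↑) : ↥S → Fin n) ((↑) : ↥S → Fin n))⁻¹ s s' ≤ 0 := by
  set KSS := K.submatrix ((↑) : ↥S → Fin n) ((↑) : ↥S → Fin n) with hKSS
  set B : Matrix ↥S ↥S ℝ := -KSSᵀ with hB
  have hBC : B * (-(KSS⁻¹)ᵀ) = 1 := by
    rw [hB, Matrix.neg_mul, Matrix.mul_neg, neg_neg, ← Matrix.transpose_mul,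
      Matrix.nonsing_inv_mul KSS hinv, Matrix.transpose_one]
  have hdetB : B.det ≠ 0 := by
    intro h
    have h2 : B.det * (-(KSS⁻¹)ᵀ).det = 1 := by rw [← Matrix.det_mul, hBC, Matrix.det_one]
    rw [h, zero_mul] at h2
    exact zero_ne_one h2
  have hZ : ∀ s s' : ↥S, s ≠ s' → B s s' ≤ 0 := by
    intro s s' hne
    have hcoene : (↑s' : Fin n) ≠ ↑s := fun hh => (hne (Subtype.coe_injective hh.symm)).elim
    have : 0 ≤ K ↑s' ↑s := hoff _ _ hcoene
    simp only [hB, Matrix.neg_apply, Matrix.transpose_apply, hKSS, Matrix.submatrix_apply]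
    linarith
  have hrow : ∀ s : ↥S, 0 ≤ ∑ s', B s s' := by
    intro s
    have h1 : ∑ s' : ↥S, B s s' = -∑ i ∈ S, K i ↑s := by
      rw [← Finset.sum_coe_sort S (fun i => K i ↑s), ← Finset.sum_neg_distrib]
      rfl
    have h2 : ∑ i ∈ S, K i ↑s + ∑ i ∈ Sᶜ, K i ↑s = 0 := by
      rw [Finset.sum_add_sum_compl]; exact hcol ↑s
    have h3 : 0 ≤ ∑ i ∈ Sᶜ, K i ↑s := by
      apply Finset.sum_nonneg
      intro i hi
      have : i ≠ ↑s := fun hh => (Finset.mem_compl.mp hi) (hh ▸ s.2)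
      exact hoff i ↑s this
    rw [h1]; linarith
  have hBinv : B⁻¹ = -(KSS⁻¹)ᵀ := Matrix.inv_eq_right_inv hBC
  intro s s'
  have := rcmc_zmat_inv_nonneg_weak B hZ hrow hdetB s' s
  rw [hBinv] at this
  simp only [Matrix.neg_apply, Matrix.transpose_apply] at this
  linarith

lemma rcmcAssemble_SS {n : ℕ} {S : Finset (Fin n)} (A : Matrix ↥S ↥S ℝ) (B : Matrix ↥S ↥(Sᶜ) ℝ)
    (C : Matrix ↥(Sᶜ) ↥S ℝ) (D : Matrix ↥(Sᶜ) ↥(Sᶜ) ℝ) (s s' : ↥S) :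
    rcmcAssemble S A B C D ↑s ↑s' = A s s' := by
  simp [rcmcAssemble, s.2, s'.2]

lemma rcmcAssemble_ST {n : ℕ} {S : Finset (Fin n)} (A : Matrix ↥S ↥S ℝ) (B : Matrix ↥S ↥(Sᶜ) ℝ)
    (C : Matrix ↥(Sᶜ) ↥S ℝ) (D : Matrix ↥(Sᶜ) ↥(Sᶜ) ℝ) (s : ↥S) (t : ↥(Sᶜ)) :
    rcmcAssemble S A B C D ↑s ↑t = B s t := by
  simp [rcmcAssemble, s.2, Finset.mem_compl.mp t.2]

lemma rcmcAssemble_TS {n : ℕ} {S : Finset (Fin n)} (A : Matrix ↥S ↥S ℝ) (B : Matrix ↥S ↥(Sᶜ) ℝ)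
    (C : Matrix ↥(Sᶜ) ↥S ℝ) (D : Matrix ↥(Sᶜ) ↥(Sᶜ) ℝ) (t : ↥(Sᶜ)) (s : ↥S) :
    rcmcAssemble S A B C D ↑t ↑s = C t s := by
  simp [rcmcAssemble, s.2, Finset.mem_compl.mp t.2]

lemma rcmcAssemble_TT {n : ℕ} {S : Finset (Fin n)} (A : Matrix ↥S ↥S ℝ) (B : Matrix ↥S ↥(Sᶜ) ℝ)
    (C : Matrix ↥(Sᶜ) ↥S ℝ) (D : Matrix ↥(Sᶜ) ↥(Sᶜ) ℝ) (t t' : ↥(Sᶜ)) :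
    rcmcAssemble S A B C D ↑t ↑t' = D t t' := by
  simp [rcmcAssemble, Finset.mem_compl.mp t.2, Finset.mem_compl.mp t'.2]

set_option maxHeartbeats 2000000 in
/-- The matrix `V` (of Type A or Type B) satisfies `O ⪯ V ⪯ I` with respect
to the `π`-inner product, i.e. its quadratic form lies between `0` and that of `I_n`. -/
theorem rcmc_stmt11 (n : ℕ) (K : Matrix (Fin n) (Fin n) ℝ) (π : Fin n → ℝ)
    (hoff : ∀ i j, i ≠ j → 0 ≤ K i j)
    (hcol : ∀ j, ∑ i, K i j = 0)
    (hπpos : ∀ i, 0 < π i) (hπsum : ∑ i, π i = 1)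
    (hdb : K * Matrix.diagonal π = Matrix.diagonal π * Kᵀ)
    (S : Finset (Fin n))
    (hinv : IsUnit (K.submatrix ((↑) : ↥S → Fin n) ((↑) : ↥S → Fin n)).det)
    (M VTT : Matrix ↥(Sᶜ) ↥(Sᶜ) ℝ)
    (hM : M = 1 + K.submatrix ((↑) : ↥(Sᶜ) → Fin n) ((↑) : ↥S → Fin n)
      * (K.submatrix ((↑) : ↥S → Fin n) ((↑) : ↥S → Fin n))⁻¹
      * (K.submatrix ((↑) : ↥S → Fin n) ((↑) : ↥S → Fin n))⁻¹
      * K.submatrix ((↑) : ↥S → Fin n) ((↑) : ↥(Sᶜ) → Fin n))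
    (hVTT : VTT = (Matrix.diagonal (fun j : ↥(Sᶜ) => ∑ i : ↥(Sᶜ), M i j))⁻¹ ∨ VTT = M⁻¹) :
    let KSS := K.submatrix ((↑) : ↥S → Fin n) ((↑) : ↥S → Fin n)
    let KST := K.submatrix ((↑) : ↥S → Fin n) ((↑) : ↥(Sᶜ) → Fin n)
    let KTS := K.submatrix ((↑) : ↥(Sᶜ) → Fin n) ((↑) : ↥S → Fin n)
    let V := rcmcAssemble S (KSS⁻¹ * KST * VTT * KTS * KSS⁻¹)
      (-(KSS⁻¹ * KST * VTT)) (-(VTT * KTS * KSS⁻¹)) VTT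
    (∀ a : Fin n → ℝ, 0 ≤ ∑ i, a i * V.mulVec a i / π i) ∧
    (∀ a : Fin n → ℝ, ∑ i, a i * V.mulVec a i / π i ≤ ∑ i, a i * a i / π i) := by
  intro KSS KST KTS V
  have hπne : ∀ i, π i ≠ 0 := fun i => ne_of_gt (hπpos i)
  have hdbe : ∀ i j, K i j * π j = π i * K j i := by
    intro i j
    have h := congrFun (congrFun hdb i) j
    simpa [Matrix.mul_diagonal, Matrix.diagonal_mul, Matrix.transpose_apply] using h
  set N : Matrix ↥S ↥S ℝ := KSS⁻¹ with hN
  set KN : Matrix ↥(Sᶜ) ↥S ℝ := KTS * N with hKN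
  set NK : Matrix ↥S ↥(Sᶜ) ℝ := N * KST with hNKdef
  have hNKSS : N * KSS = 1 := Matrix.nonsing_inv_mul KSS hinv
  have hKSSN : KSS * N = 1 := Matrix.mul_nonsing_inv KSS hinv
  -- the π-adjoint relation between NK and KN
  have L3 : ∀ (s : ↥S) (t : ↥(Sᶜ)), NK s t * π ↑t = π ↑s * KN t s := by
    set DS : Matrix ↥S ↥S ℝ := Matrix.diagonal (fun s : ↥S => π ↑s) with hDS
    set DT : Matrix ↥(Sᶜ) ↥(Sᶜ) ℝ := Matrix.diagonal (fun t : ↥(Sᶜ) => π ↑t) with hDT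
    have hKSSm : KSS * DS = DS * KSSᵀ := by
      ext s s'
      rw [hDS, Matrix.mul_diagonal, Matrix.diagonal_mul, Matrix.transpose_apply]
      exact hdbe ↑s ↑s'
    have hKSTm : KST * DT = DS * KTSᵀ := by
      ext s t
      rw [hDT, hDS, Matrix.mul_diagonal, Matrix.diagonal_mul, Matrix.transpose_apply]
      exact hdbe ↑s ↑t
    have hNT : KSSᵀ * Nᵀ = 1 := by rw [← Matrix.transpose_mul, hNKSS, Matrix.transpose_one]
    have hNm : N * DS = DS * Nᵀ := by
      calc N * DS = N * DS * (KSSᵀ * Nᵀ) := by rw [hNT, Matrix.mul_one]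
        _ = N * (DS * KSSᵀ) * Nᵀ := by simp only [Matrix.mul_assoc]
        _ = N * (KSS * DS) * Nᵀ := by rw [hKSSm]
        _ = N * KSS * DS * Nᵀ := by rw [Matrix.mul_assoc N KSS DS]
        _ = DS * Nᵀ := by rw [hNKSS, Matrix.one_mul]
    have hNKm : NK * DT = DS * KNᵀ := by
      calc NK * DT = N * (KST * DT) := by rw [hNKdef, Matrix.mul_assoc]
        _ = N * (DS * KTSᵀ) := by rw [hKSTm]
        _ = N * DS * KTSᵀ := by rw [Matrix.mul_assoc]
        _ = DS * Nᵀ * KTSᵀ := by rw [hNm]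
        _ = DS * (Nᵀ * KTSᵀ) := by rw [Matrix.mul_assoc]
        _ = DS * KNᵀ := by rw [← Matrix.transpose_mul, hKN]
    intro s t
    have h := congrFun (congrFun hNKm s) t
    simpa [hDS, hDT, Matrix.mul_diagonal, Matrix.diagonal_mul, Matrix.transpose_apply] using h
  -- column sums of KN are -1
  have L4 : ∀ s : ↥S, ∑ t : ↥(Sᶜ), KN t s = -1 := by
    intro s
    have hstep : ∀ s' : ↥S, ∑ t : ↥(Sᶜ), KTS t s' = -∑ σ : ↥S, KSS σ s' := by
      intro s'
      have h2 : ∑ i ∈ S, K i ↑s' + ∑ i ∈ Sᶜ, K i ↑s' = 0 := by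
        rw [Finset.sum_add_sum_compl]; exact hcol ↑s'
      have e1 : ∑ t : ↥(Sᶜ), KTS t s' = ∑ i ∈ Sᶜ, K i ↑s' :=
        Finset.sum_coe_sort Sᶜ (fun i => K i ↑s')
      have e2 : ∑ σ : ↥S, KSS σ s' = ∑ i ∈ S, K i ↑s' :=
        Finset.sum_coe_sort S (fun i => K i ↑s')
      rw [e1, e2]; linarith
    calc ∑ t : ↥(Sᶜ), KN t s = ∑ t : ↥(Sᶜ), ∑ s' : ↥S, KTS t s' * N s' s := by
          simp only [hKN, Matrix.mul_apply]
      _ = ∑ s' : ↥S, ∑ t : ↥(Sᶜ), KTS t s' * N s' s := Finset.sum_comm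
      _ = ∑ s' : ↥S, (∑ t : ↥(Sᶜ), KTS t s') * N s' s := by
          exact Finset.sum_congr rfl fun s' _ => (Finset.sum_mul _ _ _).symm
      _ = ∑ s' : ↥S, -((∑ σ : ↥S, KSS σ s' * N s' s)) := by
          refine Finset.sum_congr rfl fun s' _ => ?_
          rw [hstep s', neg_mul, Finset.sum_mul]
      _ = -(∑ s' : ↥S, ∑ σ : ↥S, KSS σ s' * N s' s) := by rw [Finset.sum_neg_distrib]
      _ = -(∑ σ : ↥S, ∑ s' : ↥S, KSS σ s' * N s' s) := by rw [Finset.sum_comm]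
      _ = -(∑ σ : ↥S, (KSS * N) σ s) := by simp only [Matrix.mul_apply]
      _ = -1 := by
          rw [hKSSN]
          simp [Matrix.one_apply]
  -- entrywise formula for M * Π_T
  have hM' : M = 1 + KN * NK := by
    rw [hM, hNKdef, Matrix.mul_assoc]
  have L6 : ∀ t t' : ↥(Sᶜ), M t t' * π ↑t' =
      (if t = t' then π ↑t' else 0) + ∑ s : ↥S, KN t s * (π ↑s * KN t' s) := by
    intro t t'
    have e0 : M t t' = (if t = t' then 1 else 0) + ∑ s : ↥S, KN t s * NK s t' := by
      rw [hM']
      simp [Matrix.add_apply, Matrix.one_apply, Matrix.mul_apply]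
    rw [e0, add_mul, Finset.sum_mul]
    congr 1
    · by_cases h : t = t' <;> simp [h]
    · refine Finset.sum_congr rfl fun s _ => ?_
      rw [mul_assoc, L3 s t']
  -- KN is entrywise nonpositive
  have hKNle : ∀ (t : ↥(Sᶜ)) (s : ↥S), KN t s ≤ 0 := by
    intro t s
    have hNle : ∀ s₁ s₂ : ↥S, N s₁ s₂ ≤ 0 := rcmc_inv_nonpos n K hoff hcol S hinv
    have he : KN t s = ∑ s' : ↥S, KTS t s' * N s' s := by
      simp only [hKN, Matrix.mul_apply]
    rw [he]
    apply Finset.sum_nonpos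
    intro s' _
    have h1 : 0 ≤ KTS t s' := by
      refine hoff ↑t ↑s' ?_
      intro h
      exact absurd (h ▸ s'.2) (Finset.mem_compl.mp t.2)
    exact mul_nonpos_iff.mpr (Or.inl ⟨h1, hNle s' s⟩)
  -- sum splitting
  have hsplit : ∀ f : Fin n → ℝ, ∑ i, f i = ∑ s : ↥S, f ↑s + ∑ t : ↥(Sᶜ), f ↑t := by
    intro f
    rw [Finset.sum_coe_sort S f, Finset.sum_coe_sort Sᶜ f, Finset.sum_add_sum_compl]
  have main : ∀ a : Fin n → ℝ,
      0 ≤ ∑ i, a i * V.mulVec a i / π i ∧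
      ∑ i, a i * V.mulVec a i / π i ≤ ∑ i, a i * a i / π i := by
    intro a
    set aS : ↥S → ℝ := fun s => a ↑s with haS
    set aT : ↥(Sᶜ) → ℝ := fun t => a ↑t with haT
    set u : ↥(Sᶜ) → ℝ := fun t => aT t - KN.mulVec aS t with hu
    set w : ↥(Sᶜ) → ℝ := VTT.mulVec u with hw
    have hu' : u = aT - KN.mulVec aS := by funext t; simp [hu]
    have hmS : ∀ s : ↥S, V.mulVec a ↑s = -(NK.mulVec w s) := by
      intro s
      have h5 : NK.mulVec w = (N * KST * VTT).mulVec aT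
          - (N * KST * VTT * KTS * N).mulVec aS := by
        calc NK.mulVec w = (NK * VTT).mulVec u := by rw [hw, Matrix.mulVec_mulVec]
          _ = (N * KST * VTT).mulVec u := by rw [hNKdef]
          _ = (N * KST * VTT).mulVec aT - (N * KST * VTT * KTS * N).mulVec aS := by
              rw [hu', Matrix.mulVec_sub, Matrix.mulVec_mulVec, hKN, ← Matrix.mul_assoc]
      calc V.mulVec a ↑s = ∑ j, V ↑s j * a j := by simp [Matrix.mulVec, dotProduct]
        _ = ∑ s' : ↥S, V ↑s ↑s' * a ↑s' + ∑ t : ↥(Sᶜ), V ↑s ↑t * a ↑t := hsplit _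
        _ = ∑ s' : ↥S, (N * KST * VTT * KTS * N) s s' * aS s'
            + ∑ t : ↥(Sᶜ), (-(N * KST * VTT)) s t * aT t := by
            congr 1
            · exact Finset.sum_congr rfl fun s' _ => by
                rw [show V ↑s ↑s' = (N * KST * VTT * KTS * N) s s' from
                  rcmcAssemble_SS _ _ _ _ s s']
            · exact Finset.sum_congr rfl fun t _ => by
                rw [show V ↑s ↑t = (-(N * KST * VTT)) s t from
                  rcmcAssemble_ST _ _ _ _ s t]
        _ = (N * KST * VTT * KTS * N).mulVec aS s + (-(N * KST * VTT)).mulVec aT s := by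
            simp [Matrix.mulVec, dotProduct]
        _ = -(NK.mulVec w s) := by
            rw [h5]
            simp only [Matrix.neg_mulVec, Pi.sub_apply, Pi.neg_apply]
            ring
    have hmT : ∀ t : ↥(Sᶜ), V.mulVec a ↑t = w t := by
      intro t
      have h5 : VTT.mulVec u = VTT.mulVec aT - (VTT * KTS * N).mulVec aS := by
        rw [hu', Matrix.mulVec_sub, Matrix.mulVec_mulVec, hKN, ← Matrix.mul_assoc]
      calc V.mulVec a ↑t = ∑ j, V ↑t j * a j := by simp [Matrix.mulVec, dotProduct]
        _ = ∑ s' : ↥S, V ↑t ↑s' * a ↑s' + ∑ t' : ↥(Sᶜ), V ↑t ↑t' * a ↑t' := hsplit _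
        _ = ∑ s' : ↥S, (-(VTT * KTS * N)) t s' * aS s'
            + ∑ t' : ↥(Sᶜ), VTT t t' * aT t' := by
            congr 1
            · exact Finset.sum_congr rfl fun s' _ => by
                rw [show V ↑t ↑s' = (-(VTT * KTS * N)) t s' from
                  rcmcAssemble_TS _ _ _ _ t s']
            · exact Finset.sum_congr rfl fun t' _ => by
                rw [show V ↑t ↑t' = VTT t t' from rcmcAssemble_TT _ _ _ _ t t']
        _ = (-(VTT * KTS * N)).mulVec aS t + VTT.mulVec aT t := by
            simp [Matrix.mulVec, dotProduct]
        _ = w t := by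
            rw [hw, h5]
            simp only [Matrix.neg_mulVec, Pi.sub_apply, Pi.neg_apply]
            ring
    have hmva : ∀ t : ↥(Sᶜ), KN.mulVec aS t = aT t - u t := by
      intro t
      simp only [hu]
      ring
    have hQ : ∑ i, a i * V.mulVec a i / π i = ∑ t : ↥(Sᶜ), u t * w t / π ↑t := by
      have step1 : ∀ s : ↥S, a ↑s * V.mulVec a ↑s / π ↑s
          = ∑ t : ↥(Sᶜ), -(KN t s * aS s * w t / π ↑t) := by
        intro s
        rw [hmS s]
        have hexp : NK.mulVec w s = ∑ t : ↥(Sᶜ), NK s t * w t := by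
          simp [Matrix.mulVec, dotProduct]
        rw [hexp, mul_neg, neg_div, Finset.mul_sum, Finset.sum_div, ← Finset.sum_neg_distrib]
        refine Finset.sum_congr rfl fun t _ => ?_
        congr 1
        rw [div_eq_div_iff (hπne ↑s) (hπne ↑t)]
        have h3 := L3 s t
        linear_combination (aS s * w t) * h3
      have eS : ∑ s : ↥S, a ↑s * V.mulVec a ↑s / π ↑s
          = ∑ t : ↥(Sᶜ), -((aT t - u t) * w t / π ↑t) := by
        calc ∑ s : ↥S, a ↑s * V.mulVec a ↑s / π ↑s
            = ∑ s : ↥S, ∑ t : ↥(Sᶜ), -(KN t s * aS s * w t / π ↑t) :=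
              Finset.sum_congr rfl fun s _ => step1 s
          _ = ∑ t : ↥(Sᶜ), ∑ s : ↥S, -(KN t s * aS s * w t / π ↑t) := Finset.sum_comm
          _ = ∑ t : ↥(Sᶜ), -((aT t - u t) * w t / π ↑t) := by
              refine Finset.sum_congr rfl fun t _ => ?_
              rw [Finset.sum_neg_distrib]
              congr 1
              calc ∑ s : ↥S, KN t s * aS s * w t / π ↑t
                  = (∑ s : ↥S, KN t s * aS s) * (w t / π ↑t) := by
                    rw [Finset.sum_mul]
                    exact Finset.sum_congr rfl fun s _ => (mul_div_assoc _ _ _)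
                _ = (aT t - u t) * (w t / π ↑t) := by
                    rw [show ∑ s : ↥S, KN t s * aS s = aT t - u t from by
                      rw [show ∑ s : ↥S, KN t s * aS s = KN.mulVec aS t from by
                        simp [Matrix.mulVec, dotProduct], hmva t]]
                _ = (aT t - u t) * w t / π ↑t := by rw [mul_div_assoc]
      calc ∑ i, a i * V.mulVec a i / π i
          = ∑ s : ↥S, a ↑s * V.mulVec a ↑s / π ↑s
            + ∑ t : ↥(Sᶜ), a ↑t * V.mulVec a ↑t / π ↑t := hsplit _
        _ = ∑ t : ↥(Sᶜ), -((aT t - u t) * w t / π ↑t)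
            + ∑ t : ↥(Sᶜ), aT t * w t / π ↑t := by
            rw [eS]
            congr 1
            exact Finset.sum_congr rfl fun t _ => by rw [hmT t]
        _ = ∑ t : ↥(Sᶜ), u t * w t / π ↑t := by
            rw [← Finset.sum_add_distrib]
            exact Finset.sum_congr rfl fun t _ => by ring
    have hRHS : ∑ i, a i * a i / π i
        = ∑ s : ↥S, aS s * aS s / π ↑s + ∑ t : ↥(Sᶜ), aT t * aT t / π ↑t := hsplit _
    rw [hQ, hRHS]
    rcases hVTT with hA | hB
    · -- Type A
      set d : ↥(Sᶜ) → ℝ := fun t => ∑ t' : ↥(Sᶜ), M t' t with hd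
      have hdπ : ∀ t : ↥(Sᶜ), d t * π ↑t = π ↑t + ∑ s : ↥S, (-KN t s) * π ↑s := by
        intro t
        calc d t * π ↑t = ∑ t' : ↥(Sᶜ), M t' t * π ↑t := Finset.sum_mul _ _ _
          _ = ∑ t' : ↥(Sᶜ), ((if t' = t then π ↑t else 0)
              + ∑ s : ↥S, KN t' s * (π ↑s * KN t s)) :=
            Finset.sum_congr rfl fun t' _ => L6 t' t
          _ = (∑ t' : ↥(Sᶜ), if t' = t then π ↑t else 0)
              + ∑ t' : ↥(Sᶜ), ∑ s : ↥S, KN t' s * (π ↑s * KN t s) := Finset.sum_add_distrib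
          _ = π ↑t + ∑ s : ↥S, (π ↑s * KN t s) * ∑ t' : ↥(Sᶜ), KN t' s := by
              congr 1
              · simp
              · rw [Finset.sum_comm]
                refine Finset.sum_congr rfl fun s _ => ?_
                rw [Finset.mul_sum]
                exact Finset.sum_congr rfl fun t' _ => mul_comm _ _
          _ = π ↑t + ∑ s : ↥S, (-KN t s) * π ↑s := by
              congr 1
              refine Finset.sum_congr rfl fun s _ => ?_
              rw [L4 s]
              ring
      have hdpos : ∀ t : ↥(Sᶜ), 0 < d t := by
        intro t
        have h2 : 0 ≤ ∑ s : ↥S, (-KN t s) * π ↑s :=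
          Finset.sum_nonneg fun s _ =>
            mul_nonneg (neg_nonneg.mpr (hKNle t s)) (le_of_lt (hπpos ↑s))
        have h1 : 0 < d t * π ↑t := by
          rw [hdπ t]
          have := hπpos (↑t : Fin n)
          linarith
        nlinarith [hπpos (↑t : Fin n)]
      have hdinv : VTT = Matrix.diagonal (fun t => (d t)⁻¹) := by
        rw [hA]
        refine Matrix.inv_eq_right_inv ?_
        rw [Matrix.diagonal_mul_diagonal,
          show (fun t => d t * (d t)⁻¹) = fun _ : ↥(Sᶜ) => (1:ℝ) from
            funext fun t => mul_inv_cancel₀ (ne_of_gt (hdpos t)), Matrix.diagonal_one]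
      have hww : ∀ t : ↥(Sᶜ), w t = (d t)⁻¹ * u t := by
        intro t
        rw [hw, hdinv, Matrix.mulVec_diagonal]
      constructor
      · apply Finset.sum_nonneg
        intro t _
        rw [hww t, show u t * ((d t)⁻¹ * u t) = u t ^ 2 * (d t)⁻¹ from by ring]
        exact div_nonneg (mul_nonneg (sq_nonneg _) (inv_nonneg.mpr (le_of_lt (hdpos t))))
          (le_of_lt (hπpos ↑t))
      · have keyCS : ∀ t : ↥(Sᶜ), u t * w t / π ↑t
            ≤ aT t * aT t / π ↑t + ∑ s : ↥S, (-KN t s) * (aS s * aS s / π ↑s) := by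
          intro t
          set f : Option ↥S → ℝ := fun o =>
            o.elim (Real.sqrt (π ↑t)) (fun s => Real.sqrt ((-KN t s) * π ↑s)) with hf
          set g : Option ↥S → ℝ := fun o =>
            o.elim (aT t / Real.sqrt (π ↑t))
              (fun s => Real.sqrt (-KN t s) * aS s / Real.sqrt (π ↑s)) with hg
          have hsqπ : ∀ i : Fin n, Real.sqrt (π i) ≠ 0 :=
            fun i => Real.sqrt_ne_zero'.mpr (hπpos i)
          have hfg : ∑ o : Option ↥S, f o * g o = u t := by
            rw [Fintype.sum_option]
            have h1 : f none * g none = aT t := by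
              simp only [hf, hg, Option.elim]
              rw [mul_comm, div_mul_cancel₀ _ (hsqπ ↑t)]
            have h2 : ∀ s : ↥S, f (some s) * g (some s) = (-KN t s) * aS s := by
              intro s
              simp only [hf, hg, Option.elim]
              have hc : (0:ℝ) ≤ -KN t s := neg_nonneg.mpr (hKNle t s)
              rw [Real.sqrt_mul hc]
              rw [show Real.sqrt (-KN t s) * Real.sqrt (π ↑s)
                  * (Real.sqrt (-KN t s) * aS s / Real.sqrt (π ↑s))
                  = (Real.sqrt (-KN t s) * Real.sqrt (-KN t s)) * aS s
                  * (Real.sqrt (π ↑s) / Real.sqrt (π ↑s)) from by ring]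
              rw [Real.mul_self_sqrt hc, div_self (hsqπ ↑s), mul_one]
            rw [h1, Finset.sum_congr rfl fun s _ => h2 s]
            have h3 : ∑ s : ↥S, (-KN t s) * aS s = -∑ s : ↥S, KN t s * aS s := by
              rw [← Finset.sum_neg_distrib]
              exact Finset.sum_congr rfl fun s _ => (neg_mul _ _)
            rw [h3, show ∑ s : ↥S, KN t s * aS s = KN.mulVec aS t from by
              simp [Matrix.mulVec, dotProduct], hmva t]
            ring
          have hf2 : ∑ o : Option ↥S, f o ^ 2 = π ↑t + ∑ s : ↥S, (-KN t s) * π ↑s := by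
            rw [Fintype.sum_option]
            congr 1
            · simp only [hf, Option.elim]
              exact Real.sq_sqrt (le_of_lt (hπpos ↑t))
            · refine Finset.sum_congr rfl fun s _ => ?_
              simp only [hf, Option.elim]
              exact Real.sq_sqrt (mul_nonneg (neg_nonneg.mpr (hKNle t s)) (le_of_lt (hπpos ↑s)))
          have hg2 : ∑ o : Option ↥S, g o ^ 2
              = aT t * aT t / π ↑t + ∑ s : ↥S, (-KN t s) * (aS s * aS s / π ↑s) := by
            rw [Fintype.sum_option]
            congr 1
            · simp only [hg, Option.elim]
              rw [div_pow, Real.sq_sqrt (le_of_lt (hπpos ↑t))]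
              ring
            · refine Finset.sum_congr rfl fun s _ => ?_
              simp only [hg, Option.elim]
              rw [div_pow, mul_pow, Real.sq_sqrt (neg_nonneg.mpr (hKNle t s)),
                Real.sq_sqrt (le_of_lt (hπpos ↑s))]
              ring
          have hCS := Finset.sum_mul_sq_le_sq_mul_sq Finset.univ f g
          rw [hfg, hf2, hg2] at hCS
          have hdd : 0 < d t * π ↑t := mul_pos (hdpos t) (hπpos ↑t)
          have hEq : u t * w t / π ↑t = u t ^ 2 / (d t * π ↑t) := by
            rw [hww t]
            field_simp
          rw [hEq, div_le_iff₀ hdd, hdπ t]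
          calc u t ^ 2 ≤ (π ↑t + ∑ s : ↥S, (-KN t s) * π ↑s)
              * (aT t * aT t / π ↑t + ∑ s : ↥S, (-KN t s) * (aS s * aS s / π ↑s)) := hCS
            _ = _ := mul_comm _ _
        apply le_trans (Finset.sum_le_sum fun t _ => keyCS t)
        rw [Finset.sum_add_distrib]
        have hswap : ∑ t : ↥(Sᶜ), ∑ s : ↥S, (-KN t s) * (aS s * aS s / π ↑s)
            = ∑ s : ↥S, aS s * aS s / π ↑s := by
          rw [Finset.sum_comm]
          refine Finset.sum_congr rfl fun s _ => ?_
          have h4 : ∑ t : ↥(Sᶜ), -KN t s = 1 := by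
            rw [Finset.sum_neg_distrib, L4 s]
            norm_num
          calc ∑ t : ↥(Sᶜ), (-KN t s) * (aS s * aS s / π ↑s)
              = (∑ t : ↥(Sᶜ), -KN t s) * (aS s * aS s / π ↑s) := (Finset.sum_mul _ _ _).symm
            _ = aS s * aS s / π ↑s := by rw [h4, one_mul]
        rw [hswap]
        linarith [le_refl (∑ s : ↥S, aS s * aS s / π ↑s + ∑ t : ↥(Sᶜ), aT t * aT t / π ↑t)]
    · -- Type B
      set DT : Matrix ↥(Sᶜ) ↥(Sᶜ) ℝ := Matrix.diagonal (fun t : ↥(Sᶜ) => π ↑t) with hDT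
      set G : Matrix ↥(Sᶜ) ↥(Sᶜ) ℝ := M * DT with hG
      have hGe : ∀ t t', G t t' = M t t' * π ↑t' := by
        intro t t'
        rw [hG, hDT, Matrix.mul_diagonal]
      have QF : ∀ x : ↥(Sᶜ) → ℝ, ∑ t : ↥(Sᶜ), x t * G.mulVec x t
          = ∑ t : ↥(Sᶜ), π ↑t * x t ^ 2
            + ∑ s : ↥S, π ↑s * (∑ t : ↥(Sᶜ), KN t s * x t) ^ 2 := by
        intro x
        have hBv : ∀ t : ↥(Sᶜ), G.mulVec x t
            = π ↑t * x t + ∑ s : ↥S, KN t s * π ↑s * (∑ t' : ↥(Sᶜ), KN t' s * x t') := by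
          intro t
          calc G.mulVec x t = ∑ t' : ↥(Sᶜ), G t t' * x t' := by
                simp [Matrix.mulVec, dotProduct]
            _ = ∑ t' : ↥(Sᶜ), ((if t = t' then π ↑t' else 0) * x t'
                + ∑ s : ↥S, KN t s * (π ↑s * KN t' s) * x t') := by
                refine Finset.sum_congr rfl fun t' _ => ?_
                rw [hGe, L6 t t', add_mul, Finset.sum_mul]
            _ = ∑ t' : ↥(Sᶜ), (if t = t' then π ↑t' else 0) * x t'
                + ∑ t' : ↥(Sᶜ), ∑ s : ↥S, KN t s * (π ↑s * KN t' s) * x t' :=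
                Finset.sum_add_distrib
            _ = π ↑t * x t + ∑ s : ↥S, KN t s * π ↑s * (∑ t' : ↥(Sᶜ), KN t' s * x t') := by
                congr 1
                · simp [ite_mul]
                · rw [Finset.sum_comm]
                  refine Finset.sum_congr rfl fun s _ => ?_
                  rw [Finset.mul_sum]
                  exact Finset.sum_congr rfl fun t' _ => by ring
        calc ∑ t : ↥(Sᶜ), x t * G.mulVec x t
            = ∑ t : ↥(Sᶜ), (π ↑t * x t ^ 2
              + ∑ s : ↥S, x t * (KN t s * π ↑s * (∑ t' : ↥(Sᶜ), KN t' s * x t'))) := by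
              refine Finset.sum_congr rfl fun t _ => ?_
              rw [hBv t, mul_add, Finset.mul_sum]
              congr 1
              ring
          _ = ∑ t : ↥(Sᶜ), π ↑t * x t ^ 2
              + ∑ t : ↥(Sᶜ), ∑ s : ↥S, x t * (KN t s * π ↑s * (∑ t' : ↥(Sᶜ), KN t' s * x t')) :=
              Finset.sum_add_distrib
          _ = ∑ t : ↥(Sᶜ), π ↑t * x t ^ 2
              + ∑ s : ↥S, π ↑s * (∑ t : ↥(Sᶜ), KN t s * x t) ^ 2 := by
              congr 1
              rw [Finset.sum_comm]
              refine Finset.sum_congr rfl fun s _ => ?_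
              set C := ∑ t' : ↥(Sᶜ), KN t' s * x t' with hC
              calc ∑ t : ↥(Sᶜ), x t * (KN t s * π ↑s * C)
                  = ∑ t : ↥(Sᶜ), (KN t s * x t) * (π ↑s * C) :=
                    Finset.sum_congr rfl fun t _ => by ring
                _ = (∑ t : ↥(Sᶜ), KN t s * x t) * (π ↑s * C) := (Finset.sum_mul _ _ _).symm
                _ = π ↑s * C ^ 2 := by rw [← hC]; ring
      have hGdet : G.det ≠ 0 := by
        intro h
        obtain ⟨v, hv, hGv⟩ := Matrix.exists_mulVec_eq_zero_iff.mpr h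
        have h0 : ∑ t : ↥(Sᶜ), v t * G.mulVec v t = 0 := by
          rw [hGv]
          simp
        rw [QF v] at h0
        have hA1 : 0 ≤ ∑ t : ↥(Sᶜ), π ↑t * v t ^ 2 :=
          Finset.sum_nonneg fun t _ => mul_nonneg (le_of_lt (hπpos ↑t)) (sq_nonneg _)
        have hA2 : 0 ≤ ∑ s : ↥S, π ↑s * (∑ t : ↥(Sᶜ), KN t s * v t) ^ 2 :=
          Finset.sum_nonneg fun s _ => mul_nonneg (le_of_lt (hπpos ↑s)) (sq_nonneg _)
        have h1 : ∑ t : ↥(Sᶜ), π ↑t * v t ^ 2 = 0 := by linarith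
        apply hv
        funext t
        have h2 := (Finset.sum_eq_zero_iff_of_nonneg
          (fun (r : ↥(Sᶜ)) _ => mul_nonneg (le_of_lt (hπpos ↑r)) (sq_nonneg (v r)))).mp h1 t
          (Finset.mem_univ t)
        have h3 : v t ^ 2 = 0 := by
          rcases mul_eq_zero.mp h2 with h4 | h4
          · exact absurd h4 (hπne ↑t)
          · exact h4
        exact pow_eq_zero_iff two_ne_zero |>.mp h3
      have hGG : G * G⁻¹ = 1 := Matrix.mul_nonsing_inv G (Ne.isUnit hGdet)
      set y : ↥(Sᶜ) → ℝ := G⁻¹.mulVec u with hy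
      have hGy : G.mulVec y = u := by
        rw [hy, Matrix.mulVec_mulVec, hGG, Matrix.one_mulVec]
      have hwy : ∀ t : ↥(Sᶜ), w t = π ↑t * y t := by
        intro t
        have hginv : G⁻¹ = DT⁻¹ * M⁻¹ := by rw [hG, Matrix.mul_inv_rev]
        have hDTinv : DT⁻¹ = Matrix.diagonal (fun t : ↥(Sᶜ) => (π ↑t)⁻¹) := by
          rw [hDT]
          refine Matrix.inv_eq_right_inv ?_
          rw [Matrix.diagonal_mul_diagonal,
            show (fun t : ↥(Sᶜ) => π ↑t * (π ↑t)⁻¹) = fun _ : ↥(Sᶜ) => (1:ℝ) from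
              funext fun t => mul_inv_cancel₀ (hπne ↑t), Matrix.diagonal_one]
        have hyt : y t = (π ↑t)⁻¹ * w t := by
          rw [hy, hginv, ← Matrix.mulVec_mulVec, hDTinv, Matrix.mulVec_diagonal, hw, hB]
        rw [hyt, ← mul_assoc, mul_inv_cancel₀ (hπne ↑t), one_mul]
      have hQy : ∑ t : ↥(Sᶜ), u t * w t / π ↑t = ∑ t : ↥(Sᶜ), u t * y t := by
        refine Finset.sum_congr rfl fun t _ => ?_
        rw [hwy t, mul_comm (π ↑t) (y t), ← mul_assoc, mul_div_assoc,
          div_self (hπne ↑t), mul_one]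
      have hQF_y : ∑ t : ↥(Sᶜ), u t * y t
          = ∑ t : ↥(Sᶜ), π ↑t * y t ^ 2
            + ∑ s : ↥S, π ↑s * (∑ t : ↥(Sᶜ), KN t s * y t) ^ 2 := by
        rw [← QF y]
        refine Finset.sum_congr rfl fun t _ => ?_
        rw [hGy]
        ring
      rw [hQy]
      constructor
      · rw [hQF_y]
        have hA1 : 0 ≤ ∑ t : ↥(Sᶜ), π ↑t * y t ^ 2 :=
          Finset.sum_nonneg fun t _ => mul_nonneg (le_of_lt (hπpos ↑t)) (sq_nonneg _)
        have hA2 : 0 ≤ ∑ s : ↥S, π ↑s * (∑ t : ↥(Sᶜ), KN t s * y t) ^ 2 :=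
          Finset.sum_nonneg fun s _ => mul_nonneg (le_of_lt (hπpos ↑s)) (sq_nonneg _)
        linarith
      · set c : ↥S → ℝ := fun s => ∑ t : ↥(Sᶜ), KN t s * y t with hc
        have hE1 : ∑ s : ↥S, aS s * c s
            = ∑ t : ↥(Sᶜ), aT t * y t - ∑ t : ↥(Sᶜ), u t * y t := by
          calc ∑ s : ↥S, aS s * c s
              = ∑ s : ↥S, ∑ t : ↥(Sᶜ), (KN t s * aS s) * y t := by
                refine Finset.sum_congr rfl fun s _ => ?_
                rw [hc, Finset.mul_sum]
                exact Finset.sum_congr rfl fun t _ => by ring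
            _ = ∑ t : ↥(Sᶜ), ∑ s : ↥S, (KN t s * aS s) * y t := Finset.sum_comm
            _ = ∑ t : ↥(Sᶜ), (aT t - u t) * y t := by
                refine Finset.sum_congr rfl fun t _ => ?_
                rw [← Finset.sum_mul, show ∑ s : ↥S, KN t s * aS s = KN.mulVec aS t from by
                  simp [Matrix.mulVec, dotProduct], hmva t]
            _ = ∑ t : ↥(Sᶜ), aT t * y t - ∑ t : ↥(Sᶜ), u t * y t := by
                rw [← Finset.sum_sub_distrib]
                exact Finset.sum_congr rfl fun t _ => by ring
        have hE2 : ∑ t : ↥(Sᶜ), π ↑t * y t ^ 2 + ∑ s : ↥S, π ↑s * c s ^ 2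
            = ∑ t : ↥(Sᶜ), u t * y t := by
          rw [hQF_y]
        have hP : ∑ s : ↥S, (aS s + π ↑s * c s) ^ 2 / π ↑s
            = ∑ s : ↥S, aS s * aS s / π ↑s + 2 * (∑ s : ↥S, aS s * c s)
              + ∑ s : ↥S, π ↑s * c s ^ 2 := by
          calc ∑ s : ↥S, (aS s + π ↑s * c s) ^ 2 / π ↑s
              = ∑ s : ↥S, (aS s * aS s / π ↑s + (2 * (aS s * c s) + π ↑s * c s ^ 2)) := by
                refine Finset.sum_congr rfl fun s _ => ?_
                field_simp [hπne (↑s : Fin n)]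
                ring
            _ = ∑ s : ↥S, aS s * aS s / π ↑s
                + (∑ s : ↥S, 2 * (aS s * c s) + ∑ s : ↥S, π ↑s * c s ^ 2) := by
                rw [Finset.sum_add_distrib, Finset.sum_add_distrib]
            _ = _ := by rw [← Finset.mul_sum]; ring
        have hT : ∑ t : ↥(Sᶜ), (aT t - π ↑t * y t) ^ 2 / π ↑t
            = ∑ t : ↥(Sᶜ), aT t * aT t / π ↑t - 2 * (∑ t : ↥(Sᶜ), aT t * y t)
              + ∑ t : ↥(Sᶜ), π ↑t * y t ^ 2 := by
          calc ∑ t : ↥(Sᶜ), (aT t - π ↑t * y t) ^ 2 / π ↑t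
              = ∑ t : ↥(Sᶜ), (aT t * aT t / π ↑t + (-(2 * (aT t * y t)) + π ↑t * y t ^ 2)) := by
                refine Finset.sum_congr rfl fun t _ => ?_
                field_simp [hπne (↑t : Fin n)]
                ring
            _ = ∑ t : ↥(Sᶜ), aT t * aT t / π ↑t
                + (∑ t : ↥(Sᶜ), -(2 * (aT t * y t)) + ∑ t : ↥(Sᶜ), π ↑t * y t ^ 2) := by
                rw [Finset.sum_add_distrib, Finset.sum_add_distrib]
            _ = _ := by
                rw [Finset.sum_neg_distrib, ← Finset.mul_sum]
                ring
        have hPos : 0 ≤ ∑ s : ↥S, (aS s + π ↑s * c s) ^ 2 / π ↑s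
            + ∑ t : ↥(Sᶜ), (aT t - π ↑t * y t) ^ 2 / π ↑t := by
          have h1 : 0 ≤ ∑ s : ↥S, (aS s + π ↑s * c s) ^ 2 / π ↑s :=
            Finset.sum_nonneg fun s _ => div_nonneg (sq_nonneg _) (le_of_lt (hπpos ↑s))
          have h2 : 0 ≤ ∑ t : ↥(Sᶜ), (aT t - π ↑t * y t) ^ 2 / π ↑t :=
            Finset.sum_nonneg fun t _ => div_nonneg (sq_nonneg _) (le_of_lt (hπpos ↑t))
          linarith
        rw [hP, hT] at hPos
        linarith
  exact ⟨fun a => (main a).1, fun a => (main a).2⟩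
end

section
/- Let (λ, u) be an eigenpair of K with ‖u‖_π = 1 and let V be the Type B matrix (V_{TT} = M⁻¹). Then ‖(I_n − V)u‖_π ≤ |λ| / σ(K_{SS}), where σ(K_{SS}) is the smallest absolute value of an eigenvalue of K_{SS}. -/
open Matrix BigOperators

/-- The `π`-norm on `ℝⁿ`: `‖a‖_π = √(∑ i, a i² / π i)`. -/
noncomputable def pinorm {m : Type*} [Fintype m] (π : m → ℝ) (a : m → ℝ) : ℝ :=
  Real.sqrt (∑ i, a i ^ 2 / π i)

namespace RcmcAux

variable {m : Type*} [Fintype m]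

/-- weighted inner product -/
noncomputable def wip (p a b : m → ℝ) : ℝ := ∑ i, a i * b i / p i

lemma wip_comm (p a b : m → ℝ) : wip p a b = wip p b a := by
  unfold wip; congr 1; ext i; rw [mul_comm]

lemma wip_nonneg (p : m → ℝ) (hp : ∀ i, 0 < p i) (a : m → ℝ) : 0 ≤ wip p a a := by
  refine Finset.sum_nonneg fun i _ => div_nonneg (mul_self_nonneg _) (hp i).le

lemma wip_pos (p : m → ℝ) (hp : ∀ i, 0 < p i) {a : m → ℝ} (ha : a ≠ 0) : 0 < wip p a a := by
  obtain ⟨i, hi⟩ : ∃ i, a i ≠ 0 := by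
    by_contra h; push_neg at h; exact ha (funext h)
  refine Finset.sum_pos' (fun j _ => div_nonneg (mul_self_nonneg _) (hp j).le) ⟨i, Finset.mem_univ i, ?_⟩
  exact div_pos (mul_self_pos.mpr hi) (hp i)

lemma wip_add_right (p a b c : m → ℝ) : wip p a (b + c) = wip p a b + wip p a c := by
  unfold wip
  rw [← Finset.sum_add_distrib]
  congr 1; ext i
  simp only [Pi.add_apply]
  ring

lemma wip_cauchy (p : m → ℝ) (hp : ∀ i, 0 < p i) (a b : m → ℝ) :
    wip p a b ≤ Real.sqrt (wip p a a) * Real.sqrt (wip p b b) := by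
  have key : ∀ x y : m → ℝ, wip p x y = ∑ i, (x i / Real.sqrt (p i)) * (y i / Real.sqrt (p i)) := by
    intro x y
    unfold wip
    congr 1; ext i
    have hs : Real.sqrt (p i) * Real.sqrt (p i) = p i := Real.mul_self_sqrt (hp i).le
    field_simp
    rw [Real.sq_sqrt (hp i).le]
  by_cases hsign : wip p a b ≤ 0
  · exact hsign.trans (mul_nonneg (Real.sqrt_nonneg _) (Real.sqrt_nonneg _))
  · push_neg at hsign
    have h := Finset.sum_mul_sq_le_sq_mul_sq Finset.univ
      (fun i => a i / Real.sqrt (p i)) (fun i => b i / Real.sqrt (p i))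
    rw [← key] at h
    have haa : (∑ i, (a i / Real.sqrt (p i)) ^ 2) = wip p a a := by
      rw [key]; congr 1; ext i; ring
    have hbb : (∑ i, (b i / Real.sqrt (p i)) ^ 2) = wip p b b := by
      rw [key]; congr 1; ext i; ring
    rw [haa, hbb] at h
    have h0a : 0 ≤ wip p a a := wip_nonneg p hp a
    have h0b : 0 ≤ wip p b b := wip_nonneg p hp b
    calc wip p a b ≤ Real.sqrt (wip p a a * wip p b b) :=
          (Real.le_sqrt hsign.le (mul_nonneg h0a h0b)).mpr h
      _ = Real.sqrt (wip p a a) * Real.sqrt (wip p b b) := Real.sqrt_mul h0a _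

/-- sum-of-squares is preserved by a real orthogonal matrix -/
lemma ortho_sum_sq [DecidableEq m] (W : Matrix m m ℝ) (h : Wᵀ * W = 1) (x : m → ℝ) :
    ∑ i, (W.mulVec x i) ^ 2 = ∑ i, x i ^ 2 := by
  have h1 : ∑ i, (W.mulVec x i) ^ 2 = (W.mulVec x) ⬝ᵥ (W.mulVec x) := by
    unfold dotProduct; congr 1; ext i; ring
  have h2 : (W.mulVec x) ⬝ᵥ (W.mulVec x) = x ⬝ᵥ x := by
    rw [Matrix.dotProduct_mulVec, ← Matrix.mulVec_transpose, Matrix.mulVec_mulVec, h,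
      Matrix.one_mulVec]
  rw [h1, h2]
  unfold dotProduct; congr 1; ext i; ring


lemma herm_lower_bound [DecidableEq m] (A : Matrix m m ℝ) (hA : A.IsHermitian) (sg : ℝ)
    (hsg0 : 0 ≤ sg) (hsg : ∀ i, sg ≤ |hA.eigenvalues i|) (x : m → ℝ) :
    sg * Real.sqrt (∑ i, x i ^ 2) ≤ Real.sqrt (∑ i, (A.mulVec x i) ^ 2) := by
  set U : Matrix m m ℝ := (hA.eigenvectorUnitary : Matrix m m ℝ) with hU
  have hmem := (hA.eigenvectorUnitary).2
  have hUU : U * Uᵀ = 1 := by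
    have := (Matrix.mem_unitaryGroup_iff).mp hmem
    simpa [Matrix.star_eq_conjTranspose, Matrix.conjTranspose_eq_transpose_of_trivial] using this
  have hUU' : Uᵀ * U = 1 := by
    have := (Matrix.mem_unitaryGroup_iff').mp hmem
    simpa [Matrix.star_eq_conjTranspose, Matrix.conjTranspose_eq_transpose_of_trivial] using this
  have hspec : A = U * Matrix.diagonal hA.eigenvalues * Uᵀ := by
    have := hA.spectral_theorem
    rw [RCLike.ofReal_real_eq_id] at this
    simpa [Matrix.star_eq_conjTranspose, Matrix.conjTranspose_eq_transpose_of_trivial] using this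
  set c : m → ℝ := Uᵀ.mulVec x with hc
  have hcx : ∑ i, c i ^ 2 = ∑ i, x i ^ 2 := by
    apply ortho_sum_sq Uᵀ
    rw [Matrix.transpose_transpose, hUU]
  have hAx : A.mulVec x = U.mulVec ((Matrix.diagonal hA.eigenvalues).mulVec c) := by
    rw [hc, Matrix.mulVec_mulVec, Matrix.mulVec_mulVec]
    conv_lhs => rw [hspec]
  have hAx2 : ∑ i, (A.mulVec x i) ^ 2 = ∑ i, (hA.eigenvalues i * c i) ^ 2 := by
    rw [hAx, ortho_sum_sq U hUU' _]
    congr 1; ext i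
    rw [Matrix.mulVec_diagonal]
  have hterm : ∀ i, sg ^ 2 * c i ^ 2 ≤ (hA.eigenvalues i * c i) ^ 2 := by
    intro i
    have h1 : sg ^ 2 ≤ hA.eigenvalues i ^ 2 := by
      have := hsg i
      nlinarith [abs_nonneg (hA.eigenvalues i), sq_abs (hA.eigenvalues i)]
    calc sg ^ 2 * c i ^ 2 ≤ hA.eigenvalues i ^ 2 * c i ^ 2 :=
          mul_le_mul_of_nonneg_right h1 (sq_nonneg _)
      _ = (hA.eigenvalues i * c i) ^ 2 := by ring
  have hsum : sg ^ 2 * (∑ i, x i ^ 2) ≤ ∑ i, (A.mulVec x i) ^ 2 := by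
    rw [hAx2, ← hcx, Finset.mul_sum]
    exact Finset.sum_le_sum fun i _ => hterm i
  have := Real.sqrt_le_sqrt hsum
  calc sg * Real.sqrt (∑ i, x i ^ 2) = Real.sqrt (sg ^ 2 * ∑ i, x i ^ 2) := by
        rw [Real.sqrt_mul (sq_nonneg sg), Real.sqrt_sq hsg0]
    _ ≤ Real.sqrt (∑ i, (A.mulVec x i) ^ 2) := this


lemma herm_spectrum_real [DecidableEq m] (A : Matrix m m ℝ) (hA : A.IsHermitian) :
    spectrum ℝ A = Set.range hA.eigenvalues := by
  set U : Matrix m m ℝ := (hA.eigenvectorUnitary : Matrix m m ℝ) with hU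
  have hmem := (hA.eigenvectorUnitary).2
  have hUU : U * Uᵀ = 1 := by
    have := (Matrix.mem_unitaryGroup_iff).mp hmem
    simpa [Matrix.star_eq_conjTranspose, Matrix.conjTranspose_eq_transpose_of_trivial] using this
  have hUU' : Uᵀ * U = 1 := by
    have := (Matrix.mem_unitaryGroup_iff').mp hmem
    simpa [Matrix.star_eq_conjTranspose, Matrix.conjTranspose_eq_transpose_of_trivial] using this
  have hspec : A = U * Matrix.diagonal hA.eigenvalues * Uᵀ := by
    have := hA.spectral_theorem
    rw [RCLike.ofReal_real_eq_id] at this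
    simpa [Matrix.star_eq_conjTranspose, Matrix.conjTranspose_eq_transpose_of_trivial] using this
  set Uu : (Matrix m m ℝ)ˣ := ⟨U, Uᵀ, hUU, hUU'⟩ with hUu
  have h1 : spectrum ℝ A
      = spectrum ℝ (Matrix.diagonal hA.eigenvalues) := by
    conv_lhs => rw [hspec]
    have h2 : (U : Matrix m m ℝ) * Matrix.diagonal hA.eigenvalues * Uᵀ
        = (Uu : Matrix m m ℝ) * Matrix.diagonal hA.eigenvalues
          * ((Uu⁻¹ : (Matrix m m ℝ)ˣ) : Matrix m m ℝ) := rfl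
    rw [h2, spectrum.units_conjugate]
  rw [h1, spectrum_diagonal]

/-- splitting a sum over `Fin n` along a finset and its complement -/
lemma sum_split {n : ℕ} (S : Finset (Fin n)) (f : Fin n → ℝ) :
    ∑ j, f j = (∑ j : ↥S, f ↑j) + ∑ j : ↥(Sᶜ), f ↑j := by
  rw [Finset.sum_coe_sort, Finset.sum_coe_sort, Finset.sum_add_sum_compl]

lemma assemble_mulVec_of_mem {n : ℕ} (S : Finset (Fin n))
    (A : Matrix ↥S ↥S ℝ) (B : Matrix ↥S ↥(Sᶜ) ℝ)
    (C' : Matrix ↥(Sᶜ) ↥S ℝ) (D : Matrix ↥(Sᶜ) ↥(Sᶜ) ℝ) (u : Fin n → ℝ)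
    (i : Fin n) (hi : i ∈ S) :
    (rcmcAssemble S A B C' D).mulVec u i
      = A.mulVec (fun k : ↥S => u ↑k) ⟨i, hi⟩
        + B.mulVec (fun k : ↥(Sᶜ) => u ↑k) ⟨i, hi⟩ := by
  show ∑ j, rcmcAssemble S A B C' D i j * u j = _
  rw [sum_split S]
  congr 1
  · show _ = ∑ k : ↥S, A ⟨i, hi⟩ k * u ↑k
    apply Finset.sum_congr rfl
    intro k _
    have hk := k.2
    simp [rcmcAssemble, hi, hk]
  · show _ = ∑ k : ↥(Sᶜ), B ⟨i, hi⟩ k * u ↑k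
    apply Finset.sum_congr rfl
    intro k _
    have hk : ¬ (↑k ∈ S) := Finset.mem_compl.mp k.2
    simp [rcmcAssemble, hi, hk]

lemma assemble_mulVec_of_not_mem {n : ℕ} (S : Finset (Fin n))
    (A : Matrix ↥S ↥S ℝ) (B : Matrix ↥S ↥(Sᶜ) ℝ)
    (C' : Matrix ↥(Sᶜ) ↥S ℝ) (D : Matrix ↥(Sᶜ) ↥(Sᶜ) ℝ) (u : Fin n → ℝ)
    (i : Fin n) (hi : ¬ i ∈ S) :
    (rcmcAssemble S A B C' D).mulVec u i
      = C'.mulVec (fun k : ↥S => u ↑k) ⟨i, Finset.mem_compl.mpr hi⟩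
        + D.mulVec (fun k : ↥(Sᶜ) => u ↑k) ⟨i, Finset.mem_compl.mpr hi⟩ := by
  show ∑ j, rcmcAssemble S A B C' D i j * u j = _
  rw [sum_split S]
  congr 1
  · show _ = ∑ k : ↥S, C' ⟨i, _⟩ k * u ↑k
    apply Finset.sum_congr rfl
    intro k _
    have hk := k.2
    simp [rcmcAssemble, hi, hk]
  · show _ = ∑ k : ↥(Sᶜ), D ⟨i, _⟩ k * u ↑k
    apply Finset.sum_congr rfl
    intro k _
    have hk : ¬ (↑k ∈ S) := Finset.mem_compl.mp k.2
    simp [rcmcAssemble, hi, hk]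

end RcmcAux

open RcmcAux

/-- For an eigenpair `(λ, u)` of `K` with `‖u‖_π = 1` and the Type-B matrix
`V` (`V_TT = M⁻¹`), `‖(I − V)u‖_π ≤ |λ| / σ(K_SS)` where `σ(K_SS)` is the smallest
absolute value of an eigenvalue of `K_SS`. -/
theorem rcmc_stmt16 (n : ℕ) (K : Matrix (Fin n) (Fin n) ℝ) (π : Fin n → ℝ)
    (hoff : ∀ i j, i ≠ j → 0 ≤ K i j)
    (hcol : ∀ j, ∑ i, K i j = 0)
    (hπpos : ∀ i, 0 < π i) (hπsum : ∑ i, π i = 1)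
    (hdb : K * Matrix.diagonal π = Matrix.diagonal π * Kᵀ)
    (S : Finset (Fin n))
    (hinv : IsUnit (K.submatrix ((↑) : ↥S → Fin n) ((↑) : ↥S → Fin n)).det)
    (lam : ℝ) (u : Fin n → ℝ)
    (heig : K.mulVec u = lam • u) (hu : pinorm π u = 1) :
    let KSS := K.submatrix ((↑) : ↥S → Fin n) ((↑) : ↥S → Fin n)
    let KST := K.submatrix ((↑) : ↥S → Fin n) ((↑) : ↥(Sᶜ) → Fin n)
    let KTS := K.submatrix ((↑) : ↥(Sᶜ) → Fin n) ((↑) : ↥S → Fin n)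
    let M := (1 + KTS * KSS⁻¹ * KSS⁻¹ * KST : Matrix ↥(Sᶜ) ↥(Sᶜ) ℝ)
    let VTT := M⁻¹
    let V := rcmcAssemble S (KSS⁻¹ * KST * VTT * KTS * KSS⁻¹)
      (-(KSS⁻¹ * KST * VTT)) (-(VTT * KTS * KSS⁻¹)) VTT
    let σKSS := sInf {r : ℝ | ∃ μ ∈ spectrum ℝ KSS, r = |μ|}
    pinorm π ((1 - V).mulVec u) ≤ |lam| / σKSS := by
  intro KSS KST KTS M VTT V σKSS
  classical
  -- basic defs
  have hdbe : ∀ i j, K i j * π j = π i * K j i := by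
    intro i j
    have h := congrFun (congrFun hdb i) j
    rw [Matrix.mul_diagonal, Matrix.diagonal_mul] at h
    exact h
  set uS : ↥S → ℝ := fun i => u ↑i with huSdef
  set uT : ↥(Sᶜ) → ℝ := fun j => u ↑j with huTdef
  set pS : ↥S → ℝ := fun i => π ↑i with hpSdef
  set pT : ↥(Sᶜ) → ℝ := fun j => π ↑j with hpTdef
  have hpS : ∀ i, 0 < pS i := fun i => hπpos _
  have hpT : ∀ j, 0 < pT j := fun j => hπpos _
  set C : Matrix ↥S ↥(Sᶜ) ℝ := KSS⁻¹ * KST with hCdef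
  set Cs : Matrix ↥(Sᶜ) ↥S ℝ := KTS * KSS⁻¹ with hCsdef
  have hKi : KSS⁻¹ * KSS = 1 := Matrix.nonsing_inv_mul _ hinv
  have hKi' : KSS * KSS⁻¹ = 1 := Matrix.mul_nonsing_inv _ hinv
  -- detailed balance blocks, entrywise
  have hbS : ∀ (i j : ↥S), KSS i j * pS j = pS i * KSS j i := fun i j => hdbe ↑i ↑j
  have hbST : ∀ (i : ↥S) (j : ↥(Sᶜ)), KST i j * pT j = pS i * KTS j i := fun i j => hdbe ↑i ↑j
  -- the adjoint identity
  set DS : Matrix ↥S ↥S ℝ := Matrix.diagonal pS with hDSdef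
  set DT : Matrix ↥(Sᶜ) ↥(Sᶜ) ℝ := Matrix.diagonal pT with hDTdef
  have hMSS : KSS * DS = DS * KSSᵀ := by
    ext i j
    rw [hDSdef, Matrix.mul_diagonal, Matrix.diagonal_mul, Matrix.transpose_apply]
    exact hbS i j
  have hMTS : DT * KSTᵀ = KTS * DS := by
    ext j i
    rw [hDTdef, hDSdef, Matrix.mul_diagonal, Matrix.diagonal_mul, Matrix.transpose_apply]
    have := hbST i j
    linarith [hbST i j]
  have hKSStdet : IsUnit (KSSᵀ).det := by rwa [Matrix.det_transpose]
  have hDSKt : DS * (KSSᵀ)⁻¹ = KSS⁻¹ * DS := by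
    have h6 : KSS⁻¹ * (KSS * DS) * (KSSᵀ)⁻¹ = KSS⁻¹ * (DS * KSSᵀ) * (KSSᵀ)⁻¹ := by rw [hMSS]
    rw [← Matrix.mul_assoc, hKi, Matrix.one_mul] at h6
    rw [Matrix.mul_assoc KSS⁻¹ (DS * KSSᵀ), Matrix.mul_assoc DS,
      Matrix.mul_nonsing_inv _ hKSStdet, Matrix.mul_one] at h6
    exact h6
  have hX : DT * Cᵀ = Cs * DS := by
    rw [hCdef, hCsdef, Matrix.transpose_mul, Matrix.transpose_nonsing_inv,
        ← Matrix.mul_assoc, hMTS, Matrix.mul_assoc, hDSKt, ← Matrix.mul_assoc]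
  have hadj_e : ∀ (i : ↥S) (j : ↥(Sᶜ)), pT j * C i j = Cs j i * pS i := by
    intro i j
    have h := congrFun (congrFun hX j) i
    rw [hDTdef, hDSdef, Matrix.mul_diagonal, Matrix.diagonal_mul, Matrix.transpose_apply] at h
    exact h
  -- weighted adjointness
  have hadj : ∀ (x : ↥S → ℝ) (y : ↥(Sᶜ) → ℝ),
      wip pT (Cs.mulVec x) y = wip pS x (C.mulVec y) := by
    intro x y
    unfold RcmcAux.wip
    have L : ∀ j : ↥(Sᶜ), (Cs.mulVec x) j * y j / pT j = ∑ i, Cs j i * x i * y j / pT j := by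
      intro j
      show (∑ i, Cs j i * x i) * y j / pT j = _
      rw [Finset.sum_mul, Finset.sum_div]
    have R : ∀ i : ↥S, x i * (C.mulVec y) i / pS i = ∑ j, C i j * y j * x i / pS i := by
      intro i
      show x i * (∑ j, C i j * y j) / pS i = _
      rw [Finset.mul_sum, Finset.sum_div]
      congr 1; ext j; ring
    rw [Finset.sum_congr rfl (fun j _ => L j), Finset.sum_congr rfl (fun i _ => R i),
      Finset.sum_comm]
    apply Finset.sum_congr rfl
    intro i _
    apply Finset.sum_congr rfl
    intro j _
    have h := hadj_e i j
    have h1 : pT j ≠ 0 := (hpT j).ne'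
    have h2 : pS i ≠ 0 := (hpS i).ne'
    field_simp
    linear_combination (-(x i * y j)) * h
  -- M and N
  set Nm : Matrix ↥S ↥S ℝ := 1 + C * Cs with hNmdef
  have hMeq : M = 1 + Cs * C := by
    show 1 + KTS * KSS⁻¹ * KSS⁻¹ * KST = 1 + Cs * C
    rw [hCdef, hCsdef]
    simp only [Matrix.mul_assoc]
  have wip_zero : ∀ {m' : Type} [Fintype m'] (p v : m' → ℝ), wip p v 0 = 0 := by
    intro m' _ p v
    unfold RcmcAux.wip
    simp
  have hMdet : IsUnit M.det := by
    rcases eq_or_ne M.det 0 with h0 | h0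
    · exfalso
      obtain ⟨v, hv0, hv⟩ := (Matrix.exists_mulVec_eq_zero_iff).mpr h0
      have e1 : M.mulVec v = v + Cs.mulVec (C.mulVec v) := by
        rw [hMeq, Matrix.add_mulVec, Matrix.one_mulVec, Matrix.mulVec_mulVec]
      have e2 : wip pT v (M.mulVec v) = wip pT v v + wip pS (C.mulVec v) (C.mulVec v) := by
        rw [e1, wip_add_right, wip_comm pT v (Cs.mulVec (C.mulVec v)), hadj]
      rw [hv, wip_zero] at e2
      have h3 := wip_pos pT hpT hv0
      have h4 := wip_nonneg pS hpS (C.mulVec v)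
      linarith
    · exact isUnit_iff_ne_zero.mpr h0
  have hNdet : IsUnit Nm.det := by
    rcases eq_or_ne Nm.det 0 with h0 | h0
    · exfalso
      obtain ⟨v, hv0, hv⟩ := (Matrix.exists_mulVec_eq_zero_iff).mpr h0
      have e1 : Nm.mulVec v = v + C.mulVec (Cs.mulVec v) := by
        rw [hNmdef, Matrix.add_mulVec, Matrix.one_mulVec, Matrix.mulVec_mulVec]
      have e2 : wip pS v (Nm.mulVec v) = wip pS v v + wip pT (Cs.mulVec v) (Cs.mulVec v) := by
        rw [e1, wip_add_right, ← hadj]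
      rw [hv, wip_zero] at e2
      have h3 := wip_pos pS hpS hv0
      have h4 := wip_nonneg pT hpT (Cs.mulVec v)
      linarith
    · exact isUnit_iff_ne_zero.mpr h0
  have hNi : Nm⁻¹ * Nm = 1 := Matrix.nonsing_inv_mul _ hNdet
  have hNi' : Nm * Nm⁻¹ = 1 := Matrix.mul_nonsing_inv _ hNdet
  have hMi : M⁻¹ * M = 1 := Matrix.nonsing_inv_mul _ hMdet
  have hMi' : M * M⁻¹ = 1 := Matrix.mul_nonsing_inv _ hMdet
  have hNC : Nm * C = C * M := by
    rw [hNmdef, hMeq, Matrix.add_mul, Matrix.mul_add, Matrix.one_mul, Matrix.mul_one,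
      Matrix.mul_assoc]
  have hMCs0 : M * Cs = Cs * Nm := by
    rw [hNmdef, hMeq, Matrix.add_mul, Matrix.mul_add, Matrix.one_mul, Matrix.mul_one,
      Matrix.mul_assoc]
  have hCM : C * M⁻¹ = Nm⁻¹ * C := by
    have h1 : Nm⁻¹ * Nm * C * M⁻¹ = C * M⁻¹ := by rw [hNi, Matrix.one_mul]
    have h2 : Nm⁻¹ * Nm * C * M⁻¹ = Nm⁻¹ * C := by
      rw [Matrix.mul_assoc Nm⁻¹ Nm C, hNC, Matrix.mul_assoc Nm⁻¹ (C * M) M⁻¹,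
        Matrix.mul_assoc C M M⁻¹, hMi', Matrix.mul_one]
    exact h1.symm.trans h2
  have hMCs : M⁻¹ * Cs = Cs * Nm⁻¹ := by
    have h1 : M⁻¹ * M * Cs * Nm⁻¹ = Cs * Nm⁻¹ := by rw [hMi, Matrix.one_mul]
    have h2 : M⁻¹ * M * Cs * Nm⁻¹ = M⁻¹ * Cs := by
      rw [Matrix.mul_assoc M⁻¹ M Cs, hMCs0, Matrix.mul_assoc M⁻¹ (Cs * Nm) Nm⁻¹,
        Matrix.mul_assoc Cs Nm Nm⁻¹, hNi', Matrix.mul_one]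
    exact (h1.symm.trans h2).symm
  have hCCs : C * Cs = Nm - 1 := by rw [hNmdef]; abel
  have hCsC : Cs * C = M - 1 := by rw [hMeq]; abel
  have hCMCs : C * M⁻¹ * Cs = 1 - Nm⁻¹ := by
    rw [hCM, Matrix.mul_assoc, hCCs, Matrix.mul_sub, Matrix.mul_one, hNi]
  have hCsNC : Cs * Nm⁻¹ * C = 1 - M⁻¹ := by
    rw [← hMCs, Matrix.mul_assoc, hCsC, Matrix.mul_sub, Matrix.mul_one, hMi]
  -- eigen-equation, S rows
  have hrow : KSS.mulVec uS + KST.mulVec uT = lam • uS := by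
    funext i
    have h := congrFun heig ↑i
    have hL : K.mulVec u ↑i = KSS.mulVec uS i + KST.mulVec uT i := by
      show ∑ j, K ↑i j * u j = _
      rw [sum_split S]
      rfl
    rw [hL] at h
    exact h
  set q : ↥S → ℝ := KSS⁻¹.mulVec uS with hqdef
  have huq : uS + C.mulVec uT = lam • q := by
    have h := congrArg (fun w => KSS⁻¹.mulVec w) hrow
    simp only [Matrix.mulVec_add, Matrix.mulVec_mulVec, hKi, Matrix.one_mulVec,
      Matrix.mulVec_smul] at h
    rw [hCdef]
    exact h
  -- the vector (1 - V) u
  set w : Fin n → ℝ := (1 - V).mulVec u with hwdef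
  set r : ↥S → ℝ := Nm⁻¹.mulVec q with hrdef
  have hVTTdef : VTT = M⁻¹ := rfl
  have hB1 : KSS⁻¹ * KST * VTT * KTS * KSS⁻¹ = C * VTT * Cs := by
    rw [hCdef, hCsdef]; simp only [Matrix.mul_assoc]
  have hB2 : -(KSS⁻¹ * KST * VTT) = -(C * VTT) := by rw [hCdef]
  have hB3 : -(VTT * KTS * KSS⁻¹) = -(VTT * Cs) := by
    rw [hCsdef]; simp only [Matrix.mul_assoc]
  have hV2 : V = rcmcAssemble S (C * VTT * Cs) (-(C * VTT)) (-(VTT * Cs)) VTT := by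
    show rcmcAssemble S (KSS⁻¹ * KST * VTT * KTS * KSS⁻¹) (-(KSS⁻¹ * KST * VTT))
      (-(VTT * KTS * KSS⁻¹)) VTT = _
    rw [hB1, hB2, hB3]
  have hwS : ∀ i : ↥S, w ↑i = lam * r i := by
    intro i
    have h1 : w ↑i = uS i - ((C * VTT * Cs).mulVec uS i + (-(C * VTT)).mulVec uT i) := by
      rw [hwdef, Matrix.sub_mulVec, Matrix.one_mulVec, Pi.sub_apply, hV2,
        assemble_mulVec_of_mem S _ _ _ _ u ↑i i.2]
    have h2 : (C * VTT * Cs).mulVec uS = uS - Nm⁻¹.mulVec uS := by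
      rw [hVTTdef, hCMCs, Matrix.sub_mulVec, Matrix.one_mulVec]
    have h3 : (-(C * VTT)).mulVec uT = -((Nm⁻¹ * C).mulVec uT) := by
      rw [Matrix.neg_mulVec, hVTTdef, hCM]
    rw [h1, h2, h3]
    have h4 : Nm⁻¹.mulVec uS i + (Nm⁻¹ * C).mulVec uT i = lam * r i := by
      have h5 : Nm⁻¹.mulVec uS + (Nm⁻¹ * C).mulVec uT = lam • r := by
        rw [hrdef, ← Matrix.mulVec_mulVec, ← Matrix.mulVec_add, huq, Matrix.mulVec_smul, hqdef]
      have := congrFun h5 i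
      exact this
    simp only [Pi.sub_apply, Pi.neg_apply]
    linarith [h4]
  have hwT : ∀ j : ↥(Sᶜ), w ↑j = lam * Cs.mulVec r j := by
    intro j
    have hj : ¬ (↑j ∈ S) := Finset.mem_compl.mp j.2
    have h1 : w ↑j = uT j - ((-(VTT * Cs)).mulVec uS j + VTT.mulVec uT j) := by
      rw [hwdef, Matrix.sub_mulVec, Matrix.one_mulVec, Pi.sub_apply, hV2,
        assemble_mulVec_of_not_mem S _ _ _ _ u ↑j hj]
    have h2 : (-(VTT * Cs)).mulVec uS = -((Cs * Nm⁻¹).mulVec uS) := by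
      rw [Matrix.neg_mulVec, hVTTdef, hMCs]
    have h3 : VTT.mulVec uT = uT - (Cs * Nm⁻¹ * C).mulVec uT := by
      rw [hVTTdef, hCsNC]
      funext k
      simp only [Matrix.sub_mulVec, Matrix.one_mulVec, Pi.sub_apply]
      ring
    have h4 : (Cs * Nm⁻¹).mulVec uS + (Cs * Nm⁻¹ * C).mulVec uT = lam • Cs.mulVec r := by
      have e1 : (Cs * Nm⁻¹ * C).mulVec uT = (Cs * Nm⁻¹).mulVec (C.mulVec uT) := by
        rw [Matrix.mulVec_mulVec]
      have e2 : (Cs * Nm⁻¹).mulVec uS + (Cs * Nm⁻¹).mulVec (C.mulVec uT)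
          = (Cs * Nm⁻¹).mulVec (uS + C.mulVec uT) := by rw [Matrix.mulVec_add]
      rw [e1, e2, huq, Matrix.mulVec_smul]
      congr 1
      rw [hrdef, Matrix.mulVec_mulVec q Cs Nm⁻¹]
    have h5 := congrFun h4 j
    rw [h1, h2, h3]
    simp only [Pi.add_apply, Pi.neg_apply, Pi.sub_apply, Pi.smul_apply, smul_eq_mul] at h5 ⊢
    linarith [h5]
  -- norm computation
  unfold pinorm at hu ⊢
  have hsum1 : ∑ i, w i ^ 2 / π i
      = lam ^ 2 * (wip pS r r + wip pT (Cs.mulVec r) (Cs.mulVec r)) := by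
    rw [sum_split S (fun i => w i ^ 2 / π i)]
    unfold RcmcAux.wip
    rw [mul_add, Finset.mul_sum, Finset.mul_sum]
    congr 1
    · apply Finset.sum_congr rfl
      intro i _
      rw [hwS i]
      have h1 : pS i = π ↑i := rfl
      rw [← h1]
      ring
    · apply Finset.sum_congr rfl
      intro j _
      rw [hwT j]
      have h1 : pT j = π ↑j := rfl
      rw [← h1]
      ring
  have hNq : Nm.mulVec r = q := by
    rw [hrdef, Matrix.mulVec_mulVec q Nm Nm⁻¹, hNi', Matrix.one_mulVec]
  have hrq : wip pS r q = wip pS r r + wip pT (Cs.mulVec r) (Cs.mulVec r) := by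
    rw [hadj r (Cs.mulVec r)]
    have h1 : C.mulVec (Cs.mulVec r) = (C * Cs).mulVec r := Matrix.mulVec_mulVec r C Cs
    rw [h1]
    have h2 : q = r + (C * Cs).mulVec r := by
      rw [← hNq, hNmdef, Matrix.add_mulVec, Matrix.one_mulVec]
    rw [h2, wip_add_right]
  have hq0 : 0 ≤ wip pS q q := wip_nonneg _ hpS _
  have hrr0 : 0 ≤ wip pS r r := wip_nonneg _ hpS _
  have hcsr0 : 0 ≤ wip pT (Cs.mulVec r) (Cs.mulVec r) := wip_nonneg _ hpT _
  have ha0 : 0 ≤ wip pS r q := by rw [hrq]; linarith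
  have h1le : wip pS r r ≤ wip pS r q := by rw [hrq]; linarith
  have hrqq : wip pS r q ≤ wip pS q q := by
    have hc := wip_cauchy pS hpS r q
    have hsq : wip pS r q ^ 2 ≤ wip pS r r * wip pS q q := by
      have h3 : wip pS r q ^ 2 ≤ (Real.sqrt (wip pS r r) * Real.sqrt (wip pS q q)) ^ 2 :=
        pow_le_pow_left₀ ha0 hc 2
      rwa [mul_pow, Real.sq_sqrt hrr0, Real.sq_sqrt hq0] at h3
    rcases eq_or_lt_of_le ha0 with he | hlt
    · rw [← he]; exact hq0
    · have h4 : wip pS r q * wip pS r q ≤ wip pS r q * wip pS q q := by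
        calc wip pS r q * wip pS r q = wip pS r q ^ 2 := (sq _).symm
          _ ≤ wip pS r r * wip pS q q := hsq
          _ ≤ wip pS r q * wip pS q q := mul_le_mul_of_nonneg_right h1le hq0
      exact le_of_mul_le_mul_left h4 hlt
  have hsumle : ∑ i, w i ^ 2 / π i ≤ lam ^ 2 * wip pS q q := by
    rw [hsum1, ← hrq]
    exact mul_le_mul_of_nonneg_left hrqq (sq_nonneg lam)
  have hpin : Real.sqrt (∑ i, w i ^ 2 / π i) ≤ |lam| * Real.sqrt (wip pS q q) := by
    calc Real.sqrt (∑ i, w i ^ 2 / π i) ≤ Real.sqrt (lam ^ 2 * wip pS q q) :=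
          Real.sqrt_le_sqrt hsumle
      _ = |lam| * Real.sqrt (wip pS q q) := by
          rw [Real.sqrt_mul (sq_nonneg lam), Real.sqrt_sq_eq_abs]
  have hσ0 : 0 ≤ σKSS := Real.sInf_nonneg (by rintro x ⟨μ, hμ, rfl⟩; exact abs_nonneg μ)
  by_cases hS : Nonempty ↥S
  · -- spectral part
    set d : ↥S → ℝ := fun i => Real.sqrt (pS i) with hddef
    have hd0 : ∀ i, 0 < d i := fun i => Real.sqrt_pos.mpr (hpS i)
    have hdsq : ∀ i, d i * d i = pS i := fun i => Real.mul_self_sqrt (hpS i).le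
    set E : Matrix ↥S ↥S ℝ := Matrix.diagonal d with hEdef
    set Einv : Matrix ↥S ↥S ℝ := Matrix.diagonal (fun i => (d i)⁻¹) with hEinvdef
    have hEE : Einv * E = 1 := by
      rw [hEinvdef, hEdef, Matrix.diagonal_mul_diagonal,
        show (fun i => (d i)⁻¹ * d i) = fun _ => (1 : ℝ) from
          funext fun i => inv_mul_cancel₀ (hd0 i).ne', Matrix.diagonal_one]
    have hE'E : E * Einv = 1 := by
      rw [hEinvdef, hEdef, Matrix.diagonal_mul_diagonal,
        show (fun i => d i * (d i)⁻¹) = fun _ => (1 : ℝ) from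
          funext fun i => mul_inv_cancel₀ (hd0 i).ne', Matrix.diagonal_one]
    set A : Matrix ↥S ↥S ℝ := Einv * KSS * E with hAdef
    have hentry : ∀ i j, A i j = (d i)⁻¹ * KSS i j * d j := by
      intro i j
      rw [hAdef, hEdef, hEinvdef, Matrix.mul_diagonal, Matrix.diagonal_mul]
    have hAH : A.IsHermitian := by
      rw [Matrix.IsHermitian]
      ext i j
      rw [Matrix.conjTranspose_apply, hentry j i, hentry i j, star_trivial]
      have hb := hbS i j
      have key : KSS j i * (d i * d i) = KSS i j * (d j * d j) := by
        rw [hdsq i, hdsq j]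
        linarith [hb]
      have hnei := (hd0 i).ne'
      have hnej := (hd0 j).ne'
      field_simp
      linear_combination key
    have hKSSunit : IsUnit KSS := (Matrix.isUnit_iff_isUnit_det KSS).mpr hinv
    have hAspec : spectrum ℝ A = spectrum ℝ KSS := by
      have h2 : A = ((⟨E, Einv, hE'E, hEE⟩ : (Matrix ↥S ↥S ℝ)ˣ)⁻¹ : (Matrix ↥S ↥S ℝ)ˣ)
          * KSS * ((⟨E, Einv, hE'E, hEE⟩ : (Matrix ↥S ↥S ℝ)ˣ) : Matrix ↥S ↥S ℝ) := rfl
      rw [h2, spectrum.units_conjugate']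
    have hrange : spectrum ℝ KSS = Set.range hAH.eigenvalues := by
      rw [← hAspec, herm_spectrum_real A hAH]
    have hset : {x : ℝ | ∃ μ ∈ spectrum ℝ KSS, x = |μ|}
        = Set.range (fun i => |hAH.eigenvalues i|) := by
      rw [hrange]
      ext x
      constructor
      · rintro ⟨μ, ⟨i, rfl⟩, rfl⟩; exact ⟨i, rfl⟩
      · rintro ⟨i, rfl⟩; exact ⟨hAH.eigenvalues i, ⟨i, rfl⟩, rfl⟩
    have hbdd : BddBelow {x : ℝ | ∃ μ ∈ spectrum ℝ KSS, x = |μ|} :=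
      ⟨0, by rintro x ⟨μ, _, rfl⟩; exact abs_nonneg μ⟩
    have hσle : ∀ i, σKSS ≤ |hAH.eigenvalues i| := by
      intro i
      exact csInf_le hbdd ⟨hAH.eigenvalues i, hrange ▸ Set.mem_range_self i, rfl⟩
    have hσpos : 0 < σKSS := by
      have hne : {x : ℝ | ∃ μ ∈ spectrum ℝ KSS, x = |μ|}.Nonempty := by
        rw [hset]; exact Set.range_nonempty _
      have hfin : {x : ℝ | ∃ μ ∈ spectrum ℝ KSS, x = |μ|}.Finite := by
        rw [hset]; exact Set.finite_range _
      obtain ⟨μ, hμ, hEq⟩ := hne.csInf_mem hfin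
      have hμ0 : μ ≠ 0 := by
        intro h0
        rw [h0] at hμ
        exact (spectrum.zero_mem_iff ℝ).mp hμ hKSSunit
      have : σKSS = |μ| := hEq
      rw [this]
      exact abs_pos.mpr hμ0
    have hkey := herm_lower_bound A hAH σKSS hσ0 hσle (fun i => q i * (d i)⁻¹)
    have hAx : A.mulVec (fun i => q i * (d i)⁻¹) = fun i => uS i * (d i)⁻¹ := by
      have hx : (fun i => q i * (d i)⁻¹) = Einv.mulVec q := by
        funext i
        rw [hEinvdef, Matrix.mulVec_diagonal]
        ring
      rw [hx, Matrix.mulVec_mulVec q A Einv]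
      have hAE : A * Einv = Einv * KSS := by
        rw [hAdef, Matrix.mul_assoc (Einv * KSS) E Einv, hE'E, Matrix.mul_one]
      rw [hAE, ← Matrix.mulVec_mulVec q Einv KSS]
      have hKq : KSS.mulVec q = uS := by
        rw [hqdef, Matrix.mulVec_mulVec uS KSS KSS⁻¹, hKi', Matrix.one_mulVec]
      rw [hKq]
      funext i
      rw [hEinvdef, Matrix.mulVec_diagonal]
      ring
    rw [hAx] at hkey
    have hsq1 : ∑ i, ((fun i => q i * (d i)⁻¹) i) ^ 2 = wip pS q q := by
      unfold RcmcAux.wip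
      apply Finset.sum_congr rfl
      intro i _
      show (q i * (d i)⁻¹) ^ 2 = q i * q i / pS i
      rw [← hdsq i, div_eq_mul_inv, mul_inv]
      ring
    have hsq2 : ∑ i, ((fun i => uS i * (d i)⁻¹) i) ^ 2 = wip pS uS uS := by
      unfold RcmcAux.wip
      apply Finset.sum_congr rfl
      intro i _
      show (uS i * (d i)⁻¹) ^ 2 = uS i * uS i / pS i
      rw [← hdsq i, div_eq_mul_inv, mul_inv]
      ring
    rw [hsq1, hsq2] at hkey
    have huSle : Real.sqrt (wip pS uS uS) ≤ 1 := by
      have h1 : wip pS uS uS ≤ ∑ i, u i ^ 2 / π i := by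
        rw [sum_split S (fun i => u i ^ 2 / π i)]
        unfold RcmcAux.wip
        have e : ∀ i : ↥S, uS i * uS i / pS i = u ↑i ^ 2 / π ↑i := by
          intro i
          rw [pow_two]
        rw [Finset.sum_congr rfl (fun i _ => e i)]
        have h2 : 0 ≤ ∑ j : ↥(Sᶜ), u ↑j ^ 2 / π ↑j :=
          Finset.sum_nonneg fun j _ => div_nonneg (sq_nonneg _) (hπpos _).le
        linarith
      calc Real.sqrt (wip pS uS uS) ≤ Real.sqrt (∑ i, u i ^ 2 / π i) := Real.sqrt_le_sqrt h1
        _ = 1 := hu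
    have hqle : Real.sqrt (wip pS q q) ≤ 1 / σKSS := by
      rw [le_div_iff₀ hσpos]
      calc Real.sqrt (wip pS q q) * σKSS = σKSS * Real.sqrt (wip pS q q) := mul_comm _ _
        _ ≤ Real.sqrt (wip pS uS uS) := hkey
        _ ≤ 1 := huSle
    calc Real.sqrt (∑ i, w i ^ 2 / π i) ≤ |lam| * Real.sqrt (wip pS q q) := hpin
      _ ≤ |lam| * (1 / σKSS) := mul_le_mul_of_nonneg_left hqle (abs_nonneg lam)
      _ = |lam| / σKSS := by rw [mul_one_div]
  · -- S is empty
    haveI : IsEmpty ↥S := not_nonempty_iff.mp hS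
    have hq00 : wip pS q q = 0 := by
      unfold RcmcAux.wip
      simp
    rw [hq00, Real.sqrt_zero, mul_zero] at hpin
    exact hpin.trans (div_nonneg (abs_nonneg lam) hσ0)
end
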